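/- arXiv:1510.03219 — 7 statements merged into one kernel-verified Lean document; each statement's English description precedes it below -/
import Mathlib

section
/- Let c > 0, ξ ∈ ℝ, and a ∈ (0, c). If the normalization condition ∫₀^a (ξ + (c² − a²)/2 − s²)·√((a² − s²)/(c² − s²)) ds = 0 holds, then 2ξ + c² < 3a². (Equivalently, with γ = −a², the quantity f(ξ) = 3γ + 2ξ + c² is strictly negative whenever the normalization holds with a ∈ (0, c).) -/
/-- Let `c > 0`, `ξ ∈ ℝ`, `a ∈ (0, c)`. If the normalization condition
`∫₀^a (ξ + (c² − a²)/2 − s²)·√((a² − s²)/(c² − s²)) ds = 0` holds, then `2ξ + c² < 3a²`. -/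
theorem normalization_implies_f_negative (c ξ a : ℝ) (hc : 0 < c) (ha : 0 < a) (hac : a < c)
    (hnorm : ∫ s in (0:ℝ)..a,
        (ξ + (c ^ 2 - a ^ 2) / 2 - s ^ 2) * Real.sqrt ((a ^ 2 - s ^ 2) / (c ^ 2 - s ^ 2)) = 0) :
    2 * ξ + c ^ 2 < 3 * a ^ 2 := by
  by_contra h
  push_neg at h
  have hpos : 0 < ∫ s in (0:ℝ)..a,
      (ξ + (c ^ 2 - a ^ 2) / 2 - s ^ 2) * Real.sqrt ((a ^ 2 - s ^ 2) / (c ^ 2 - s ^ 2)) := by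
    apply intervalIntegral.intervalIntegral_pos_of_pos_on
    · apply ContinuousOn.intervalIntegrable
      apply ContinuousOn.mul (by fun_prop)
      apply Real.continuous_sqrt.comp_continuousOn
      apply ContinuousOn.div (by fun_prop) (by fun_prop)
      intro s hs
      rw [Set.uIcc_of_le ha.le] at hs
      have h1 : s ^ 2 ≤ a ^ 2 := by nlinarith [hs.1, hs.2]
      have : 0 < c ^ 2 - s ^ 2 := by nlinarith
      linarith
    · intro s hs
      have h1 : s ^ 2 < a ^ 2 := by nlinarith [hs.1, hs.2]
      have h2 : s ^ 2 < c ^ 2 := by nlinarith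
      have h3 : 0 < (a ^ 2 - s ^ 2) / (c ^ 2 - s ^ 2) := div_pos (by linarith) (by linarith)
      have h4 := Real.sqrt_pos.mpr h3
      have h5 : (0:ℝ) < ξ + (c ^ 2 - a ^ 2) / 2 - s ^ 2 := by nlinarith
      positivity
    · exact ha
  linarith
end

section
/- Let c > 0 and let a : (−c²/2, c²/3) → (0, c) be differentiable with ∫₀^{a(ξ)} (ξ + (c² − a(ξ)²)/2 − s²)·√((a(ξ)² − s²)/(c² − s²)) ds = 0 for every ξ in the interval. Define h(ξ) = −(∫₀^{a(ξ)} s²·((c² − s²)(a(ξ)² − s²))^{−1/2} ds)/(∫₀^{a(ξ)} ((c² − s²)(a(ξ)² − s²))^{−1/2} ds). Then for every ξ ∈ (−c²/2, c²/3), (d/dξ)(a(ξ)²) · (3a(ξ)² − 2ξ − c²) = 4·(h(ξ) + a(ξ)²). (In the paper's notation, with γ = −a², this is γ′(ξ) = 4(h(ξ) − γ(ξ))/(3γ(ξ) + 2ξ + c²).) -/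
open intervalIntegral MeasureTheory Set Real Filter Metric

namespace BandEdge
variable {c g : ℝ}

lemma vpos (hg0 : 0 < g) (hg1 : g < c^2) {t : ℝ} (h0 : -1 ≤ t) (h1 : t ≤ 1) :
    0 < c^2 - g*t^2 := by
  have ht2 : t^2 ≤ 1 := by nlinarith
  nlinarith [mul_le_mul_of_nonneg_left ht2 hg0.le]

lemma meas_phi (k : ℕ) :
    AEStronglyMeasurable (fun t : ℝ => t^k * (Real.sqrt (1-t^2) * Real.sqrt (c^2-g*t^2))⁻¹)
      (volume.restrict (Set.uIoc (0:ℝ) 1)) := by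
  apply Measurable.aestronglyMeasurable
  exact (measurable_id.pow_const k).mul
    (((continuous_const.sub (continuous_pow 2)).sqrt.mul
      ((continuous_const.sub (continuous_const.mul (continuous_pow 2))).sqrt)).measurable.inv)

lemma int_bound : IntervalIntegrable (fun t : ℝ => (Real.sqrt (c^2-g))⁻¹ * ((1-t) ^ (-(1/2) : ℝ)))
    volume 0 1 := by
  apply IntervalIntegrable.const_mul
  have h : IntervalIntegrable (fun x : ℝ => x ^ (-(1/2):ℝ)) volume 1 0 :=
    intervalIntegrable_rpow' (by norm_num)
  simpa using h.comp_sub_left 1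

lemma int_phi (hg0 : 0 < g) (hg1 : g < c^2) (k : ℕ) :
    IntervalIntegrable (fun t : ℝ => t^k * (Real.sqrt (1-t^2) * Real.sqrt (c^2-g*t^2))⁻¹)
      volume 0 1 := by
  apply int_bound.mono_fun (meas_phi k)
  rw [Filter.EventuallyLE, ae_restrict_iff' measurableSet_uIoc]
  filter_upwards [] with t ht
  rw [uIoc_of_le (by norm_num : (0:ℝ) ≤ 1)] at ht
  obtain ⟨ht0, ht1⟩ := ht
  have hcg : 0 < c^2 - g := by linarith
  have hrpow : (1-t) ^ (-(1/2) : ℝ) = (Real.sqrt (1-t))⁻¹ := by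
    rw [Real.rpow_neg (by linarith : (0:ℝ) ≤ 1-t), Real.sqrt_eq_rpow]
  rcases eq_or_lt_of_le ht1 with h1 | h1
  · subst h1
    simp only [norm_eq_abs]
    have : Real.sqrt (1-(1:ℝ)^2) = 0 := by norm_num
    rw [this, zero_mul, inv_zero, mul_zero, abs_zero]
    positivity
  · have hu : Real.sqrt (1-t) ≤ Real.sqrt (1-t^2) := Real.sqrt_le_sqrt (by nlinarith)
    have hupos : 0 < Real.sqrt (1-t) := Real.sqrt_pos.2 (by linarith)
    have hv : Real.sqrt (c^2-g) ≤ Real.sqrt (c^2-g*t^2) :=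
      Real.sqrt_le_sqrt (by nlinarith [mul_le_mul_of_nonneg_left (by nlinarith : t^2 ≤ 1) hg0.le])
    have hvpos : 0 < Real.sqrt (c^2-g) := Real.sqrt_pos.2 hcg
    have hle : (Real.sqrt (1-t^2) * Real.sqrt (c^2-g*t^2))⁻¹
        ≤ (Real.sqrt (1-t) * Real.sqrt (c^2-g))⁻¹ := by
      apply inv_anti₀ (mul_pos hupos hvpos)
      exact mul_le_mul hu hv hvpos.le (Real.sqrt_nonneg _)
    have htk : t^k ≤ 1 := pow_le_one₀ ht0.le ht1
    simp only [norm_eq_abs]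
    rw [abs_of_nonneg (by positivity), abs_of_nonneg (mul_nonneg (inv_nonneg.2 (Real.sqrt_nonneg _)) (Real.rpow_nonneg (by linarith) _)), hrpow]
    calc t^k * (Real.sqrt (1-t^2) * Real.sqrt (c^2-g*t^2))⁻¹
        ≤ 1 * (Real.sqrt (1-t) * Real.sqrt (c^2-g))⁻¹ := by
          apply mul_le_mul htk hle (inv_nonneg.2 (mul_nonneg (Real.sqrt_nonneg _) (Real.sqrt_nonneg _))) (by norm_num)
      _ = (Real.sqrt (c^2-g))⁻¹ * (Real.sqrt (1-t))⁻¹ := by rw [one_mul, mul_inv, mul_comm]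





variable {c g : ℝ}

-- continuity of w = (sqrt v)⁻¹ on [0,1]
lemma contOn_w (hg0 : 0 < g) (hg1 : g < c^2) :
    ContinuousOn (fun t : ℝ => (Real.sqrt (c^2-g*t^2))⁻¹) (uIcc (0:ℝ) 1) := by
  apply ContinuousOn.inv₀
  · exact ((continuous_const.sub (continuous_const.mul (continuous_pow 2))).sqrt).continuousOn
  · intro t ht
    rw [uIcc_of_le (by norm_num : (0:ℝ) ≤ 1)] at ht
    have ht2 : t^2 ≤ 1 := by nlinarith [ht.1, ht.2]
    have : 0 < c^2 - g*t^2 := by nlinarith [mul_le_mul_of_nonneg_left ht2 hg0.le]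
    exact ne_of_gt (Real.sqrt_pos.2 this)

lemma int_psi (hg0 : 0 < g) (hg1 : g < c^2) (k : ℕ) :
    IntervalIntegrable (fun t : ℝ => t^k * Real.sqrt (1-t^2) * (Real.sqrt (c^2-g*t^2))⁻¹)
      volume 0 1 := by
  apply ContinuousOn.intervalIntegrable
  exact (((continuous_pow k).mul (continuous_const.sub (continuous_pow 2)).sqrt).continuousOn).mul
    (contOn_w hg0 hg1)

lemma int_chi (hg0 : 0 < g) (hg1 : g < c^2) (k : ℕ) :
    IntervalIntegrable
      (fun t : ℝ => Real.sqrt (1-t^2) * (t^k / (2 * ((c^2-g*t^2) * Real.sqrt (c^2-g*t^2)))))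
      volume 0 1 := by
  apply ContinuousOn.intervalIntegrable
  apply ContinuousOn.mul ((continuous_const.sub (continuous_pow 2)).sqrt).continuousOn
  apply ContinuousOn.div (continuous_pow k).continuousOn
  · exact (continuous_const.mul ((continuous_const.sub (continuous_const.mul
      (continuous_pow 2))).mul (continuous_const.sub (continuous_const.mul
      (continuous_pow 2))).sqrt)).continuousOn
  · intro t ht
    rw [uIcc_of_le (by norm_num : (0:ℝ) ≤ 1)] at ht
    have ht2 : t^2 ≤ 1 := by nlinarith [ht.1, ht.2]
    have hv : 0 < c^2 - g*t^2 := by nlinarith [mul_le_mul_of_nonneg_left ht2 hg0.le]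
    have := Real.sqrt_pos.2 hv
    positivity





variable {c g : ℝ}

-- positivity of N₀
lemma NI0_pos (hg0 : 0 < g) (hg1 : g < c^2)
    (hint : IntervalIntegrable (fun t : ℝ => (Real.sqrt (1-t^2) * Real.sqrt (c^2-g*t^2))⁻¹)
      volume 0 1) :
    0 < ∫ t in (0:ℝ)..1, (Real.sqrt (1-t^2) * Real.sqrt (c^2-g*t^2))⁻¹ := by
  apply intervalIntegral.intervalIntegral_pos_of_pos_on hint _ (by norm_num)
  intro t ht
  have ht2 : t^2 < 1 := by nlinarith [ht.1, ht.2]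
  have hv : 0 < c^2 - g*t^2 := by nlinarith [mul_le_mul_of_nonneg_left ht2.le hg0.le]
  have h1 := Real.sqrt_pos.2 (by linarith : (0:ℝ) < 1 - t^2)
  have h2 := Real.sqrt_pos.2 hv
  positivity

-- pointwise identity ψ_k = φ_k − φ_{k+2} on [0,1]
lemma psi_eq_phi_sub (hg0 : 0 < g) (hg1 : g < c^2) (k : ℕ) {t : ℝ} (ht : t ∈ uIcc (0:ℝ) 1) :
    t^k * Real.sqrt (1-t^2) * (Real.sqrt (c^2-g*t^2))⁻¹
      = t^k * (Real.sqrt (1-t^2) * Real.sqrt (c^2-g*t^2))⁻¹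
        - t^(k+2) * (Real.sqrt (1-t^2) * Real.sqrt (c^2-g*t^2))⁻¹ := by
  rw [uIcc_of_le (by norm_num : (0:ℝ) ≤ 1)] at ht
  have ht2 : t^2 ≤ 1 := by nlinarith [ht.1, ht.2]
  have hv : 0 < c^2 - g*t^2 := by nlinarith [mul_le_mul_of_nonneg_left ht2 hg0.le]
  have hsv : 0 < Real.sqrt (c^2-g*t^2) := Real.sqrt_pos.2 hv
  rcases eq_or_lt_of_le ht2 with h1 | h1
  · have hu : Real.sqrt (1-t^2) = 0 := by rw [← h1]; simp
    rw [hu]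
    simp [pow_succ]
  · have hu : 0 < Real.sqrt (1-t^2) := Real.sqrt_pos.2 (by linarith)
    have husq : Real.sqrt (1-t^2) * Real.sqrt (1-t^2) = 1 - t^2 :=
      Real.mul_self_sqrt (by linarith)
    field_simp
    rw [Real.sq_sqrt (by linarith)]; ring





variable {c g : ℝ}

lemma hasDeriv_e (hg0 : 0 < g) (hg1 : g < c^2) (k : ℕ) {t : ℝ} (ht : t ∈ Ioo (0:ℝ) 1) :
    HasDerivAt (fun x : ℝ => x^(k+1) * Real.sqrt (1-x^2) * (Real.sqrt (c^2-g*x^2))⁻¹)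
      ((k+1 : ℝ) * (t^k * Real.sqrt (1-t^2) * (Real.sqrt (c^2-g*t^2))⁻¹)
        - t^(k+2) * (Real.sqrt (1-t^2) * Real.sqrt (c^2-g*t^2))⁻¹
        + 2*g*(Real.sqrt (1-t^2) * (t^(k+2)/(2*((c^2-g*t^2)*Real.sqrt (c^2-g*t^2)))))) t := by
  obtain ⟨ht0, ht1⟩ := ht
  have hu : 0 < 1 - t^2 := by nlinarith
  have hv : 0 < c^2 - g*t^2 := by nlinarith [mul_le_mul_of_nonneg_left (by nlinarith : t^2 ≤ 1) hg0.le]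
  have hsu : 0 < Real.sqrt (1-t^2) := Real.sqrt_pos.2 hu
  have hsv : 0 < Real.sqrt (c^2-g*t^2) := Real.sqrt_pos.2 hv
  have husq : Real.sqrt (1-t^2) * Real.sqrt (1-t^2) = 1-t^2 := Real.mul_self_sqrt hu.le
  have hvsq : Real.sqrt (c^2-g*t^2) * Real.sqrt (c^2-g*t^2) = c^2-g*t^2 := Real.mul_self_sqrt hv.le
  have h1 : HasDerivAt (fun x : ℝ => 1 - x^2) (-(2*t)) t := by
    simpa using (hasDerivAt_pow 2 t).const_sub 1
  have h2 : HasDerivAt (fun x : ℝ => c^2 - g*x^2) (-(g*(2*t))) t := by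
    simpa using ((hasDerivAt_pow 2 t).const_mul g).const_sub (c^2)
  have hdsu : HasDerivAt (fun x : ℝ => Real.sqrt (1-x^2)) (1/(2*Real.sqrt (1-t^2)) * (-(2*t))) t :=
    (Real.hasDerivAt_sqrt hu.ne').comp t h1
  have hdsv : HasDerivAt (fun x : ℝ => Real.sqrt (c^2-g*x^2))
      (1/(2*Real.sqrt (c^2-g*t^2)) * (-(g*(2*t)))) t :=
    (Real.hasDerivAt_sqrt hv.ne').comp t h2
  have hdw : HasDerivAt (fun x : ℝ => (Real.sqrt (c^2-g*x^2))⁻¹)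
      (-(1/(2*Real.sqrt (c^2-g*t^2)) * (-(g*(2*t)))) / (Real.sqrt (c^2-g*t^2))^2) t :=
    hdsv.inv hsv.ne'
  have hdp : HasDerivAt (fun x : ℝ => x^(k+1)) ((k+1 : ℝ)*t^k) t := by
    simpa using hasDerivAt_pow (k+1) t
  have := (hdp.fun_mul hdsu).fun_mul hdw
  refine HasDerivAt.congr_deriv this ?_
  field_simp
  rw [show Real.sqrt (c^2-t^2*g)^3 = (c^2-t^2*g)*Real.sqrt (c^2-t^2*g) by
      rw [pow_succ, Real.sq_sqrt (by linarith)],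
    Real.sq_sqrt (by linarith : (0:ℝ) ≤ c^2-t^2*g), Real.sq_sqrt hu.le]
  have hv' : c^2 - t^2*g ≠ 0 := (by linarith : (0:ℝ) < c^2-t^2*g).ne'
  have hsv' : Real.sqrt (c^2 - t^2*g) ≠ 0 := (Real.sqrt_pos.2 (by linarith : (0:ℝ) < c^2-t^2*g)).ne'
  field_simp
  ring_nf


lemma ftc_id (hg0 : 0 < g) (hg1 : g < c^2) (k : ℕ)
    (hint1 : IntervalIntegrable (fun t : ℝ => t^k * Real.sqrt (1-t^2) * (Real.sqrt (c^2-g*t^2))⁻¹) volume 0 1)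
    (hint2 : IntervalIntegrable (fun t : ℝ => t^(k+2) * (Real.sqrt (1-t^2) * Real.sqrt (c^2-g*t^2))⁻¹) volume 0 1)
    (hint3 : IntervalIntegrable (fun t : ℝ => Real.sqrt (1-t^2) * (t^(k+2)/(2*((c^2-g*t^2)*Real.sqrt (c^2-g*t^2))))) volume 0 1) :
    (k+1 : ℝ) * (∫ t in (0:ℝ)..1, t^k * Real.sqrt (1-t^2) * (Real.sqrt (c^2-g*t^2))⁻¹)
      - (∫ t in (0:ℝ)..1, t^(k+2) * (Real.sqrt (1-t^2) * Real.sqrt (c^2-g*t^2))⁻¹)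
      + 2*g*(∫ t in (0:ℝ)..1, Real.sqrt (1-t^2) * (t^(k+2)/(2*((c^2-g*t^2)*Real.sqrt (c^2-g*t^2))))) = 0 := by
  have hcg : 0 < c^2 - g := by linarith
  set f : ℝ → ℝ := fun x => x^(k+1) * Real.sqrt (1-x^2) * (Real.sqrt (c^2-g*x^2))⁻¹ with hf
  have hintD : IntervalIntegrable (fun t : ℝ =>
      (k+1 : ℝ) * (t^k * Real.sqrt (1-t^2) * (Real.sqrt (c^2-g*t^2))⁻¹)
        - t^(k+2) * (Real.sqrt (1-t^2) * Real.sqrt (c^2-g*t^2))⁻¹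
        + 2*g*(Real.sqrt (1-t^2) * (t^(k+2)/(2*((c^2-g*t^2)*Real.sqrt (c^2-g*t^2)))))) volume 0 1 := by
    apply IntervalIntegrable.add _ (hint3.const_mul (2*g))
    exact (hint1.const_mul _).sub hint2
  have hca : ∀ x : ℝ, x^2 ≤ 1 → ContinuousAt f x := by
    intro x hx
    have hvx : 0 < c^2 - g*x^2 := by nlinarith [mul_le_mul_of_nonneg_left hx hg0.le]
    exact ((continuous_pow _).continuousAt.mul
        ((continuous_const.sub (continuous_pow 2)).sqrt.continuousAt)).mul
      (ContinuousAt.inv₀ (((continuous_const.sub (continuous_const.mul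
        (continuous_pow 2))).sqrt).continuousAt) (ne_of_gt (Real.sqrt_pos.2 hvx)))
  have htend1 : Tendsto f (nhdsWithin 1 (Iio 1)) (nhds 0) := by
    have h : Tendsto f (nhdsWithin 1 (Iio 1)) (nhds (f 1)) :=
      (hca 1 (by norm_num)).continuousWithinAt
    have : f 1 = 0 := by simp [hf]
    rwa [this] at h
  have htend0 : Tendsto f (nhdsWithin 0 (Ioi 0)) (nhds 0) := by
    have h : Tendsto f (nhdsWithin 0 (Ioi 0)) (nhds (f 0)) :=
      (hca 0 (by norm_num)).continuousWithinAt
    have : f 0 = 0 := by simp [hf]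
    rwa [this] at h
  have key := integral_eq_sub_of_hasDerivAt_of_tendsto (by norm_num : (0:ℝ) < 1)
    (fun t ht => hasDeriv_e hg0 hg1 k ht) hintD htend0 htend1
  rw [intervalIntegral.integral_add ((hint1.const_mul _).sub hint2) (hint3.const_mul _),
    intervalIntegral.integral_sub (hint1.const_mul _) hint2,
    intervalIntegral.integral_const_mul, intervalIntegral.integral_const_mul] at key
  linarith [key]






lemma hasDeriv_PI {c g : ℝ} (hg0 : 0 < g) (hg1 : g < c^2) (k : ℕ)
    (hint : IntervalIntegrable (fun t : ℝ => t^k * Real.sqrt (1-t^2) * (Real.sqrt (c^2-g*t^2))⁻¹) volume 0 1) :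
    HasDerivAt (fun x : ℝ => ∫ t in (0:ℝ)..1, t^k * Real.sqrt (1-t^2) * (Real.sqrt (c^2-x*t^2))⁻¹)
      (∫ t in (0:ℝ)..1, Real.sqrt (1-t^2) * (t^(k+2)/(2*((c^2-g*t^2)*Real.sqrt (c^2-g*t^2))))) g := by
  have hcg : 0 < c^2 - g := by linarith
  set ε := (c^2-g)/2 with hε
  have hεpos : 0 < ε := by positivity
  set δ := (c^2-g)/2 with hδ
  have hδpos : 0 < δ := by positivity
  have hy : ∀ x ∈ ball g ε, ∀ t ∈ Set.uIoc (0:ℝ) 1, δ ≤ c^2 - x*t^2 := by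
    intro x hx t ht
    rw [Real.ball_eq_Ioo] at hx
    rw [uIoc_of_le (by norm_num : (0:ℝ) ≤ 1)] at ht
    have ht2 : t^2 ≤ 1 := by nlinarith [ht.1, ht.2]
    have ht2' : 0 ≤ t^2 := sq_nonneg t
    rcases le_or_gt x 0 with h | h
    · nlinarith [mul_nonpos_of_nonpos_of_nonneg h ht2']
    · nlinarith [mul_le_mul_of_nonneg_left ht2 h.le, hx.2]
  have main := intervalIntegral.hasDerivAt_integral_of_dominated_loc_of_deriv_le
    (F := fun x : ℝ => fun t : ℝ => t^k * Real.sqrt (1-t^2) * (Real.sqrt (c^2-x*t^2))⁻¹)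
    (F' := fun x : ℝ => fun t : ℝ => Real.sqrt (1-t^2) * (t^(k+2)/(2*((c^2-x*t^2)*Real.sqrt (c^2-x*t^2)))))
    (x₀ := g) (a := 0) (b := 1) (bound := fun _ => (2*(δ*Real.sqrt δ))⁻¹) (ball_mem_nhds g hεpos)
    ?_ hint ?_ ?_ ?_ ?_
  · exact main.2
  · -- measurability of F x
    filter_upwards [] with x
    apply Measurable.aestronglyMeasurable
    exact (((measurable_id.pow_const k).mul
        (continuous_const.sub (continuous_pow 2)).sqrt.measurable).mul
      ((continuous_const.sub (continuous_const.mul (continuous_pow 2))).sqrt.measurable.inv))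
  · -- measurability of F' g
    apply Measurable.aestronglyMeasurable
    apply ((continuous_const.sub (continuous_pow 2)).sqrt.measurable).mul
    exact (measurable_id.pow_const (k+2)).div
      ((continuous_const.mul ((continuous_const.sub (continuous_const.mul (continuous_pow 2))).mul
        (continuous_const.sub (continuous_const.mul (continuous_pow 2))).sqrt)).measurable)
  · -- bound
    filter_upwards [] with t ht x hx
    have hyt := hy x hx t ht
    have hy0 : 0 < c^2 - x*t^2 := lt_of_lt_of_le hδpos hyt
    rw [uIoc_of_le (by norm_num : (0:ℝ) ≤ 1)] at ht
    have ht2 : t^2 ≤ 1 := by nlinarith [ht.1, ht.2]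
    have hu1 : Real.sqrt (1-t^2) ≤ 1 := Real.sqrt_le_one.2 (by nlinarith)
    have hu0 : 0 ≤ Real.sqrt (1-t^2) := Real.sqrt_nonneg _
    have htk : t^(k+2) ≤ 1 := pow_le_one₀ ht.1.le ht.2
    have htk0 : 0 ≤ t^(k+2) := pow_nonneg ht.1.le _
    have hmono : δ*Real.sqrt δ ≤ (c^2-x*t^2)*Real.sqrt (c^2-x*t^2) :=
      mul_le_mul hyt (Real.sqrt_le_sqrt hyt) (Real.sqrt_nonneg _) hy0.le
    have hpos : 0 < δ*Real.sqrt δ := by positivity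
    rw [norm_eq_abs, abs_of_nonneg (by positivity)]
    calc Real.sqrt (1-t^2) * (t^(k+2)/(2*((c^2-x*t^2)*Real.sqrt (c^2-x*t^2))))
        ≤ 1 * (1/(2*(δ*Real.sqrt δ))) := by
          apply mul_le_mul hu1 _ (by positivity) (by norm_num)
          exact div_le_div₀ (by norm_num) htk (by positivity)
            (by nlinarith [hmono])
      _ = (2*(δ*Real.sqrt δ))⁻¹ := by rw [one_mul, one_div]
  · exact intervalIntegrable_const
  · -- differentiability
    filter_upwards [] with t ht x hx
    have hyt := hy x hx t ht
    have hy0 : 0 < c^2 - x*t^2 := lt_of_lt_of_le hδpos hyt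
    have hsy : 0 < Real.sqrt (c^2-x*t^2) := Real.sqrt_pos.2 hy0
    have hysq : Real.sqrt (c^2-x*t^2) * Real.sqrt (c^2-x*t^2) = c^2-x*t^2 :=
      Real.mul_self_sqrt hy0.le
    have h2 : HasDerivAt (fun y : ℝ => c^2 - y*t^2) (-(t^2)) x := by
      simpa using ((hasDerivAt_id x).mul_const (t^2)).const_sub (c^2)
    have hdsv : HasDerivAt (fun y : ℝ => Real.sqrt (c^2-y*t^2))
        (1/(2*Real.sqrt (c^2-x*t^2)) * (-(t^2))) x :=
      (Real.hasDerivAt_sqrt hy0.ne').comp x h2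
    have hdw : HasDerivAt (fun y : ℝ => (Real.sqrt (c^2-y*t^2))⁻¹)
        (-(1/(2*Real.sqrt (c^2-x*t^2)) * (-(t^2))) / (Real.sqrt (c^2-x*t^2))^2) x :=
      hdsv.inv hsy.ne'
    have := hdw.const_mul (t^k * Real.sqrt (1-t^2))
    refine HasDerivAt.congr_deriv this ?_
    field_simp
    rw [show Real.sqrt (c^2-t^2*x)^3 = (c^2-t^2*x)*Real.sqrt (c^2-t^2*x) by
      rw [pow_succ, Real.sq_sqrt (by linarith)]]
    ring_nf






lemma psi_int0 {c g : ℝ} (hg0 : 0 < g) (hg1 : g < c^2) :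
    IntervalIntegrable (fun t : ℝ => Real.sqrt (1-t^2) * (Real.sqrt (c^2-g*t^2))⁻¹) volume 0 1 := by
  apply ContinuousOn.intervalIntegrable
  apply ContinuousOn.mul ((continuous_const.sub (continuous_pow 2)).sqrt).continuousOn
  apply ContinuousOn.inv₀
  · exact ((continuous_const.sub (continuous_const.mul (continuous_pow 2))).sqrt).continuousOn
  · intro t ht
    rw [uIcc_of_le (by norm_num : (0:ℝ) ≤ 1)] at ht
    have ht2 : t^2 ≤ 1 := by nlinarith [ht.1, ht.2]
    have : 0 < c^2 - g*t^2 := by nlinarith [mul_le_mul_of_nonneg_left ht2 hg0.le]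
    exact ne_of_gt (Real.sqrt_pos.2 this)

lemma psi_int2 {c g : ℝ} (hg0 : 0 < g) (hg1 : g < c^2) :
    IntervalIntegrable (fun t : ℝ => t^2 * Real.sqrt (1-t^2) * (Real.sqrt (c^2-g*t^2))⁻¹)
      volume 0 1 := by
  apply ContinuousOn.intervalIntegrable
  apply ContinuousOn.mul
  · exact ((continuous_pow 2).mul (continuous_const.sub (continuous_pow 2)).sqrt).continuousOn
  apply ContinuousOn.inv₀
  · exact ((continuous_const.sub (continuous_const.mul (continuous_pow 2))).sqrt).continuousOn
  · intro t ht
    rw [uIcc_of_le (by norm_num : (0:ℝ) ≤ 1)] at ht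
    have ht2 : t^2 ≤ 1 := by nlinarith [ht.1, ht.2]
    have : 0 < c^2 - g*t^2 := by nlinarith [mul_le_mul_of_nonneg_left ht2 hg0.le]
    exact ne_of_gt (Real.sqrt_pos.2 this)

/-- substitution: positivity facts on `[0,1]` -/
lemma vpos' {c A t : ℝ} (hA0 : 0 < A) (hAc : A < c) (h0 : 0 ≤ t) (h1 : t ≤ 1) :
    0 < c^2 - A^2*t^2 := by
  have h2 : A^2 < c^2 := by nlinarith
  have h3 : A^2*t^2 ≤ A^2*1 := mul_le_mul_of_nonneg_left (by nlinarith) (sq_nonneg A)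
  linarith

lemma norm_to_phi {c A ξ : ℝ} (hA0 : 0 < A) (hAc : A < c)
    (hnorm : ∫ s in (0:ℝ)..A,
        (ξ + (c^2 - A^2)/2 - s^2) * Real.sqrt ((A^2-s^2)/(c^2-s^2)) = 0) :
    (ξ + (c^2 - A^2)/2) * (∫ t in (0:ℝ)..1, Real.sqrt (1-t^2) * (Real.sqrt (c^2-A^2*t^2))⁻¹)
      - A^2 * (∫ t in (0:ℝ)..1, t^2 * Real.sqrt (1-t^2) * (Real.sqrt (c^2-A^2*t^2))⁻¹) = 0 := by
  have hc : 0 < c := lt_trans hA0 hAc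
  have hg0 : 0 < A^2 := by positivity
  have hg1 : A^2 < c^2 := by nlinarith
  set B := ξ + (c^2 - A^2)/2 with hB
  have h1 := intervalIntegral.integral_comp_mul_right
    (fun s => (B - s^2) * Real.sqrt ((A^2-s^2)/(c^2-s^2))) (a := 0) (b := 1) hA0.ne'
  simp only [zero_mul, one_mul, smul_eq_mul] at h1
  rw [hnorm, mul_zero] at h1
  have h2 : (∫ t in (0:ℝ)..1, (B - (t*A)^2) * Real.sqrt ((A^2-(t*A)^2)/(c^2-(t*A)^2)))
      = ∫ t in (0:ℝ)..1,
        (A*B) * (Real.sqrt (1-t^2) * (Real.sqrt (c^2-A^2*t^2))⁻¹)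
          - (A*A^2) * (t^2 * Real.sqrt (1-t^2) * (Real.sqrt (c^2-A^2*t^2))⁻¹) := by
    apply intervalIntegral.integral_congr
    intro t ht
    rw [uIcc_of_le (by norm_num : (0:ℝ) ≤ 1)] at ht
    have hv : 0 < c^2 - A^2*t^2 := vpos' hA0 hAc ht.1 ht.2
    dsimp only
    have e1 : A^2-(t*A)^2 = A^2*(1-t^2) := by ring
    have e2 : c^2-(t*A)^2 = c^2-A^2*t^2 := by ring
    rw [e1, e2, Real.sqrt_div (mul_nonneg (sq_nonneg A) (by nlinarith [ht.1, ht.2] : (0:ℝ) ≤ 1-t^2)),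
      Real.sqrt_mul (sq_nonneg A), Real.sqrt_sq hA0.le]
    field_simp
  rw [h2] at h1
  rw [intervalIntegral.integral_sub (((psi_int0 hg0 hg1).const_mul _))
      (((psi_int2 hg0 hg1).const_mul _)),
    intervalIntegral.integral_const_mul, intervalIntegral.integral_const_mul] at h1
  have := h1
  nlinarith [this, sq_nonneg A]






lemma sqrt_prod_eq {c A t : ℝ} (hA0 : 0 < A) (hAc : A < c) (h0 : 0 ≤ t) (h1 : t ≤ 1) :
    (Real.sqrt ((c^2-(t*A)^2)*(A^2-(t*A)^2)))⁻¹
      = A⁻¹ * (Real.sqrt (1-t^2) * Real.sqrt (c^2-A^2*t^2))⁻¹ := by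
  have e1 : A^2-(t*A)^2 = A^2*(1-t^2) := by ring
  have e2 : c^2-(t*A)^2 = c^2-A^2*t^2 := by ring
  have hv : 0 < c^2 - A^2*t^2 := by
    have h2 : A^2 < c^2 := by nlinarith
    have h3 : A^2*t^2 ≤ A^2*1 := mul_le_mul_of_nonneg_left (by nlinarith) (sq_nonneg A)
    linarith
  rw [e1, e2, Real.sqrt_mul hv.le, Real.sqrt_mul (sq_nonneg A), Real.sqrt_sq hA0.le]
  rw [mul_inv, mul_inv, mul_inv]
  ring

lemma K0_eq {c A : ℝ} (hA0 : 0 < A) (hAc : A < c) :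
    (∫ s in (0:ℝ)..A, (Real.sqrt ((c^2-s^2)*(A^2-s^2)))⁻¹)
      = ∫ t in (0:ℝ)..1, (Real.sqrt (1-t^2) * Real.sqrt (c^2-A^2*t^2))⁻¹ := by
  have h1 := intervalIntegral.integral_comp_mul_right
    (fun s => (Real.sqrt ((c^2-s^2)*(A^2-s^2)))⁻¹) (a := 0) (b := 1) hA0.ne'
  simp only [zero_mul, one_mul, smul_eq_mul] at h1
  have h2 : (∫ t in (0:ℝ)..1, (Real.sqrt ((c^2-(t*A)^2)*(A^2-(t*A)^2)))⁻¹)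
      = ∫ t in (0:ℝ)..1, A⁻¹ * (Real.sqrt (1-t^2) * Real.sqrt (c^2-A^2*t^2))⁻¹ := by
    apply intervalIntegral.integral_congr
    intro t ht
    rw [uIcc_of_le (by norm_num : (0:ℝ) ≤ 1)] at ht
    exact sqrt_prod_eq hA0 hAc ht.1 ht.2
  rw [h2, intervalIntegral.integral_const_mul] at h1
  exact (mul_left_cancel₀ (inv_ne_zero hA0.ne') h1).symm

lemma K2_eq {c A : ℝ} (hA0 : 0 < A) (hAc : A < c) :
    (∫ s in (0:ℝ)..A, s^2 * (Real.sqrt ((c^2-s^2)*(A^2-s^2)))⁻¹)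
      = A^2 * ∫ t in (0:ℝ)..1, t^2 * (Real.sqrt (1-t^2) * Real.sqrt (c^2-A^2*t^2))⁻¹ := by
  have h1 := intervalIntegral.integral_comp_mul_right
    (fun s => s^2 * (Real.sqrt ((c^2-s^2)*(A^2-s^2)))⁻¹) (a := 0) (b := 1) hA0.ne'
  simp only [zero_mul, one_mul, smul_eq_mul] at h1
  have h2 : (∫ t in (0:ℝ)..1, (t*A)^2 * (Real.sqrt ((c^2-(t*A)^2)*(A^2-(t*A)^2)))⁻¹)
      = ∫ t in (0:ℝ)..1, A * (t^2 * (Real.sqrt (1-t^2) * Real.sqrt (c^2-A^2*t^2))⁻¹) := by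
    apply intervalIntegral.integral_congr
    intro t ht
    rw [uIcc_of_le (by norm_num : (0:ℝ) ≤ 1)] at ht
    dsimp only
    rw [sqrt_prod_eq hA0 hAc ht.1 ht.2]
    have hAA : A^2*A⁻¹ = A := by rw [sq, mul_assoc, mul_inv_cancel₀ hA0.ne', mul_one]
    linear_combination (t^2 * ((Real.sqrt (1-t^2) * Real.sqrt (c^2-A^2*t^2))⁻¹)) * hAA
  rw [h2, intervalIntegral.integral_const_mul] at h1
  have hAA : A * A⁻¹ = 1 := mul_inv_cancel₀ hA0.ne'
  linear_combination (-A)*h1 - (∫ s in (0:ℝ)..A, s^2 * (Real.sqrt ((c^2-s^2)*(A^2-s^2)))⁻¹) * hAA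



end BandEdge
/-- derivative formula `(a²)′·(3a² − 2ξ − c²) = 4(h + a²)` for the band edge
`a(ξ)` determined by the normalization condition (formula (2.9) of Lemma 2.1). -/
theorem band_edge_derivative_formula (c : ℝ) (hc : 0 < c) (a : ℝ → ℝ)
    (hrange : ∀ ξ ∈ Set.Ioo (-c ^ 2 / 2) (c ^ 2 / 3), 0 < a ξ ∧ a ξ < c)
    (hdiff : ∀ ξ ∈ Set.Ioo (-c ^ 2 / 2) (c ^ 2 / 3), DifferentiableAt ℝ a ξ)
    (hnorm : ∀ ξ ∈ Set.Ioo (-c ^ 2 / 2) (c ^ 2 / 3),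
      ∫ s in (0:ℝ)..(a ξ),
        (ξ + (c ^ 2 - (a ξ) ^ 2) / 2 - s ^ 2) *
          Real.sqrt (((a ξ) ^ 2 - s ^ 2) / (c ^ 2 - s ^ 2)) = 0) :
    ∀ ξ ∈ Set.Ioo (-c ^ 2 / 2) (c ^ 2 / 3),
      deriv (fun t => (a t) ^ 2) ξ * (3 * (a ξ) ^ 2 - 2 * ξ - c ^ 2) =
        4 * (-(∫ s in (0:ℝ)..(a ξ), s ^ 2 * (Real.sqrt ((c ^ 2 - s ^ 2) * ((a ξ) ^ 2 - s ^ 2)))⁻¹) /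
              (∫ s in (0:ℝ)..(a ξ), (Real.sqrt ((c ^ 2 - s ^ 2) * ((a ξ) ^ 2 - s ^ 2)))⁻¹)
            + (a ξ) ^ 2) := by
  intro ξ hξ
  obtain ⟨hA0, hAc⟩ := hrange ξ hξ
  have hg0 : 0 < (a ξ)^2 := by positivity
  have hg1 : (a ξ)^2 < c^2 := by nlinarith
  set d := deriv (fun t => a t ^ 2) ξ with hd
  have hgd : HasDerivAt (fun t => a t ^ 2) d ξ := ((hdiff ξ hξ).pow 2).hasDerivAt
  -- composed derivatives of the parametric integrals
  have hcomp0 : HasDerivAt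
      (fun y : ℝ => ∫ t in (0:ℝ)..1, Real.sqrt (1-t^2) * (Real.sqrt (c^2 - a y^2*t^2))⁻¹)
      ((∫ t in (0:ℝ)..1, Real.sqrt (1-t^2) *
        (t^2/(2*((c^2-(a ξ)^2*t^2)*Real.sqrt (c^2-(a ξ)^2*t^2))))) * d) ξ := by
    have h := (BandEdge.hasDeriv_PI hg0 hg1 0 (BandEdge.int_psi hg0 hg1 0)).comp ξ hgd
    simpa [Function.comp_def, pow_zero, one_mul] using h
  have hcomp2 : HasDerivAt
      (fun y : ℝ => ∫ t in (0:ℝ)..1, t^2 * Real.sqrt (1-t^2) * (Real.sqrt (c^2 - a y^2*t^2))⁻¹)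
      ((∫ t in (0:ℝ)..1, Real.sqrt (1-t^2) *
        (t^4/(2*((c^2-(a ξ)^2*t^2)*Real.sqrt (c^2-(a ξ)^2*t^2))))) * d) ξ := by
    have h := (BandEdge.hasDeriv_PI hg0 hg1 2 (BandEdge.int_psi hg0 hg1 2)).comp ξ hgd
    simpa [Function.comp_def] using h
  have hB : HasDerivAt (fun y : ℝ => y + (c^2 - a y^2)/2) (1 + -d/2) ξ := by
    simpa using (hasDerivAt_id' ξ).fun_add ((hgd.const_sub (c^2)).div_const 2)
  have hΦ := (hB.mul hcomp0).sub (hgd.mul hcomp2)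
  have hzero : (fun y : ℝ => (y + (c^2 - a y^2)/2) *
      (∫ t in (0:ℝ)..1, Real.sqrt (1-t^2) * (Real.sqrt (c^2 - a y^2*t^2))⁻¹)
      - a y^2 * (∫ t in (0:ℝ)..1, t^2 * Real.sqrt (1-t^2) * (Real.sqrt (c^2 - a y^2*t^2))⁻¹))
      =ᶠ[nhds ξ] (fun _ => (0:ℝ)) := by
    filter_upwards [isOpen_Ioo.mem_nhds hξ] with y hy
    exact BandEdge.norm_to_phi (hrange y hy).1 (hrange y hy).2 (hnorm y hy)
  have hz : HasDerivAt (fun y : ℝ => (y + (c^2 - a y^2)/2) *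
      (∫ t in (0:ℝ)..1, Real.sqrt (1-t^2) * (Real.sqrt (c^2 - a y^2*t^2))⁻¹)
      - a y^2 * (∫ t in (0:ℝ)..1, t^2 * Real.sqrt (1-t^2) * (Real.sqrt (c^2 - a y^2*t^2))⁻¹))
      0 ξ := (hasDerivAt_const ξ (0:ℝ)).congr_of_eventuallyEq hzero
  have E1 := hΦ.unique hz
  beta_reduce at E1
  -- FTC identities
  have E2 := BandEdge.ftc_id hg0 hg1 0 (BandEdge.int_psi hg0 hg1 0)
    (BandEdge.int_phi hg0 hg1 (0+2)) (BandEdge.int_chi hg0 hg1 (0+2))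
  have E3 := BandEdge.ftc_id hg0 hg1 2 (BandEdge.int_psi hg0 hg1 2)
    (BandEdge.int_phi hg0 hg1 (2+2)) (BandEdge.int_chi hg0 hg1 (2+2))
  simp only [pow_zero, one_mul, Nat.reduceAdd, Nat.cast_zero, zero_add, Nat.cast_ofNat] at E2 E3
  -- relate the two kinds of integrals
  have hphi0 := BandEdge.int_phi hg0 hg1 0
  simp only [pow_zero, one_mul] at hphi0
  have E4 : (∫ t in (0:ℝ)..1, Real.sqrt (1-t^2) * (Real.sqrt (c^2-(a ξ)^2*t^2))⁻¹)
      = (∫ t in (0:ℝ)..1, (Real.sqrt (1-t^2) * Real.sqrt (c^2-(a ξ)^2*t^2))⁻¹)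
        - ∫ t in (0:ℝ)..1, t^2 * (Real.sqrt (1-t^2) * Real.sqrt (c^2-(a ξ)^2*t^2))⁻¹ := by
    rw [← intervalIntegral.integral_sub hphi0 (BandEdge.int_phi hg0 hg1 2)]
    apply intervalIntegral.integral_congr
    intro t ht
    have h := BandEdge.psi_eq_phi_sub hg0 hg1 0 ht
    simpa using h
  have E5 : (∫ t in (0:ℝ)..1, t^2 * Real.sqrt (1-t^2) * (Real.sqrt (c^2-(a ξ)^2*t^2))⁻¹)
      = (∫ t in (0:ℝ)..1, t^2 * (Real.sqrt (1-t^2) * Real.sqrt (c^2-(a ξ)^2*t^2))⁻¹)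
        - ∫ t in (0:ℝ)..1, t^4 * (Real.sqrt (1-t^2) * Real.sqrt (c^2-(a ξ)^2*t^2))⁻¹ := by
    rw [← intervalIntegral.integral_sub (BandEdge.int_phi hg0 hg1 2) (BandEdge.int_phi hg0 hg1 4)]
    apply intervalIntegral.integral_congr
    intro t ht
    have h := BandEdge.psi_eq_phi_sub hg0 hg1 2 ht
    simpa using h
  have E6 := BandEdge.norm_to_phi hA0 hAc (hnorm ξ hξ)
  have hn0 : 0 < ∫ t in (0:ℝ)..1, (Real.sqrt (1-t^2) * Real.sqrt (c^2-(a ξ)^2*t^2))⁻¹ :=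
    BandEdge.NI0_pos hg0 hg1 hphi0
  rw [BandEdge.K0_eq hA0 hAc, BandEdge.K2_eq hA0 hAc]
  rw [div_add' _ _ _ hn0.ne', ← mul_div_assoc, eq_div_iff hn0.ne']
  linear_combination (-(4*(a ξ)^2))*E1 + (2*d*(ξ + (c^2-(a ξ)^2)/2))*E2
    + (-(2*d*(a ξ)^2))*E3 + (2*d*(ξ + (c^2-(a ξ)^2)/2-(a ξ)^2)+4*(a ξ)^2)*E4
    + (-(2*d*(a ξ)^2))*E5 + (-(4*d))*E6
end

section
/- Let c > 0 and let a : (−c²/2, c²/3) → (0, c) be differentiable with ∫₀^{a(ξ)} (ξ + (c² − a(ξ)²)/2 − s²)·√((a(ξ)² − s²)/(c² − s²)) ds = 0 for every ξ in the interval. Then a is strictly increasing on (−c²/2, c²/3). (Equivalently, γ(ξ) = −a(ξ)² is strictly decreasing, as asserted in Lemma 2.1 of the paper.) -/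
open intervalIntegral

/-- Continuity of the normalization integrand on `[0, A]`. -/
lemma be_contOn (c ξ A : ℝ) (hA0 : 0 ≤ A) (hAc : A < c) :
    ContinuousOn
      (fun s => (ξ + (c ^ 2 - A ^ 2) / 2 - s ^ 2) *
        Real.sqrt ((A ^ 2 - s ^ 2) / (c ^ 2 - s ^ 2))) (Set.Icc 0 A) := by
  apply ContinuousOn.mul
  · fun_prop
  · apply ContinuousOn.sqrt
    apply ContinuousOn.div
    · fun_prop
    · fun_prop
    · intro s hs
      rcases hs with ⟨h0, h1⟩
      nlinarith

lemma be_integrable (c ξ A : ℝ) (hA0 : 0 ≤ A) (hAc : A < c) :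
    IntervalIntegrable
      (fun s => (ξ + (c ^ 2 - A ^ 2) / 2 - s ^ 2) *
        Real.sqrt ((A ^ 2 - s ^ 2) / (c ^ 2 - s ^ 2))) MeasureTheory.volume 0 A :=
  by
  apply ContinuousOn.intervalIntegrable
  rw [Set.uIcc_of_le hA0]
  exact be_contOn c ξ A hA0 hAc

lemma be_integrable_t (c ξ A : ℝ) (hA0 : 0 ≤ A) (hAc : A < c) :
    IntervalIntegrable
      (fun t => (ξ + (c ^ 2 - A ^ 2) / 2 - (A * t) ^ 2) *
        Real.sqrt ((A ^ 2 - (A * t) ^ 2) / (c ^ 2 - (A * t) ^ 2))) MeasureTheory.volume 0 1 := by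
  apply ContinuousOn.intervalIntegrable
  rw [Set.uIcc_of_le (by norm_num : (0:ℝ) ≤ 1)]
  apply (be_contOn c ξ A hA0 hAc).comp (by fun_prop : Continuous (fun t : ℝ => A * t)).continuousOn
  intro t ht
  rcases ht with ⟨h0, h1⟩
  refine ⟨by positivity, ?_⟩
  simpa using mul_le_of_le_one_right hA0 h1

/-- If the normalization integral vanishes then `2ξ + c² < 3A²`. -/
lemma be_step2 (c ξ A : ℝ) (hA0 : 0 < A) (hAc : A < c)
    (h : ∫ s in (0:ℝ)..A, (ξ + (c ^ 2 - A ^ 2) / 2 - s ^ 2) *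
        Real.sqrt ((A ^ 2 - s ^ 2) / (c ^ 2 - s ^ 2)) = 0) :
    2 * ξ + c ^ 2 < 3 * A ^ 2 := by
  by_contra hcon
  push_neg at hcon
  have : 0 < ∫ s in (0:ℝ)..A, (ξ + (c ^ 2 - A ^ 2) / 2 - s ^ 2) *
      Real.sqrt ((A ^ 2 - s ^ 2) / (c ^ 2 - s ^ 2)) := by
    apply intervalIntegral_pos_of_pos_on (be_integrable c ξ A hA0.le hAc) _ hA0
    intro s hs
    rcases hs with ⟨h0, h1⟩
    apply mul_pos (by nlinarith)
    apply Real.sqrt_pos.2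
    apply div_pos (by nlinarith) (by nlinarith)
  linarith

/-- Strict monotonicity of the normalization integral in `ξ`. -/
lemma be_step1 (c ξ₁ ξ₂ A : ℝ) (hA0 : 0 < A) (hAc : A < c) (hξ : ξ₁ < ξ₂) :
    (∫ s in (0:ℝ)..A, (ξ₁ + (c ^ 2 - A ^ 2) / 2 - s ^ 2) *
        Real.sqrt ((A ^ 2 - s ^ 2) / (c ^ 2 - s ^ 2)))
    < ∫ s in (0:ℝ)..A, (ξ₂ + (c ^ 2 - A ^ 2) / 2 - s ^ 2) *
        Real.sqrt ((A ^ 2 - s ^ 2) / (c ^ 2 - s ^ 2)) := by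
  have hsub : 0 < ∫ s in (0:ℝ)..A,
      ((ξ₂ + (c ^ 2 - A ^ 2) / 2 - s ^ 2) * Real.sqrt ((A ^ 2 - s ^ 2) / (c ^ 2 - s ^ 2))
        - (ξ₁ + (c ^ 2 - A ^ 2) / 2 - s ^ 2) * Real.sqrt ((A ^ 2 - s ^ 2) / (c ^ 2 - s ^ 2))) := by
    apply intervalIntegral_pos_of_pos_on
      ((be_integrable c ξ₂ A hA0.le hAc).sub (be_integrable c ξ₁ A hA0.le hAc)) _ hA0
    intro s hs
    rcases hs with ⟨h0, h1⟩
    have hsq : 0 < Real.sqrt ((A ^ 2 - s ^ 2) / (c ^ 2 - s ^ 2)) :=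
      Real.sqrt_pos.2 (div_pos (by nlinarith) (by nlinarith))
    nlinarith
  rw [intervalIntegral.integral_sub (be_integrable c ξ₂ A hA0.le hAc)
    (be_integrable c ξ₁ A hA0.le hAc)] at hsub
  linarith
set_option maxHeartbeats 1000000 in

/-- For fixed `t ∈ (0,1)`, the rescaled integrand is strictly decreasing in the band edge. -/
lemma be_two_point (c ξ t a₂ a₁ : ℝ) (ha₂ : 0 < a₂) (h12 : a₂ < a₁) (ha₁ : a₁ < c)
    (ht0 : 0 < t) (ht1 : t < 1) (hξ : 2 * ξ + c ^ 2 < 3 * a₂ ^ 2) :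
    (ξ + (c ^ 2 - a₁ ^ 2) / 2 - (a₁ * t) ^ 2) *
        Real.sqrt ((a₁ ^ 2 - (a₁ * t) ^ 2) / (c ^ 2 - (a₁ * t) ^ 2))
      < (ξ + (c ^ 2 - a₂ ^ 2) / 2 - (a₂ * t) ^ 2) *
        Real.sqrt ((a₂ ^ 2 - (a₂ * t) ^ 2) / (c ^ 2 - (a₂ * t) ^ 2)) := by
  have hc : 0 < c := lt_trans (lt_trans ha₂ h12) ha₁
  set K : ℝ → ℝ := fun x => Real.sqrt (1 - t ^ 2) *
    ((ξ + (c ^ 2 - x ^ 2) / 2 - (x * t) ^ 2) * x / Real.sqrt (c ^ 2 - (x * t) ^ 2)) with hK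
  -- the original integrand agrees with K on [a₂, a₁]
  have hEq : ∀ x ∈ Set.Icc a₂ a₁,
      (ξ + (c ^ 2 - x ^ 2) / 2 - (x * t) ^ 2) *
        Real.sqrt ((x ^ 2 - (x * t) ^ 2) / (c ^ 2 - (x * t) ^ 2)) = K x := by
    intro x hx
    have hx0 : 0 < x := lt_of_lt_of_le ha₂ hx.1
    have h1 : (x ^ 2 - (x * t) ^ 2) / (c ^ 2 - (x * t) ^ 2)
        = x ^ 2 * (1 - t ^ 2) / (c ^ 2 - (x * t) ^ 2) := by ring_nf
    rw [h1, Real.sqrt_div (mul_nonneg (sq_nonneg x) (by nlinarith)),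
      Real.sqrt_mul (sq_nonneg x), Real.sqrt_sq hx0.le, hK]
    ring
  -- derivative of K at any x ∈ (0, c)
  have hder : ∀ x, 0 < x → x < c → HasDerivAt K
      (Real.sqrt (1 - t ^ 2) *
        ((((-x - 2 * x * t ^ 2) * x + (ξ + (c ^ 2 - x ^ 2) / 2 - (x * t) ^ 2))
            * Real.sqrt (c ^ 2 - (x * t) ^ 2)
          - (ξ + (c ^ 2 - x ^ 2) / 2 - (x * t) ^ 2) * x
            * (-(2 * x * t ^ 2) / (2 * Real.sqrt (c ^ 2 - (x * t) ^ 2))))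
          / Real.sqrt (c ^ 2 - (x * t) ^ 2) ^ 2)) x := by
    intro x hx0 hxc
    have hD : 0 < c ^ 2 - (x * t) ^ 2 := by
      nlinarith [mul_pos (mul_pos hx0 hx0) (show (0:ℝ) < 1 - t ^ 2 by nlinarith),
        mul_pos (sub_pos.2 hxc) (show (0:ℝ) < c + x by linarith)]
    have hDs : 0 < Real.sqrt (c ^ 2 - (x * t) ^ 2) := Real.sqrt_pos.2 hD
    have hp : HasDerivAt (fun x : ℝ => ξ + (c ^ 2 - x ^ 2) / 2 - (x * t) ^ 2)
        (-x - 2 * x * t ^ 2) x := by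
      have h := ((hasDerivAt_const x ξ).add
        (((hasDerivAt_const x (c ^ 2)).sub (hasDerivAt_pow 2 x)).div_const 2)).sub
        (((hasDerivAt_id x).mul_const t).pow 2)
      refine h.congr_deriv ?_
      simp only [id_eq]
      push_cast
      ring
    have hu : HasDerivAt (fun x : ℝ => (ξ + (c ^ 2 - x ^ 2) / 2 - (x * t) ^ 2) * x)
        ((-x - 2 * x * t ^ 2) * x + (ξ + (c ^ 2 - x ^ 2) / 2 - (x * t) ^ 2)) x := by
      have h := hp.mul (hasDerivAt_id x)
      refine h.congr_deriv ?_
      simp only [id_eq]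
      push_cast
      ring
    have hw : HasDerivAt (fun x : ℝ => c ^ 2 - (x * t) ^ 2) (-(2 * x * t ^ 2)) x := by
      have h := (hasDerivAt_const x (c ^ 2)).sub (((hasDerivAt_id x).mul_const t).pow 2)
      refine h.congr_deriv ?_
      simp only [id_eq]
      push_cast
      ring
    have hv : HasDerivAt (fun x : ℝ => Real.sqrt (c ^ 2 - (x * t) ^ 2))
        (-(2 * x * t ^ 2) / (2 * Real.sqrt (c ^ 2 - (x * t) ^ 2))) x := hw.sqrt hD.ne'
    exact (hu.div hv hDs.ne').const_mul _
  -- K is strictly decreasing on [a₂, a₁]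
  have hanti : StrictAntiOn K (Set.Icc a₂ a₁) := by
    apply strictAntiOn_of_deriv_neg (convex_Icc a₂ a₁)
    · intro x hx
      exact (hder x (lt_of_lt_of_le ha₂ hx.1) (lt_of_le_of_lt hx.2 ha₁)).continuousAt.continuousWithinAt
    · intro x hx
      rw [interior_Icc] at hx
      have hx0 : 0 < x := lt_trans ha₂ hx.1
      have hxc : x < c := lt_trans hx.2 ha₁
      rw [(hder x hx0 hxc).deriv]
      have hD : 0 < c ^ 2 - (x * t) ^ 2 := by
        nlinarith [mul_pos (mul_pos hx0 hx0) (show (0:ℝ) < 1 - t ^ 2 by nlinarith),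
          mul_pos (sub_pos.2 hxc) (show (0:ℝ) < c + x by linarith)]
      have hDs : 0 < Real.sqrt (c ^ 2 - (x * t) ^ 2) := Real.sqrt_pos.2 hD
      have hsq : Real.sqrt (c ^ 2 - (x * t) ^ 2) ^ 2 = c ^ 2 - (x * t) ^ 2 :=
        Real.sq_sqrt hD.le
      apply mul_neg_of_pos_of_neg (Real.sqrt_pos.2 (by nlinarith))
      apply div_neg_of_neg_of_pos _ (by positivity)
      set r := Real.sqrt (c ^ 2 - (x * t) ^ 2) with hr
      have hexp : ((-x - 2 * x * t ^ 2) * x + (ξ + (c ^ 2 - x ^ 2) / 2 - (x * t) ^ 2)) * r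
          - (ξ + (c ^ 2 - x ^ 2) / 2 - (x * t) ^ 2) * x * (-(2 * x * t ^ 2) / (2 * r))
          = (((-x - 2 * x * t ^ 2) * x + (ξ + (c ^ 2 - x ^ 2) / 2 - (x * t) ^ 2)) * r ^ 2
             + (ξ + (c ^ 2 - x ^ 2) / 2 - (x * t) ^ 2) * x ^ 2 * t ^ 2) / r := by
        field_simp
        ring
      rw [hexp]
      apply div_neg_of_neg_of_pos _ hDs
      rw [hsq]
      -- key algebraic inequality
      have hplt : ξ + (c ^ 2 - x ^ 2) / 2 - (x * t) ^ 2 < x ^ 2 * (1 - t ^ 2) := by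
        nlinarith [mul_pos (sub_pos.2 hx.1) (show (0:ℝ) < x + a₂ by linarith)]
      have hxx : (0:ℝ) < x ^ 2 := by positivity
      have ht2 : t ^ 2 < 1 := by nlinarith
      have hx2 : x ^ 2 < c ^ 2 := by nlinarith
      have hxt2 : x ^ 2 * t ^ 2 < x ^ 2 := by nlinarith
      nlinarith [mul_lt_mul_of_pos_right hplt (show (0:ℝ) < c ^ 2 by positivity),
        mul_pos (mul_pos hxx (mul_pos ht0 ht0))
          (show (0:ℝ) < 3 * c ^ 2 - x ^ 2 - 2 * x ^ 2 * t ^ 2 by nlinarith)]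
  have h1 : a₁ ∈ Set.Icc a₂ a₁ := ⟨h12.le, le_refl _⟩
  have h2 : a₂ ∈ Set.Icc a₂ a₁ := ⟨le_refl _, h12.le⟩
  rw [hEq a₁ h1, hEq a₂ h2]
  exact hanti h2 h1 h12

/-- the band edge `a(ξ)` determined by the normalization condition is strictly
increasing on `(−c²/2, c²/3)` (Lemma 2.1 of the paper). -/
theorem band_edge_strict_mono (c : ℝ) (hc : 0 < c) (a : ℝ → ℝ)
    (hrange : ∀ ξ ∈ Set.Ioo (-c ^ 2 / 2) (c ^ 2 / 3), 0 < a ξ ∧ a ξ < c)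
    (hdiff : ∀ ξ ∈ Set.Ioo (-c ^ 2 / 2) (c ^ 2 / 3), DifferentiableAt ℝ a ξ)
    (hnorm : ∀ ξ ∈ Set.Ioo (-c ^ 2 / 2) (c ^ 2 / 3),
      ∫ s in (0:ℝ)..(a ξ),
        (ξ + (c ^ 2 - (a ξ) ^ 2) / 2 - s ^ 2) *
          Real.sqrt (((a ξ) ^ 2 - s ^ 2) / (c ^ 2 - s ^ 2)) = 0) :
    StrictMonoOn a (Set.Ioo (-c ^ 2 / 2) (c ^ 2 / 3)) := by
  intro ξ₁ hξ₁ ξ₂ hξ₂ hlt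
  obtain ⟨hA0, hAc⟩ := hrange ξ₁ hξ₁
  obtain ⟨hB0, hBc⟩ := hrange ξ₂ hξ₂
  by_contra hcon
  push_neg at hcon
  have hF1 := hnorm ξ₁ hξ₁
  have hF2 := hnorm ξ₂ hξ₂
  have hposF : 0 < ∫ s in (0:ℝ)..(a ξ₁),
      (ξ₂ + (c ^ 2 - (a ξ₁) ^ 2) / 2 - s ^ 2) *
        Real.sqrt (((a ξ₁) ^ 2 - s ^ 2) / (c ^ 2 - s ^ 2)) := by
    have h := be_step1 c ξ₁ ξ₂ (a ξ₁) hA0 hAc hlt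
    linarith
  rcases eq_or_lt_of_le hcon with heq | hBA
  · rw [heq] at hF2
    linarith
  · have hstep2 : 2 * ξ₂ + c ^ 2 < 3 * (a ξ₂) ^ 2 := be_step2 c ξ₂ (a ξ₂) hB0 hBc hF2
    have hcompB := intervalIntegral.integral_comp_mul_left
      (fun s => (ξ₂ + (c ^ 2 - (a ξ₂) ^ 2) / 2 - s ^ 2) *
        Real.sqrt (((a ξ₂) ^ 2 - s ^ 2) / (c ^ 2 - s ^ 2))) (a := 0) (b := 1) hB0.ne'
    have hcompA := intervalIntegral.integral_comp_mul_left
      (fun s => (ξ₂ + (c ^ 2 - (a ξ₁) ^ 2) / 2 - s ^ 2) *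
        Real.sqrt (((a ξ₁) ^ 2 - s ^ 2) / (c ^ 2 - s ^ 2))) (a := 0) (b := 1) hA0.ne'
    simp only [mul_zero, mul_one, smul_eq_mul] at hcompA hcompB
    have hH2 : (∫ t in (0:ℝ)..1, (ξ₂ + (c ^ 2 - (a ξ₂) ^ 2) / 2 - ((a ξ₂) * t) ^ 2) *
        Real.sqrt (((a ξ₂) ^ 2 - ((a ξ₂) * t) ^ 2) / (c ^ 2 - ((a ξ₂) * t) ^ 2))) = 0 := by
      rw [hcompB, hF2, mul_zero]
    have hsubpos : 0 < ∫ t in (0:ℝ)..1,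
        ((ξ₂ + (c ^ 2 - (a ξ₂) ^ 2) / 2 - ((a ξ₂) * t) ^ 2) *
          Real.sqrt (((a ξ₂) ^ 2 - ((a ξ₂) * t) ^ 2) / (c ^ 2 - ((a ξ₂) * t) ^ 2))
        - (ξ₂ + (c ^ 2 - (a ξ₁) ^ 2) / 2 - ((a ξ₁) * t) ^ 2) *
          Real.sqrt (((a ξ₁) ^ 2 - ((a ξ₁) * t) ^ 2) / (c ^ 2 - ((a ξ₁) * t) ^ 2))) := by
      apply intervalIntegral.intervalIntegral_pos_of_pos_on
        ((be_integrable_t c ξ₂ (a ξ₂) hB0.le hBc).sub (be_integrable_t c ξ₂ (a ξ₁) hA0.le hAc))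
        _ one_pos
      intro t ht
      exact sub_pos.2 (be_two_point c ξ₂ t (a ξ₂) (a ξ₁) hB0 hBA hAc ht.1 ht.2 hstep2)
    rw [intervalIntegral.integral_sub (be_integrable_t c ξ₂ (a ξ₂) hB0.le hBc)
      (be_integrable_t c ξ₂ (a ξ₁) hA0.le hAc)] at hsubpos
    have hHAneg : (∫ t in (0:ℝ)..1, (ξ₂ + (c ^ 2 - (a ξ₁) ^ 2) / 2 - ((a ξ₁) * t) ^ 2) *
        Real.sqrt (((a ξ₁) ^ 2 - ((a ξ₁) * t) ^ 2) / (c ^ 2 - ((a ξ₁) * t) ^ 2))) < 0 := by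
      linarith
    rw [hcompA] at hHAneg
    have hinv : (0:ℝ) < (a ξ₁)⁻¹ := by positivity
    nlinarith
end

section
/- Let c > 0 and let a : (−c²/2, c²/3) → (0, c) be differentiable with ∫₀^{a(ξ)} (ξ + (c² − a(ξ)²)/2 − s²)·√((a(ξ)² − s²)/(c² − s²)) ds = 0 for every ξ in the interval. Set μ(ξ) = −ξ − (c² − a(ξ)²)/2 and h(ξ) = −(∫₀^{a(ξ)} s²·((c² − s²)(a(ξ)² − s²))^{−1/2} ds)/(∫₀^{a(ξ)} ((c² − s²)(a(ξ)² − s²))^{−1/2} ds). Then for every fixed λ > 0 and every ξ ∈ (−c²/2, c²/3), (∂/∂ξ)[ (λ − μ(ξ)) · √((λ + a(ξ)²)/(λ(λ + c²))) ] = (λ − h(ξ)) / √(λ·(λ + a(ξ)²)·(λ + c²)). -/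
open MeasureTheory Set intervalIntegral

noncomputable def qK (c B u : ℝ) : ℝ :=
  B * (Real.sqrt (1 - u^2) * (Real.sqrt (c^2 - B*u^2))⁻¹)

noncomputable def qK' (c B u : ℝ) : ℝ :=
  Real.sqrt (1 - u^2) * ((Real.sqrt (c^2 - B*u^2))⁻¹
    + B * u^2 * (2 * (c^2 - B*u^2) * Real.sqrt (c^2 - B*u^2))⁻¹)

noncomputable def qM (c B u : ℝ) : ℝ := ((c^2 - B)/2 - B*u^2) * qK c B u

noncomputable def qM' (c B u : ℝ) : ℝ :=
  (-(1/2) - u^2) * qK c B u + ((c^2 - B)/2 - B*u^2) * qK' c B u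

lemma hasDerivAt_sqrt_inner (c u B : ℝ) (hg : 0 < c^2 - B*u^2) :
    HasDerivAt (fun B => Real.sqrt (c^2 - B*u^2))
      (1/(2*Real.sqrt (c^2 - B*u^2)) * (-(u^2))) B := by
  have hinner : HasDerivAt (fun B : ℝ => c^2 - B*u^2) (-(u^2)) B := by
    exact ((hasDerivAt_const B (c^2)).sub ((hasDerivAt_id B).mul_const (u^2))).congr_deriv (by ring)
  exact (Real.hasDerivAt_sqrt hg.ne').comp B hinner

lemma hasDerivAt_qK (c B u : ℝ) (hg : 0 < c^2 - B*u^2) :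
    HasDerivAt (fun B => qK c B u) (qK' c B u) B := by
  have hs : 0 < Real.sqrt (c^2 - B*u^2) := Real.sqrt_pos.2 hg
  have hsq : Real.sqrt (c^2 - B*u^2) ^ 2 = c^2 - B*u^2 := Real.sq_sqrt hg.le
  have hinv : HasDerivAt (fun B => (Real.sqrt (c^2 - B*u^2))⁻¹)
      (-(1/(2*Real.sqrt (c^2 - B*u^2)) * (-(u^2))) / (Real.sqrt (c^2 - B*u^2))^2) B :=
    (hasDerivAt_sqrt_inner c u B hg).inv hs.ne'
  have h2 : HasDerivAt (fun B => Real.sqrt (1 - u^2) * (Real.sqrt (c^2 - B*u^2))⁻¹)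
      (Real.sqrt (1 - u^2) * (-(1/(2*Real.sqrt (c^2 - B*u^2)) * (-(u^2))) / (Real.sqrt (c^2 - B*u^2))^2)) B :=
    hinv.const_mul _
  have h3 := (hasDerivAt_id B).mul h2
  refine h3.congr_deriv ?_
  simp only [id_eq]
  unfold qK'
  rw [hsq]
  field_simp

lemma hasDerivAt_qM (c B u : ℝ) (hg : 0 < c^2 - B*u^2) :
    HasDerivAt (fun B => qM c B u) (qM' c B u) B := by
  have h1 : HasDerivAt (fun B : ℝ => (c^2 - B)/2 - B*u^2) (-(1/2) - u^2) B := by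
    have := (((hasDerivAt_const B (c^2)).sub (hasDerivAt_id B)).div_const 2).sub
      ((hasDerivAt_id B).mul_const (u^2))
    exact this.congr_deriv (by ring)
  exact h1.mul (hasDerivAt_qK c B u hg)

noncomputable def wv (c A u : ℝ) : ℝ := (Real.sqrt (1 - u^2) * Real.sqrt (c^2 - A*u^2))⁻¹

lemma wv_meas (c A : ℝ) : Measurable (wv c A) := by
  unfold wv
  apply Measurable.inv
  exact ((Real.continuous_sqrt.comp (by continuity)).mul
    (Real.continuous_sqrt.comp (by continuity))).measurable

lemma wv_nonneg (c A u : ℝ) : 0 ≤ wv c A u :=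
  inv_nonneg.2 (mul_nonneg (Real.sqrt_nonneg _) (Real.sqrt_nonneg _))

lemma wv_le (c A : ℝ) (hA : 0 < A) (hAc : A < c^2) {u : ℝ} (hu : u ∈ Set.Ioc (0:ℝ) 1) :
    wv c A u ≤ (Real.sqrt (c^2 - A))⁻¹ * (1-u) ^ (-(1/2) : ℝ) := by
  obtain ⟨hu0, hu1⟩ := hu
  rcases eq_or_lt_of_le hu1 with h1 | h1
  · subst h1
    have h2 : (1 : ℝ) - 1^2 = 0 := by ring
    rw [wv, h2, Real.sqrt_zero, zero_mul, inv_zero]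
    have h3 : ((1:ℝ)-1) = 0 := by ring
    rw [h3, Real.zero_rpow (by norm_num)]
    simp
  · have ht1 : (0:ℝ) < 1 - u := by linarith
    have ht2 : (0:ℝ) < c^2 - A := by linarith
    have hu2 : u^2 ≤ 1 := by nlinarith
    have hs1 : Real.sqrt (1-u) ≤ Real.sqrt (1-u^2) := Real.sqrt_le_sqrt (by nlinarith)
    have hs2 : Real.sqrt (c^2-A) ≤ Real.sqrt (c^2-A*u^2) := Real.sqrt_le_sqrt (by nlinarith)
    have hp1 : 0 < Real.sqrt (1-u) := Real.sqrt_pos.2 ht1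
    have hp2 : 0 < Real.sqrt (c^2-A) := Real.sqrt_pos.2 ht2
    have key : wv c A u ≤ (Real.sqrt (1-u) * Real.sqrt (c^2-A))⁻¹ := by
      apply inv_anti₀ (by positivity)
      exact mul_le_mul hs1 hs2 hp2.le (Real.sqrt_nonneg _)
    refine key.trans (le_of_eq ?_)
    rw [mul_inv, Real.rpow_neg ht1.le, ← Real.sqrt_eq_rpow]
    ring

lemma wv_int (c A : ℝ) (hA : 0 < A) (hAc : A < c^2) :
    IntervalIntegrable (wv c A) volume 0 1 := by
  have hbase : IntervalIntegrable (fun u : ℝ => (1-u) ^ (-(1/2) : ℝ)) volume 0 1 := by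
    have h := (intervalIntegrable_rpow' (a := (0:ℝ)) (b := 1) (r := -(1/2)) (by norm_num)).comp_sub_left 1
    norm_num at h
    exact h.symm
  have hbig : IntervalIntegrable
      (fun u : ℝ => (Real.sqrt (c^2 - A))⁻¹ * (1-u) ^ (-(1/2) : ℝ)) volume 0 1 :=
    hbase.const_mul _
  apply hbig.mono_fun' (wv_meas c A).aestronglyMeasurable
  refine (MeasureTheory.ae_restrict_iff' measurableSet_uIoc).2
    (Filter.Eventually.of_forall (fun u hu => ?_))
  simp only []
  rw [Real.norm_eq_abs, abs_of_nonneg (wv_nonneg c A u)]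
  rw [uIoc_of_le (by norm_num : (0:ℝ) ≤ 1)] at hu
  exact wv_le c A hA hAc hu

lemma u2wv_int (c A : ℝ) (hA : 0 < A) (hAc : A < c^2) :
    IntervalIntegrable (fun u => A * u^2 * wv c A u) volume 0 1 := by
  have hbig : IntervalIntegrable (fun u => A * wv c A u) volume 0 1 :=
    (wv_int c A hA hAc).const_mul _
  apply hbig.mono_fun'
  · exact ((measurable_const.mul (measurable_id.pow_const 2)).mul (wv_meas c A)).aestronglyMeasurable
  · refine (MeasureTheory.ae_restrict_iff' measurableSet_uIoc).2
      (Filter.Eventually.of_forall (fun u hu => ?_))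
    rw [uIoc_of_le (by norm_num : (0:ℝ) ≤ 1)] at hu
    simp only []
    rw [Real.norm_eq_abs, abs_of_nonneg
      (mul_nonneg (mul_nonneg hA.le (sq_nonneg u)) (wv_nonneg c A u))]
    have hu2 : u^2 ≤ 1 := by nlinarith [hu.1, hu.2]
    nlinarith [wv_nonneg c A u, mul_le_of_le_one_right hA.le hu2]

lemma wv_pos (c A : ℝ) (hA : 0 < A) (hAc : A < c^2) :
    0 < ∫ u in (0:ℝ)..1, wv c A u := by
  apply intervalIntegral.intervalIntegral_pos_of_pos_on (wv_int c A hA hAc)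
  · intro u hu
    have h1 : 0 < 1 - u^2 := by nlinarith [hu.1, hu.2]
    have h2 : 0 < c^2 - A*u^2 := by nlinarith [hu.1, hu.2]
    unfold wv
    positivity
  · norm_num

lemma qK_meas (c B : ℝ) : Measurable (fun u => qK c B u) := by
  unfold qK
  exact measurable_const.mul ((Real.continuous_sqrt.comp (by continuity)).measurable.mul
    ((Real.continuous_sqrt.comp (by continuity)).measurable.inv))

lemma qK'_meas (c B : ℝ) : Measurable (fun u => qK' c B u) := by
  unfold qK'
  exact (Real.continuous_sqrt.comp (by continuity)).measurable.mul
    (((Real.continuous_sqrt.comp (by continuity)).measurable.inv).add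
      (((measurable_const.mul (measurable_id.pow_const 2))).mul
        ((((continuous_const.mul (by continuity)).mul
          (Real.continuous_sqrt.comp (by continuity))).measurable).inv)))

lemma qM'_meas (c B : ℝ) : Measurable (fun u => qM' c B u) := by
  unfold qM'
  exact (((continuous_const.sub (continuous_pow 2)).measurable).mul (qK_meas c B)).add
    (measurable_const.sub (measurable_const.mul (measurable_id.pow_const 2)) |>.mul (qK'_meas c B))

lemma gpos {c B : ℝ} (hB : 0 < B) (hBc : B < c^2) {u : ℝ} (hu : u ∈ Set.uIcc (0:ℝ) 1) :
    0 < c^2 - B*u^2 := by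
  rw [Set.uIcc_of_le (by norm_num : (0:ℝ) ≤ 1)] at hu
  have : u^2 ≤ 1 := by nlinarith [hu.1, hu.2]
  nlinarith

lemma qK_contOn {c B : ℝ} (hB : 0 < B) (hBc : B < c^2) :
    ContinuousOn (fun u => qK c B u) (Set.uIcc 0 1) := by
  unfold qK
  refine continuousOn_const.mul (((Real.continuous_sqrt.comp (by continuity)).continuousOn).mul
    (ContinuousOn.inv₀ ((Real.continuous_sqrt.comp (by continuity)).continuousOn) ?_))
  exact fun u hu => (Real.sqrt_pos.2 (gpos hB hBc hu)).ne'

lemma qK'_contOn {c B : ℝ} (hB : 0 < B) (hBc : B < c^2) :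
    ContinuousOn (fun u => qK' c B u) (Set.uIcc 0 1) := by
  unfold qK'
  refine ((Real.continuous_sqrt.comp (by continuity)).continuousOn).mul
    ((ContinuousOn.inv₀ ((Real.continuous_sqrt.comp (by continuity)).continuousOn)
      (fun u hu => (Real.sqrt_pos.2 (gpos hB hBc hu)).ne')).add
      (continuousOn_const.mul (continuousOn_pow 2) |>.mul (ContinuousOn.inv₀
        (((continuous_const.mul (by continuity : Continuous fun u : ℝ => c^2 - B*u^2)).mul
          (Real.continuous_sqrt.comp (by continuity))).continuousOn) (fun u hu => ?_))))
  have h := gpos hB hBc hu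
  have := Real.sqrt_pos.2 h
  positivity

lemma qM'_contOn {c B : ℝ} (hB : 0 < B) (hBc : B < c^2) :
    ContinuousOn (fun u => qM' c B u) (Set.uIcc 0 1) := by
  unfold qM'
  exact ((continuousOn_const.sub (continuousOn_pow 2)).mul (qK_contOn hB hBc)).add
    (continuousOn_const.sub (continuousOn_const.mul (continuousOn_pow 2)) |>.mul
      (qK'_contOn hB hBc))

lemma qK_nonneg {c B u : ℝ} (hB : 0 ≤ B) : 0 ≤ qK c B u := by
  unfold qK
  have := Real.sqrt_nonneg (1-u^2); have := Real.sqrt_nonneg (c^2-B*u^2)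
  positivity

lemma qK'_nonneg {c B u : ℝ} (hB : 0 ≤ B) (hg : 0 ≤ c^2 - B*u^2) : 0 ≤ qK' c B u := by
  unfold qK'
  have := Real.sqrt_nonneg (1-u^2); have := Real.sqrt_nonneg (c^2-B*u^2)
  positivity

lemma qK_bound {c A B u : ℝ} (hA : 0 < A) (hAc : A < c^2) (hB : 0 < B) (hBc : B ≤ c^2)
    (hgd : (c^2-A)/2 ≤ c^2 - B*u^2) (hu1 : 1 - u^2 ≤ 1) :
    qK c B u ≤ c^2 * (Real.sqrt ((c^2-A)/2))⁻¹ := by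
  have hd : (0:ℝ) < (c^2-A)/2 := by linarith
  have hsd : 0 < Real.sqrt ((c^2-A)/2) := Real.sqrt_pos.2 hd
  have hs2 : Real.sqrt ((c^2-A)/2) ≤ Real.sqrt (c^2-B*u^2) := Real.sqrt_le_sqrt hgd
  have hs1 : Real.sqrt (1-u^2) ≤ 1 := Real.sqrt_le_one.2 hu1
  have hinv : (Real.sqrt (c^2-B*u^2))⁻¹ ≤ (Real.sqrt ((c^2-A)/2))⁻¹ := inv_anti₀ hsd hs2
  unfold qK
  calc B * (Real.sqrt (1-u^2) * (Real.sqrt (c^2-B*u^2))⁻¹)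
      ≤ c^2 * (1 * (Real.sqrt ((c^2-A)/2))⁻¹) := by
        apply mul_le_mul hBc _ _ (by positivity)
        · exact mul_le_mul hs1 hinv (by positivity) (by norm_num)
        · exact mul_nonneg (Real.sqrt_nonneg _) (by positivity)
    _ = c^2 * (Real.sqrt ((c^2-A)/2))⁻¹ := by ring

lemma qK'_bound {c A B u : ℝ} (hA : 0 < A) (hAc : A < c^2) (hB : 0 < B) (hBc : B ≤ c^2)
    (hgd : (c^2-A)/2 ≤ c^2 - B*u^2) (hu1 : 1 - u^2 ≤ 1) (hu2 : u^2 ≤ 1) :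
    qK' c B u ≤ (Real.sqrt ((c^2-A)/2))⁻¹
      + c^2 * (2 * ((c^2-A)/2) * Real.sqrt ((c^2-A)/2))⁻¹ := by
  have hd : (0:ℝ) < (c^2-A)/2 := by linarith
  have hg : (0:ℝ) < c^2 - B*u^2 := lt_of_lt_of_le hd hgd
  have hsd : 0 < Real.sqrt ((c^2-A)/2) := Real.sqrt_pos.2 hd
  have hsg : 0 < Real.sqrt (c^2-B*u^2) := Real.sqrt_pos.2 hg
  have hs2 : Real.sqrt ((c^2-A)/2) ≤ Real.sqrt (c^2-B*u^2) := Real.sqrt_le_sqrt hgd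
  have hs1 : Real.sqrt (1-u^2) ≤ 1 := Real.sqrt_le_one.2 hu1
  have hinv : (Real.sqrt (c^2-B*u^2))⁻¹ ≤ (Real.sqrt ((c^2-A)/2))⁻¹ := inv_anti₀ hsd hs2
  have hinv2 : (2*(c^2-B*u^2) * Real.sqrt (c^2-B*u^2))⁻¹
      ≤ (2*((c^2-A)/2) * Real.sqrt ((c^2-A)/2))⁻¹ := by
    apply inv_anti₀ (by positivity)
    apply mul_le_mul (by linarith) hs2 hsd.le (by positivity)
  have hBu : B * u^2 ≤ c^2 := by nlinarith
  unfold qK'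
  calc Real.sqrt (1-u^2) * ((Real.sqrt (c^2-B*u^2))⁻¹
          + B*u^2 * (2*(c^2-B*u^2) * Real.sqrt (c^2-B*u^2))⁻¹)
      ≤ 1 * ((Real.sqrt ((c^2-A)/2))⁻¹
          + c^2 * (2*((c^2-A)/2) * Real.sqrt ((c^2-A)/2))⁻¹) := by
        apply mul_le_mul hs1 _ _ (by norm_num)
        · apply add_le_add hinv
          apply mul_le_mul hBu hinv2 (by positivity) (by positivity)
        · have : (0:ℝ) ≤ B*u^2 := by positivity
          positivity
    _ = _ := by ring

lemma ball_facts {c A B : ℝ} (hA : 0 < A) (hAc : A < c^2)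
    (hB : B ∈ Metric.ball A (min A (c^2 - A) / 2)) :
    0 < B ∧ B < c^2 ∧ c^2 - B ≥ (c^2-A)/2 := by
  rw [Metric.mem_ball, Real.dist_eq, abs_lt] at hB
  have h1 := min_le_left A (c^2 - A)
  have h2 := min_le_right A (c^2 - A)
  have h3 : 0 < min A (c^2 - A) := lt_min hA (by linarith)
  constructor
  · linarith [hB.1]
  constructor
  · linarith [hB.2]
  · linarith [hB.2]

lemma uIoc_facts {u : ℝ} (hu : u ∈ Set.uIoc (0:ℝ) 1) :
    0 < u ∧ u ≤ 1 ∧ u^2 ≤ 1 ∧ 1 - u^2 ≤ 1 := by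
  rw [Set.uIoc_of_le (by norm_num : (0:ℝ) ≤ 1)] at hu
  have h2 : u^2 ≤ 1 := by nlinarith [hu.1, hu.2]
  exact ⟨hu.1, hu.2, h2, by nlinarith [sq_nonneg u]⟩

lemma gball {c A B u : ℝ} (hA : 0 < A) (hAc : A < c^2)
    (hB : B ∈ Metric.ball A (min A (c^2 - A) / 2)) (hu : u ∈ Set.uIoc (0:ℝ) 1) :
    (c^2-A)/2 ≤ c^2 - B*u^2 := by
  obtain ⟨hB0, hBc, hBd⟩ := ball_facts hA hAc hB
  obtain ⟨_, _, hu2, _⟩ := uIoc_facts hu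
  nlinarith

lemma hasDerivAt_Ktil (c A : ℝ) (hA : 0 < A) (hAc : A < c^2) :
    HasDerivAt (fun B => ∫ u in (0:ℝ)..1, qK c B u) (∫ u in (0:ℝ)..1, qK' c A u) A := by
  have hd : (0:ℝ) < (c^2-A)/2 := by linarith
  have heps : (0:ℝ) < min A (c^2 - A) / 2 := by
    have : 0 < min A (c^2-A) := lt_min hA (by linarith)
    linarith
  refine (intervalIntegral.hasDerivAt_integral_of_dominated_loc_of_deriv_le (Metric.ball_mem_nhds A heps)
    (F := fun B u => qK c B u) (F' := fun B u => qK' c B u)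
    (bound := fun _ => (Real.sqrt ((c^2-A)/2))⁻¹ + c^2 * (2*((c^2-A)/2) * Real.sqrt ((c^2-A)/2))⁻¹)
    ?_ ?_ ?_ ?_ ?_ ?_).2
  · exact Filter.Eventually.of_forall (fun B => (qK_meas c B).aestronglyMeasurable)
  · exact (qK_contOn hA hAc).intervalIntegrable
  · exact (qK'_meas c A).aestronglyMeasurable
  · refine Filter.Eventually.of_forall (fun u hu B hB => ?_)
    obtain ⟨hB0, hBc, _⟩ := ball_facts hA hAc hB
    obtain ⟨_, _, hu2, hu1⟩ := uIoc_facts hu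
    have hgd := gball hA hAc hB hu
    rw [Real.norm_eq_abs, abs_of_nonneg (qK'_nonneg hB0.le (le_trans hd.le hgd))]
    exact qK'_bound hA hAc hB0 hBc.le hgd hu1 hu2
  · exact intervalIntegrable_const
  · refine Filter.Eventually.of_forall (fun u hu B hB => ?_)
    have hgd := gball hA hAc hB hu
    exact hasDerivAt_qK c B u (lt_of_lt_of_le hd hgd)

lemma hasDerivAt_Mtil (c A : ℝ) (hA : 0 < A) (hAc : A < c^2) :
    HasDerivAt (fun B => ∫ u in (0:ℝ)..1, qM c B u) (∫ u in (0:ℝ)..1, qM' c A u) A := by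
  have hd : (0:ℝ) < (c^2-A)/2 := by linarith
  have heps : (0:ℝ) < min A (c^2 - A) / 2 := by
    have : 0 < min A (c^2-A) := lt_min hA (by linarith)
    linarith
  refine (intervalIntegral.hasDerivAt_integral_of_dominated_loc_of_deriv_le (Metric.ball_mem_nhds A heps)
    (F := fun B u => qM c B u) (F' := fun B u => qM' c B u)
    (bound := fun _ => 3/2 * (c^2 * (Real.sqrt ((c^2-A)/2))⁻¹) + 3*c^2/2 *
      ((Real.sqrt ((c^2-A)/2))⁻¹ + c^2 * (2*((c^2-A)/2) * Real.sqrt ((c^2-A)/2))⁻¹))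
    ?_ ?_ ?_ ?_ ?_ ?_).2
  · refine Filter.Eventually.of_forall (fun B => Measurable.aestronglyMeasurable ?_)
    unfold qM
    exact ((continuous_const.sub (continuous_const.mul (continuous_pow 2))).measurable).mul
      (qK_meas c B)
  · refine ContinuousOn.intervalIntegrable ?_
    unfold qM
    exact (continuousOn_const.sub (continuousOn_const.mul (continuousOn_pow 2))).mul
      (qK_contOn hA hAc)
  · exact (qM'_meas c A).aestronglyMeasurable
  · refine Filter.Eventually.of_forall (fun u hu B hB => ?_)
    obtain ⟨hB0, hBc, _⟩ := ball_facts hA hAc hB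
    obtain ⟨_, _, hu2, hu1⟩ := uIoc_facts hu
    have hgd := gball hA hAc hB hu
    have hqK := qK_bound hA hAc hB0 hBc.le hgd hu1
    have hqK' := qK'_bound hA hAc hB0 hBc.le hgd hu1 hu2
    have hqK0 : 0 ≤ qK c B u := qK_nonneg hB0.le
    have hqK'0 : 0 ≤ qK' c B u := qK'_nonneg hB0.le (le_trans hd.le hgd)
    unfold qM'
    have habs : |(-(1/2) - u^2) * qK c B u + ((c^2 - B)/2 - B*u^2) * qK' c B u|
        ≤ (1/2 + u^2) * qK c B u + |(c^2 - B)/2 - B*u^2| * qK' c B u := by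
      refine (abs_add_le _ _).trans ?_
      rw [abs_mul, abs_mul, abs_of_nonneg hqK0, abs_of_nonneg hqK'0]
      have : |(-(1/2) - u^2 : ℝ)| = 1/2 + u^2 := by
        rw [abs_of_nonpos (by nlinarith [sq_nonneg u])]; ring
      rw [this]
    rw [Real.norm_eq_abs]
    refine habs.trans ?_
    have h1 : (1/2 + u^2 : ℝ) ≤ 3/2 := by linarith
    have h2 : |(c^2 - B)/2 - B*u^2| ≤ 3*c^2/2 := by
      rw [abs_le]
      constructor <;> nlinarith
    have hb1 : (0:ℝ) ≤ c^2 * (Real.sqrt ((c^2-A)/2))⁻¹ := by positivity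
    have hb2 : (0:ℝ) ≤ (Real.sqrt ((c^2-A)/2))⁻¹
        + c^2 * (2*((c^2-A)/2) * Real.sqrt ((c^2-A)/2))⁻¹ := by positivity
    have t1 : (1/2 + u^2) * qK c B u ≤ 3/2 * (c^2 * (Real.sqrt ((c^2-A)/2))⁻¹) :=
      mul_le_mul h1 hqK hqK0 (by norm_num)
    have t2 : |(c^2 - B)/2 - B*u^2| * qK' c B u ≤ 3*c^2/2 *
        ((Real.sqrt ((c^2-A)/2))⁻¹ + c^2 * (2*((c^2-A)/2) * Real.sqrt ((c^2-A)/2))⁻¹) :=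
      mul_le_mul h2 hqK' hqK'0 (by positivity)
    linarith
  · exact intervalIntegrable_const
  · refine Filter.Eventually.of_forall (fun u hu B hB => ?_)
    have hgd := gball hA hAc hB hu
    exact hasDerivAt_qM c B u (lt_of_lt_of_le hd hgd)

lemma V_alg (c A m u x y : ℝ) (hu : 0 < u) (hu1 : u < 1) (hx : 0 < x) (hy : 0 < y)
    (hx2 : x^2 = 1-u^2) (hy2 : y^2 = c^2-A*u^2) :
    ((m - A*u^2) * (x * (y⁻¹ + A*u^2 * (2*(c^2-A*u^2)*y)⁻¹))
        + (-(1/2) - u^2) * (A * (x * y⁻¹))) - (m-A)/2 * (x*y)⁻¹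
      = (m - A*(3*u^2))/2 * (x * y⁻¹)
        + (m*u - A*u^3)/2 * ((1/(2*x) * (-(2*u))) * y⁻¹
            + x * (-(1/(2*y) * (-(A*(2*u)))) / y^2)) := by
  have h1u : (0:ℝ) < 1 - u^2 := by nlinarith
  have hxy : (x*y)⁻¹ = x * ((1-u^2) * y)⁻¹ := by
    rw [← hx2]; field_simp
  have hxinv : 1/(2*x) = x * (2*(1-u^2))⁻¹ := by
    rw [← hx2]; field_simp
  rw [hxy, hxinv, ← hy2]
  have hyn : y ≠ 0 := hy.ne'
  have hxn : x ≠ 0 := hx.ne'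
  field_simp
  ring

lemma ftc_key (c A m : ℝ) (hA : 0 < A) (hAc : A < c^2) :
    ∫ u in (0:ℝ)..1, ((m - A*u^2) * qK' c A u + (-(1/2) - u^2) * qK c A u)
      = (m - A)/2 * ∫ u in (0:ℝ)..1, wv c A u := by
  set V : ℝ → ℝ := fun u => (m*u - A*u^3)/2 * (Real.sqrt (1-u^2) * (Real.sqrt (c^2-A*u^2))⁻¹)
    with hV
  set D : ℝ → ℝ := fun u => ((m - A*u^2) * qK' c A u + (-(1/2) - u^2) * qK c A u)
    - (m-A)/2 * wv c A u with hD
  have hfirst : IntervalIntegrable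
      (fun u => (m - A*u^2) * qK' c A u + (-(1/2) - u^2) * qK c A u) volume 0 1 := by
    apply ContinuousOn.intervalIntegrable
    exact ((continuousOn_const.sub (continuousOn_const.mul (continuousOn_pow 2))).mul
      (qK'_contOn hA hAc)).add
      ((continuousOn_const.sub (continuousOn_pow 2)).mul (qK_contOn hA hAc))
  have hwvi := wv_int c A hA hAc
  have hDint : IntervalIntegrable D volume 0 1 := hfirst.sub (hwvi.const_mul _)
  have hVcont : ContinuousOn V (Set.Icc 0 1) := by
    rw [hV]
    refine (continuousOn_const.mul continuousOn_id |>.sub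
      (continuousOn_const.mul (continuousOn_pow 3))).div_const 2 |>.mul
      (((Real.continuous_sqrt.comp (by continuity)).continuousOn).mul
        (ContinuousOn.inv₀ ((Real.continuous_sqrt.comp (by continuity)).continuousOn)
          (fun u hu => ?_)))
    rw [← Set.uIcc_of_le (by norm_num : (0:ℝ) ≤ 1)] at hu
    exact (Real.sqrt_pos.2 (gpos hA hAc hu)).ne'
  have hVderiv : ∀ u ∈ Set.Ioo (0:ℝ) 1, HasDerivAt V (D u) u := by
    intro u hu
    obtain ⟨hu0, hu1⟩ := hu
    have h1u : (0:ℝ) < 1 - u^2 := by nlinarith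
    have hgp : (0:ℝ) < c^2 - A*u^2 := by nlinarith
    have hx : 0 < Real.sqrt (1-u^2) := Real.sqrt_pos.2 h1u
    have hy : 0 < Real.sqrt (c^2-A*u^2) := Real.sqrt_pos.2 hgp
    have hP : HasDerivAt (fun u : ℝ => (m*u - A*u^3)/2) ((m - A*(3*u^2))/2) u := by
      have := (((hasDerivAt_id u).const_mul m).sub ((hasDerivAt_pow 3 u).const_mul A)).div_const 2
      exact this.congr_deriv (by norm_num)
    have hs1 : HasDerivAt (fun u : ℝ => Real.sqrt (1-u^2)) (1/(2*Real.sqrt (1-u^2)) * (-(2*u))) u := by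
      refine (Real.hasDerivAt_sqrt h1u.ne').comp u ?_
      have := (hasDerivAt_const u (1:ℝ)).sub (hasDerivAt_pow 2 u)
      exact this.congr_deriv (by norm_num)
    have hs2inner : HasDerivAt (fun u : ℝ => c^2 - A*u^2) (-(A*(2*u))) u := by
      have := (hasDerivAt_const u (c^2)).sub ((hasDerivAt_pow 2 u).const_mul A)
      exact this.congr_deriv (by norm_num)
    have hs2 : HasDerivAt (fun u : ℝ => Real.sqrt (c^2-A*u^2))
        (1/(2*Real.sqrt (c^2-A*u^2)) * (-(A*(2*u)))) u :=
      (Real.hasDerivAt_sqrt hgp.ne').comp u hs2inner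
    have hs2i : HasDerivAt (fun u : ℝ => (Real.sqrt (c^2-A*u^2))⁻¹)
        (-(1/(2*Real.sqrt (c^2-A*u^2)) * (-(A*(2*u)))) / (Real.sqrt (c^2-A*u^2))^2) u :=
      hs2.inv hy.ne'
    have htot := hP.mul (hs1.mul hs2i)
    refine htot.congr_deriv ?_
    rw [hD]
    simp only [qK, qK', wv]
    rw [V_alg c A m u (Real.sqrt (1-u^2)) (Real.sqrt (c^2-A*u^2)) hu0 hu1 hx hy
      (Real.sq_sqrt h1u.le) (Real.sq_sqrt hgp.le)]
    rfl
  have hftc : ∫ u in (0:ℝ)..1, D u = V 1 - V 0 :=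
    intervalIntegral.integral_eq_sub_of_hasDeriv_right_of_le (by norm_num) hVcont
      (fun u hu => (hVderiv u hu).hasDerivWithinAt) hDint
  have hV0 : V 0 = 0 := by simp [hV]
  have hV1 : V 1 = 0 := by
    rw [hV]
    have : (1:ℝ) - 1^2 = 0 := by ring
    simp [this]
  rw [hV0, hV1, sub_zero] at hftc
  rw [hD] at hftc
  rw [intervalIntegral.integral_sub hfirst (hwvi.const_mul _),
    intervalIntegral.integral_const_mul] at hftc
  linarith

lemma cancel_aux {v x : ℝ} (hv : v ≠ 0) : v^2 * (v*x)⁻¹ = v * x⁻¹ := by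
  rw [mul_inv]
  have : v^2 * (v⁻¹ * x⁻¹) = (v * v⁻¹) * (v * x⁻¹) := by ring
  rw [this, mul_inv_cancel₀ hv, one_mul]

lemma subs_point (c b t : ℝ) (hb : 0 < b) {u : ℝ} (hu : u ∈ Set.uIcc (0:ℝ) 1) :
    b * ((t + (c^2 - b^2)/2 - (b*u)^2) * Real.sqrt ((b^2 - (b*u)^2)/(c^2 - (b*u)^2)))
      = t * qK c (b^2) u + qM c (b^2) u := by
  rw [Set.uIcc_of_le (by norm_num : (0:ℝ) ≤ 1)] at hu
  have h1 : b^2 - (b*u)^2 = b^2*(1-u^2) := by ring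
  have h2 : c^2 - (b*u)^2 = c^2 - b^2*u^2 := by ring
  have hu2 : u^2 ≤ 1 := by nlinarith [hu.1, hu.2]
  have h1n : (0:ℝ) ≤ b^2*(1-u^2) := mul_nonneg (sq_nonneg b) (by linarith)
  rw [h1, h2, Real.sqrt_div h1n, Real.sqrt_mul (sq_nonneg b), Real.sqrt_sq hb.le]
  unfold qM qK
  rw [div_eq_mul_inv]
  ring

lemma subs_wv (c b : ℝ) (hb : 0 < b) (hbc : b < c) {u : ℝ} (hu : u ∈ Set.uIcc (0:ℝ) 1) :
    b * (Real.sqrt ((c^2 - (b*u)^2) * (b^2 - (b*u)^2)))⁻¹ = wv c (b^2) u := by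
  rw [Set.uIcc_of_le (by norm_num : (0:ℝ) ≤ 1)] at hu
  have hu2 : u^2 ≤ 1 := by nlinarith [hu.1, hu.2]
  have hx : (0:ℝ) ≤ c^2 - b^2*u^2 := by nlinarith
  have h1 : b^2 - (b*u)^2 = b^2*(1-u^2) := by ring
  have h2 : c^2 - (b*u)^2 = c^2 - b^2*u^2 := by ring
  rw [h1, h2, Real.sqrt_mul hx, Real.sqrt_mul (sq_nonneg b), Real.sqrt_sq hb.le]
  unfold wv
  rw [mul_inv, mul_inv]
  have : b * ((Real.sqrt (c^2 - b^2*u^2))⁻¹ * (b⁻¹ * (Real.sqrt (1-u^2))⁻¹))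
      = (b * b⁻¹) * ((Real.sqrt (1-u^2))⁻¹ * (Real.sqrt (c^2 - b^2*u^2))⁻¹) := by ring
  rw [this, mul_inv_cancel₀ hb.ne', one_mul, ← mul_inv]

lemma scale_int (f : ℝ → ℝ) (b : ℝ) :
    (∫ s in (0:ℝ)..b, f s) = ∫ u in (0:ℝ)..1, b * f (b*u) := by
  have hs := intervalIntegral.smul_integral_comp_mul_left (a := 0) (b := 1) f b
  have h0 : b*(0:ℝ) = 0 := by ring
  have h1 : b*(1:ℝ) = b := by ring
  rw [h0, h1] at hs
  rw [← hs, smul_eq_mul, ← intervalIntegral.integral_const_mul]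

lemma subs_I1 (c b : ℝ) (hb : 0 < b) (hbc : b < c) :
    (∫ s in (0:ℝ)..b, (Real.sqrt ((c^2 - s^2) * (b^2 - s^2)))⁻¹)
      = ∫ u in (0:ℝ)..1, wv c (b^2) u := by
  rw [scale_int (fun s => (Real.sqrt ((c^2 - s^2) * (b^2 - s^2)))⁻¹) b]
  exact intervalIntegral.integral_congr (fun u hu => subs_wv c b hb hbc hu)

lemma subs_I2 (c b : ℝ) (hb : 0 < b) (hbc : b < c) :
    (∫ s in (0:ℝ)..b, s^2 * (Real.sqrt ((c^2 - s^2) * (b^2 - s^2)))⁻¹)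
      = ∫ u in (0:ℝ)..1, b^2*u^2 * wv c (b^2) u := by
  rw [scale_int (fun s => s^2 * (Real.sqrt ((c^2 - s^2) * (b^2 - s^2)))⁻¹) b]
  refine intervalIntegral.integral_congr (fun u hu => ?_)
  have hw := subs_wv c b hb hbc hu
  calc b * ((b*u)^2 * (Real.sqrt ((c^2 - (b*u)^2) * (b^2 - (b*u)^2)))⁻¹)
      = b^2*u^2 * (b * (Real.sqrt ((c^2 - (b*u)^2) * (b^2 - (b*u)^2)))⁻¹) := by ring
    _ = b^2*u^2 * wv c (b^2) u := by rw [hw]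

lemma subs_norm (c b t : ℝ) (hb : 0 < b) (hbc : b < c) :
    (∫ s in (0:ℝ)..b, (t + (c^2 - b^2)/2 - s^2) * Real.sqrt ((b^2 - s^2)/(c^2 - s^2)))
      = t * (∫ u in (0:ℝ)..1, qK c (b^2) u) + ∫ u in (0:ℝ)..1, qM c (b^2) u := by
  rw [scale_int (fun s => (t + (c^2 - b^2)/2 - s^2) * Real.sqrt ((b^2 - s^2)/(c^2 - s^2))) b]
  rw [intervalIntegral.integral_congr (g := fun u => t * qK c (b^2) u + qM c (b^2) u)
    (fun u hu => subs_point c b t hb hu)]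
  have hA : (0:ℝ) < b^2 := pow_pos hb 2
  have hAc : b^2 < c^2 := by nlinarith
  rw [intervalIntegral.integral_add (((qK_contOn hA hAc).intervalIntegrable).const_mul t)
    (by apply ContinuousOn.intervalIntegrable
        unfold qM
        exact (continuousOn_const.sub (continuousOn_const.mul (continuousOn_pow 2))).mul
          (qK_contOn hA hAc)),
    intervalIntegral.integral_const_mul]

lemma Ktil_eq (c A : ℝ) (hA : 0 < A) (hAc : A < c^2) :
    (∫ u in (0:ℝ)..1, qK c A u)
      = A * (∫ u in (0:ℝ)..1, wv c A u) - ∫ u in (0:ℝ)..1, A*u^2 * wv c A u := by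
  have hpt : Set.EqOn (fun u => qK c A u) (fun u => A * wv c A u - A*u^2 * wv c A u)
      (Set.uIcc 0 1) := by
    intro u hu
    rw [Set.uIcc_of_le (by norm_num : (0:ℝ) ≤ 1)] at hu
    have hge : (0:ℝ) ≤ 1 - u^2 := by nlinarith [hu.1, hu.2]
    simp only [qK, wv]
    rcases eq_or_lt_of_le hge with h | h
    · rw [← h, Real.sqrt_zero, zero_mul, zero_mul, inv_zero]
      have hu1 : u^2 = 1 := by linarith
      rw [hu1]
      ring
    · have hs1 : Real.sqrt (1-u^2) ≠ 0 := (Real.sqrt_pos.2 h).ne'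
      have : A * wv c A u - A*u^2 * wv c A u = A * (1-u^2) * wv c A u := by unfold wv; ring
      rw [show A * (Real.sqrt (1-u^2) * (Real.sqrt (c^2-A*u^2))⁻¹)
          = A * (Real.sqrt (1-u^2)^2 * (Real.sqrt (1-u^2) * Real.sqrt (c^2-A*u^2))⁻¹) from ?_]
      · rw [Real.sq_sqrt hge]
        ring
      · rw [cancel_aux hs1]
  rw [intervalIntegral.integral_congr hpt,
    intervalIntegral.integral_sub ((wv_int c A hA hAc).const_mul A) (u2wv_int c A hA hAc),
    intervalIntegral.integral_const_mul]



/-- formula (2.10) of Lemma 2.2,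
`∂G(λ,ξ)/∂ξ = (λ − h(ξ))/𝓡(λ,ξ)`, where `G(λ,ξ) = (λ − μ(ξ))·√((λ + a(ξ)²)/(λ(λ + c²)))`,
`μ(ξ) = −ξ − (c² − a(ξ)²)/2` and `h(ξ)` is the normalized first moment of the gap weight. -/
theorem dG_dxi_formula (c : ℝ) (hc : 0 < c) (a : ℝ → ℝ)
    (hrange : ∀ ξ ∈ Set.Ioo (-c ^ 2 / 2) (c ^ 2 / 3), 0 < a ξ ∧ a ξ < c)
    (hdiff : ∀ ξ ∈ Set.Ioo (-c ^ 2 / 2) (c ^ 2 / 3), DifferentiableAt ℝ a ξ)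
    (hnorm : ∀ ξ ∈ Set.Ioo (-c ^ 2 / 2) (c ^ 2 / 3),
      ∫ s in (0:ℝ)..(a ξ),
        (ξ + (c ^ 2 - (a ξ) ^ 2) / 2 - s ^ 2) *
          Real.sqrt (((a ξ) ^ 2 - s ^ 2) / (c ^ 2 - s ^ 2)) = 0) :
    ∀ l : ℝ, 0 < l → ∀ ξ ∈ Set.Ioo (-c ^ 2 / 2) (c ^ 2 / 3),
      deriv (fun t => (l - (-t - (c ^ 2 - (a t) ^ 2) / 2)) *
          Real.sqrt ((l + (a t) ^ 2) / (l * (l + c ^ 2)))) ξ =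
        (l - (-(∫ s in (0:ℝ)..(a ξ), s ^ 2 * (Real.sqrt ((c ^ 2 - s ^ 2) * ((a ξ) ^ 2 - s ^ 2)))⁻¹) /
              (∫ s in (0:ℝ)..(a ξ), (Real.sqrt ((c ^ 2 - s ^ 2) * ((a ξ) ^ 2 - s ^ 2)))⁻¹))) /
          Real.sqrt (l * (l + (a ξ) ^ 2) * (l + c ^ 2)) := by
  intro l hl ξ hξ
  obtain ⟨ha0, hac⟩ := hrange ξ hξ
  have hA : (0:ℝ) < (a ξ)^2 := pow_pos ha0 2
  have hAc : (a ξ)^2 < c^2 := by nlinarith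
  have hWv : 0 < ∫ u in (0:ℝ)..1, wv c ((a ξ)^2) u := wv_pos c ((a ξ)^2) hA hAc
  have hA' : HasDerivAt (fun t => (a t)^2) (deriv (fun t => (a t)^2) ξ) ξ :=
    ((hdiff ξ hξ).pow 2).hasDerivAt
  -- normalization in u-space vanishes on the interval
  have hQzero : ∀ t ∈ Set.Ioo (-c^2/2) (c^2/3),
      t * (∫ u in (0:ℝ)..1, qK c ((a t)^2) u) + (∫ u in (0:ℝ)..1, qM c ((a t)^2) u) = 0 := by
    intro t ht
    obtain ⟨hb0, hbc⟩ := hrange t ht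
    rw [← subs_norm c (a t) t hb0 hbc]
    exact hnorm t ht
  have hKd := (hasDerivAt_Ktil c ((a ξ)^2) hA hAc).comp ξ hA'
  have hMd := (hasDerivAt_Mtil c ((a ξ)^2) hA hAc).comp ξ hA'
  have hQd := ((hasDerivAt_id ξ).mul hKd).add hMd
  have h0 : HasDerivAt (fun t => t * (∫ u in (0:ℝ)..1, qK c ((a t)^2) u)
      + (∫ u in (0:ℝ)..1, qM c ((a t)^2) u)) 0 ξ :=
    (hasDerivAt_const ξ 0).congr_of_eventuallyEq
      (Filter.eventuallyEq_of_mem (isOpen_Ioo.mem_nhds hξ) hQzero)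
  have hval := hQd.unique h0
  simp only [Function.comp_apply, id_eq] at hval
  -- the mixed derivative via the FTC identity
  have hmix : ξ * (∫ u in (0:ℝ)..1, qK' c ((a ξ)^2) u) + (∫ u in (0:ℝ)..1, qM' c ((a ξ)^2) u)
      = ((ξ + (c^2 - (a ξ)^2)/2) - (a ξ)^2)/2 * ∫ u in (0:ℝ)..1, wv c ((a ξ)^2) u := by
    have hptw : Set.EqOn (fun u => ξ * qK' c ((a ξ)^2) u + qM' c ((a ξ)^2) u)
        (fun u => ((ξ + (c^2 - (a ξ)^2)/2) - (a ξ)^2*u^2) * qK' c ((a ξ)^2) u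
          + (-(1/2) - u^2) * qK c ((a ξ)^2) u) (Set.uIcc 0 1) := by
      intro u _
      simp only [qM']
      ring
    have hlin : ∫ u in (0:ℝ)..1, (ξ * qK' c ((a ξ)^2) u + qM' c ((a ξ)^2) u)
        = ξ * (∫ u in (0:ℝ)..1, qK' c ((a ξ)^2) u) + (∫ u in (0:ℝ)..1, qM' c ((a ξ)^2) u) := by
      rw [intervalIntegral.integral_add (((qK'_contOn hA hAc).intervalIntegrable).const_mul ξ)
        ((qM'_contOn hA hAc).intervalIntegrable), intervalIntegral.integral_const_mul]
    rw [← hlin, intervalIntegral.integral_congr hptw,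
      ftc_key c ((a ξ)^2) (ξ + (c^2 - (a ξ)^2)/2) hA hAc]
  have hKtil := Ktil_eq c ((a ξ)^2) hA hAc
  set A' := deriv (fun t => (a t)^2) ξ with hA'def
  have hcomb : (∫ u in (0:ℝ)..1, qK c ((a ξ)^2) u)
      + A' * (ξ * (∫ u in (0:ℝ)..1, qK' c ((a ξ)^2) u)
        + (∫ u in (0:ℝ)..1, qM' c ((a ξ)^2) u)) = 0 := by
    linear_combination hval
  rw [hmix, hKtil] at hcomb
  -- final derivative computation
  have hK0 : (0:ℝ) < l*(l+c^2) := by positivity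
  have hpos : (0:ℝ) < (l + (a ξ)^2)/(l*(l+c^2)) := by positivity
  have hfac1 : HasDerivAt (fun t => l - (-t - (c^2 - (a t)^2)/2)) (1 - A'/2) ξ := by
    have h := (hasDerivAt_const ξ l).sub (((hasDerivAt_id ξ).neg).sub
      (((hasDerivAt_const ξ (c^2)).sub hA').div_const 2))
    exact h.congr_deriv (by ring)
  have hinner : HasDerivAt (fun t => (l + (a t)^2)/(l*(l+c^2))) (A'/(l*(l+c^2))) ξ := by
    have h := ((hasDerivAt_const ξ l).add hA').div_const (l*(l+c^2))
    exact h.congr_deriv (by ring)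
  have hsq : HasDerivAt (fun t => Real.sqrt ((l + (a t)^2)/(l*(l+c^2))))
      (1/(2*Real.sqrt ((l + (a ξ)^2)/(l*(l+c^2)))) * (A'/(l*(l+c^2)))) ξ :=
    (Real.hasDerivAt_sqrt hpos.ne').comp ξ hinner
  have htot := hfac1.mul hsq
  rw [(show HasDerivAt (fun t => (l - (-t - (c ^ 2 - (a t) ^ 2) / 2)) *
    Real.sqrt ((l + (a t) ^ 2) / (l * (l + c ^ 2)))) _ ξ from htot).deriv]
  rw [subs_I1 c (a ξ) ha0 hac, subs_I2 c (a ξ) ha0 hac]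
  rw [Real.sqrt_div (by positivity : (0:ℝ) ≤ l + (a ξ)^2) (l*(l+c^2)),
      show l*(l+(a ξ)^2)*(l+c^2) = (l+(a ξ)^2)*(l*(l+c^2)) from by ring,
      Real.sqrt_mul (by positivity : (0:ℝ) ≤ l + (a ξ)^2)]
  have ht1 : 0 < Real.sqrt (l+(a ξ)^2) := Real.sqrt_pos.2 (by positivity)
  have ht2 : 0 < Real.sqrt (l*(l+c^2)) := Real.sqrt_pos.2 hK0
  have ht1sq : Real.sqrt (l+(a ξ)^2)^2 = l+(a ξ)^2 := Real.sq_sqrt (by positivity)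
  have ht2sq : Real.sqrt (l*(l+c^2))^2 = l*(l+c^2) := Real.sq_sqrt hK0.le
  have hAK : A'/(l*(l+c^2)) = A'/(Real.sqrt (l*(l+c^2)))^2 := by rw [ht2sq]
  rw [hAK]
  field_simp
  linear_combination
    4 * hcomb
    + (2*(2-A') * (∫ u in (0:ℝ)..1, wv c ((a ξ)^2) u)) * ht1sq
end

section
/- Let c > 0 and let a : (−c²/2, c²/3) → (0, c) be differentiable with ∫₀^{a(ξ)} (ξ + (c² − a(ξ)²)/2 − s²)·√((a(ξ)² − s²)/(c² − s²)) ds = 0 for every ξ in the interval. Define B(ξ) = 24·∫_{a(ξ)}^{c} (ξ + (c² − a(ξ)²)/2 − s²)·√((s² − a(ξ)²)/(c² − s²)) ds and h(ξ) = −(∫₀^{a(ξ)} s²·((c² − s²)(a(ξ)² − s²))^{−1/2} ds)/(∫₀^{a(ξ)} ((c² − s²)(a(ξ)² − s²))^{−1/2} ds). Then B is differentiable and for every ξ ∈ (−c²/2, c²/3), B′(ξ) = 24·∫_{a(ξ)}^{c} (s² + h(ξ)) · ((c² − s²)(s² − a(ξ)²))^{−1/2} ds. -/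
open Real MeasureTheory Set intervalIntegral

set_option linter.unusedSectionVars false
namespace PhaseDF
noncomputable def ss (c α θ : ℝ) : ℝ := α^2 + (c^2 - α^2) * Real.sin θ ^ 2
noncomputable def sr (c α θ : ℝ) : ℝ := Real.sqrt (ss c α θ)
noncomputable def tt (c α θ : ℝ) : ℝ := c^2 - α^2 * Real.sin θ ^ 2
noncomputable def tr (c α θ : ℝ) : ℝ := Real.sqrt (tt c α θ)

section basic
variable {c α : ℝ} (hα0 : 0 < α) (hαc : α < c)
include hα0 hαc

set_option linter.unusedSectionVars false in
lemma casq : α^2 < c^2 := by nlinarith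

lemma ss_ge (θ : ℝ) : α^2 ≤ ss c α θ := by
  have := casq hα0 hαc
  have : 0 ≤ (c^2 - α^2) * Real.sin θ ^ 2 := mul_nonneg (by nlinarith) (sq_nonneg _)
  simp only [ss]; linarith

lemma ss_le (θ : ℝ) : ss c α θ ≤ c^2 := by
  have h := Real.sin_sq_add_cos_sq θ
  have h2 : 0 ≤ (c^2 - α^2) * Real.cos θ ^ 2 := by
    exact mul_nonneg (by nlinarith [casq hα0 hαc]) (sq_nonneg _)
  simp only [ss]; nlinarith

lemma ss_pos (θ : ℝ) : 0 < ss c α θ := lt_of_lt_of_le (by positivity) (ss_ge hα0 hαc θ)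

lemma sr_pos (θ : ℝ) : 0 < sr c α θ := Real.sqrt_pos.2 (ss_pos hα0 hαc θ)

lemma sr_sq (θ : ℝ) : sr c α θ ^ 2 = ss c α θ := Real.sq_sqrt (ss_pos hα0 hαc θ).le

lemma sr_ge (θ : ℝ) : α ≤ sr c α θ := by
  have := Real.sqrt_le_sqrt (ss_ge hα0 hαc θ)
  rwa [Real.sqrt_sq hα0.le] at this

lemma sr_le (θ : ℝ) : sr c α θ ≤ c := by
  have := Real.sqrt_le_sqrt (ss_le hα0 hαc θ)
  rwa [Real.sqrt_sq (hα0.trans hαc).le] at this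

lemma tt_ge (θ : ℝ) : c^2 - α^2 ≤ tt c α θ := by
  have h : α^2 * Real.sin θ ^ 2 ≤ α^2 := by nlinarith [Real.sin_sq_le_one θ, sq_nonneg α]
  simp only [tt]; linarith

lemma tt_pos (θ : ℝ) : 0 < tt c α θ :=
  lt_of_lt_of_le (by have := casq hα0 hαc; linarith) (tt_ge hα0 hαc θ)

lemma tr_pos (θ : ℝ) : 0 < tr c α θ := Real.sqrt_pos.2 (tt_pos hα0 hαc θ)

lemma tr_sq (θ : ℝ) : tr c α θ ^ 2 = tt c α θ := Real.sq_sqrt (tt_pos hα0 hαc θ).le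

lemma tr_le (θ : ℝ) : tr c α θ ≤ c := by
  have h : tt c α θ ≤ c^2 := by
    have : 0 ≤ α^2 * Real.sin θ ^ 2 := by positivity
    simp only [tt]; linarith
  have := Real.sqrt_le_sqrt h
  rwa [Real.sqrt_sq (hα0.trans hαc).le] at this

lemma tr_ge (θ : ℝ) : Real.sqrt (c^2 - α^2) ≤ tr c α θ := Real.sqrt_le_sqrt (tt_ge hα0 hαc θ)

end basic


section subst
variable {c α : ℝ} (hα0 : 0 < α) (hαc : α < c)

include hα0 hαc

lemma cont_sr : Continuous (sr c α) := by
  apply Real.continuous_sqrt.comp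
  unfold ss; fun_prop

lemma sr_zero : sr c α 0 = α := by
  simp [sr, ss, Real.sqrt_sq hα0.le]

lemma sr_pi2 : sr c α (π/2) = c := by
  simp [sr, ss, Real.sqrt_sq (hα0.trans hαc).le]

lemma sr_strict : StrictMonoOn (sr c α) (Icc 0 (π/2)) := by
  intro x hx y hy hxy
  have hsx : Real.sin x < Real.sin y :=
    strictMonoOn_sin ⟨by linarith [hx.1, pi_pos], hx.2⟩ ⟨by linarith [hy.1, pi_pos], hy.2⟩ hxy
  have h0x : 0 ≤ Real.sin x := Real.sin_nonneg_of_nonneg_of_le_pi hx.1 (by linarith [hx.2, pi_pos])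
  have hss : ss c α x < ss c α y := by
    have : Real.sin x ^ 2 < Real.sin y ^ 2 := by nlinarith
    have hca : 0 < c^2 - α^2 := by nlinarith
    unfold ss; nlinarith
  exact Real.sqrt_lt_sqrt (ss_pos hα0 hαc x).le hss

lemma band_image : sr c α '' Ioo 0 (π/2) = Ioo α c := by
  apply Subset.antisymm
  · rintro _ ⟨θ, hθ, rfl⟩
    constructor
    · have h := sr_strict hα0 hαc (Set.left_mem_Icc.2 (by linarith [pi_pos]))
        ⟨hθ.1.le, hθ.2.le⟩ hθ.1
      rwa [sr_zero hα0 hαc] at h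
    · have h := sr_strict hα0 hαc ⟨hθ.1.le, hθ.2.le⟩
        (Set.right_mem_Icc.2 (by linarith [pi_pos])) hθ.2
      rwa [sr_pi2 hα0 hαc] at h
  · have := intermediate_value_Ioo (le_of_lt (by linarith [pi_pos] : (0:ℝ) < π/2))
      ((cont_sr hα0 hαc).continuousOn (s := Icc 0 (π/2)))
    rwa [sr_zero hα0 hαc, sr_pi2 hα0 hαc] at this

lemma band_inj : InjOn (sr c α) (Ioo 0 (π/2)) :=
  ((sr_strict hα0 hαc).mono Ioo_subset_Icc_self).injOn

lemma band_deriv (θ : ℝ) :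
    HasDerivAt (sr c α) ((c^2-α^2)*(Real.sin θ*Real.cos θ)/sr c α θ) θ := by
  have h1 : HasDerivAt (fun θ => ss c α θ) ((c^2-α^2)*(2*Real.sin θ*Real.cos θ)) θ := by
    unfold ss
    have := ((Real.hasDerivAt_sin θ).pow 2).const_mul (c^2-α^2)
    simpa [mul_comm, mul_assoc, mul_left_comm] using (this.const_add (α^2))
  have h2 := (Real.hasDerivAt_sqrt (ne_of_gt (ss_pos hα0 hαc θ))).comp θ h1
  refine h2.congr_deriv (Eq.symm ?_)
  unfold sr
  field_simp

lemma band_subst (g : ℝ → ℝ) :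
    ∫ s in α..c, g s
      = ∫ θ in (0:ℝ)..(π/2), ((c^2-α^2)*(Real.sin θ*Real.cos θ)/sr c α θ) * g (sr c α θ) := by
  rw [integral_of_le hαc.le, integral_of_le (by linarith [pi_pos] : (0:ℝ) ≤ π/2),
    MeasureTheory.integral_Ioc_eq_integral_Ioo, MeasureTheory.integral_Ioc_eq_integral_Ioo,
    ← band_image hα0 hαc,
    integral_image_eq_integral_abs_deriv_smul measurableSet_Ioo
      (fun θ _ => (band_deriv hα0 hαc θ).hasDerivWithinAt) (band_inj hα0 hαc) g]
  apply setIntegral_congr_fun measurableSet_Ioo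
  intro θ hθ
  have hs : 0 < Real.sin θ := Real.sin_pos_of_pos_of_lt_pi hθ.1 (by linarith [hθ.2, pi_pos])
  have hcs : 0 < Real.cos θ := Real.cos_pos_of_mem_Ioo ⟨by linarith [hθ.1, pi_pos], hθ.2⟩
  have hca : 0 < c^2 - α^2 := by nlinarith
  have h0 : 0 ≤ (c^2-α^2)*(Real.sin θ*Real.cos θ)/sr c α θ :=
    div_nonneg (mul_nonneg hca.le (mul_nonneg hs.le hcs.le)) (sr_pos hα0 hαc θ).le
  dsimp only
  rw [abs_of_nonneg h0, smul_eq_mul]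
end subst

section subst2
variable {c α : ℝ} (hα0 : 0 < α) (hαc : α < c)

lemma pi2_nonneg : (0:ℝ) ≤ π/2 := by linarith [pi_pos]

lemma itg_congr_Ioo {f g : ℝ → ℝ} (h : ∀ θ ∈ Ioo (0:ℝ) (π/2), f θ = g θ) :
    ∫ θ in (0:ℝ)..(π/2), f θ = ∫ θ in (0:ℝ)..(π/2), g θ := by
  rw [integral_of_le pi2_nonneg, integral_of_le pi2_nonneg,
    MeasureTheory.integral_Ioc_eq_integral_Ioo, MeasureTheory.integral_Ioc_eq_integral_Ioo]
  exact setIntegral_congr_fun measurableSet_Ioo h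

include hα0 hαc

lemma gap_image : (fun θ => α * Real.sin θ) '' Ioo 0 (π/2) = Ioo 0 α := by
  apply Subset.antisymm
  · rintro _ ⟨θ, hθ, rfl⟩
    have hs : 0 < Real.sin θ := Real.sin_pos_of_pos_of_lt_pi hθ.1 (by linarith [hθ.2, pi_pos])
    have hs1 : Real.sin θ < 1 := by
      have := Real.sin_lt_sin_of_lt_of_le_pi_div_two (x := θ) (y := π/2)
        (by linarith [hθ.1, pi_pos]) le_rfl hθ.2
      simpa using this
    exact ⟨by dsimp only; positivity, by dsimp only; nlinarith⟩
  · have hc : ContinuousOn (fun θ => α * Real.sin θ) (Icc 0 (π/2)) := by fun_prop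
    have := intermediate_value_Ioo pi2_nonneg hc
    simpa using this

lemma gap_inj : InjOn (fun θ => α * Real.sin θ) (Ioo 0 (π/2)) := by
  intro x hx y hy hxy
  have : Real.sin x = Real.sin y := by
    exact mul_left_cancel₀ (ne_of_gt hα0) hxy
  exact Real.injOn_sin ⟨by linarith [hx.1, pi_pos], hx.2.le⟩
    ⟨by linarith [hy.1, pi_pos], hy.2.le⟩ this

lemma gap_subst (g : ℝ → ℝ) :
    ∫ s in (0:ℝ)..α, g s
      = ∫ θ in (0:ℝ)..(π/2), (α * Real.cos θ) * g (α * Real.sin θ) := by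
  rw [integral_of_le hα0.le, integral_of_le pi2_nonneg,
    MeasureTheory.integral_Ioc_eq_integral_Ioo, MeasureTheory.integral_Ioc_eq_integral_Ioo,
    ← gap_image hα0 hαc,
    integral_image_eq_integral_abs_deriv_smul measurableSet_Ioo
      (fun θ _ => ((Real.hasDerivAt_sin θ).const_mul α).hasDerivWithinAt)
      (gap_inj hα0 hαc) g]
  apply setIntegral_congr_fun measurableSet_Ioo
  intro θ hθ
  have hcs : 0 < Real.cos θ := Real.cos_pos_of_mem_Ioo ⟨by linarith [hθ.1, pi_pos], hθ.2⟩
  dsimp only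
  rw [abs_of_nonneg (mul_nonneg hα0.le hcs.le), smul_eq_mul]

end subst2

noncomputable def uu (c α θ : ℝ) : ℝ := (c^2 - α^2) * Real.sin θ^2 / sr c α θ
noncomputable def vv (c α θ : ℝ) : ℝ :=
  ((c^2-α^2)/2 - ss c α θ) * ((c^2-α^2) * Real.sin θ^2) / sr c α θ
noncomputable def pp (c α θ : ℝ) : ℝ := α^2 * Real.cos θ^2 / tr c α θ
noncomputable def ww (c α θ : ℝ) : ℝ :=
  ((c^2-α^2)/2 - α^2*Real.sin θ^2) * (α^2 * Real.cos θ^2) / tr c α θ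

section conv
variable {c α : ℝ} (hα0 : 0 < α) (hαc : α < c)
include hα0 hαc

lemma key_facts {θ : ℝ} (hθ : θ ∈ Ioo (0:ℝ) (π/2)) :
    0 < Real.sin θ ∧ 0 < Real.cos θ ∧ c^2 - ss c α θ = (c^2-α^2)*Real.cos θ^2 ∧
      ss c α θ - α^2 = (c^2-α^2)*Real.sin θ^2 := by
  have hs : 0 < Real.sin θ := Real.sin_pos_of_pos_of_lt_pi hθ.1 (by linarith [hθ.2, pi_pos])
  have hcs : 0 < Real.cos θ := Real.cos_pos_of_mem_Ioo ⟨by linarith [hθ.1, pi_pos], hθ.2⟩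
  have hp := Real.sin_sq_add_cos_sq θ
  refine ⟨hs, hcs, ?_, by unfold ss; ring⟩
  unfold ss; linear_combination (-(c^2-α^2)) * hp

lemma conv_band1 (x : ℝ) :
    ∫ s in α..c, (x + (c^2-α^2)/2 - s^2) * Real.sqrt ((s^2-α^2)/(c^2-s^2))
      = ∫ θ in (0:ℝ)..(π/2), (x * uu c α θ + vv c α θ) := by
  rw [band_subst hα0 hαc]
  apply itg_congr_Ioo
  intro θ hθ
  obtain ⟨hs, hcs, h2, h3⟩ := key_facts hα0 hαc (θ := θ) hθ
  have hca : (0:ℝ) < c^2 - α^2 := by nlinarith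
  have hsr := sr_pos hα0 hαc θ
  have hsq := sr_sq hα0 hαc θ
  have harg : (sr c α θ^2 - α^2)/(c^2 - sr c α θ^2) = (Real.sin θ/Real.cos θ)^2 := by
    rw [hsq, h2, h3, div_pow, mul_div_mul_left _ _ (ne_of_gt hca)]
  rw [harg, Real.sqrt_sq (by positivity)]
  unfold uu vv
  rw [hsq]
  field_simp
  ring

lemma conv_band2 (h : ℝ) :
    ∫ s in α..c, (s^2 + h) * (Real.sqrt ((c^2-s^2)*(s^2-α^2)))⁻¹
      = ∫ θ in (0:ℝ)..(π/2), (ss c α θ + h)/sr c α θ := by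
  rw [band_subst hα0 hαc]
  apply itg_congr_Ioo
  intro θ hθ
  obtain ⟨hs, hcs, h2, h3⟩ := key_facts hα0 hαc (θ := θ) hθ
  have hca : (0:ℝ) < c^2 - α^2 := by nlinarith
  have hsr := sr_pos hα0 hαc θ
  have hsq := sr_sq hα0 hαc θ
  have harg : (c^2 - sr c α θ^2)*(sr c α θ^2 - α^2)
      = ((c^2-α^2)*(Real.sin θ*Real.cos θ))^2 := by
    rw [hsq, h2, h3]; ring
  rw [harg, Real.sqrt_sq (by positivity)]
  rw [hsq]
  field_simp

lemma conv_gap1 (x : ℝ) :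
    ∫ s in (0:ℝ)..α, (x + (c^2-α^2)/2 - s^2) * Real.sqrt ((α^2-s^2)/(c^2-s^2))
      = ∫ θ in (0:ℝ)..(π/2), (x * pp c α θ + ww c α θ) := by
  rw [gap_subst hα0 hαc]
  apply itg_congr_Ioo
  intro θ hθ
  obtain ⟨hs, hcs, _, _⟩ := key_facts hα0 hαc (θ := θ) hθ
  have hp := Real.sin_sq_add_cos_sq θ
  have htt := tt_pos hα0 hαc θ
  have htr := tr_pos hα0 hαc θ
  have htsq := tr_sq hα0 hαc θ
  have h2 : α^2 - (α*Real.sin θ)^2 = α^2 * Real.cos θ^2 := by linear_combination (-(α^2)) * hp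
  have h3 : c^2 - (α*Real.sin θ)^2 = tt c α θ := by unfold tt; ring
  have harg : (α^2-(α*Real.sin θ)^2)/(c^2-(α*Real.sin θ)^2)
      = (α * Real.cos θ / tr c α θ)^2 := by
    rw [h2, h3, div_pow, mul_pow, htsq]
  rw [harg, Real.sqrt_sq (by positivity)]
  unfold pp ww
  have h4 : (α*Real.sin θ)^2 = α^2*Real.sin θ^2 := by ring
  have : tr c α θ ≠ 0 := ne_of_gt htr
  field_simp
  ring

lemma conv_gap2 :
    ∫ s in (0:ℝ)..α, s^2 * (Real.sqrt ((c^2-s^2)*(α^2-s^2)))⁻¹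
      = ∫ θ in (0:ℝ)..(π/2), α^2 * Real.sin θ^2 / tr c α θ := by
  rw [gap_subst hα0 hαc]
  apply itg_congr_Ioo
  intro θ hθ
  obtain ⟨hs, hcs, _, _⟩ := key_facts hα0 hαc (θ := θ) hθ
  have hp := Real.sin_sq_add_cos_sq θ
  have htt := tt_pos hα0 hαc θ
  have htr := tr_pos hα0 hαc θ
  have htsq := tr_sq hα0 hαc θ
  have h2 : α^2 - (α*Real.sin θ)^2 = (α * Real.cos θ)^2 := by linear_combination (-(α^2)) * hp
  have h3 : c^2 - (α*Real.sin θ)^2 = tt c α θ := by unfold tt; ring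
  have harg : (c^2-(α*Real.sin θ)^2)*(α^2-(α*Real.sin θ)^2)
      = (tr c α θ * (α * Real.cos θ))^2 := by
    have hh : (tr c α θ * (α * Real.cos θ))^2 = tt c α θ * (α^2 * Real.cos θ^2) := by
      rw [mul_pow, htsq]; ring
    rw [h2, h3, hh]; ring
  rw [harg, Real.sqrt_sq (by positivity)]
  field_simp

lemma conv_gap3 :
    ∫ s in (0:ℝ)..α, (Real.sqrt ((c^2-s^2)*(α^2-s^2)))⁻¹
      = ∫ θ in (0:ℝ)..(π/2), (tr c α θ)⁻¹ := by
  rw [gap_subst hα0 hαc]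
  apply itg_congr_Ioo
  intro θ hθ
  obtain ⟨hs, hcs, _, _⟩ := key_facts hα0 hαc (θ := θ) hθ
  have hp := Real.sin_sq_add_cos_sq θ
  have htt := tt_pos hα0 hαc θ
  have htr := tr_pos hα0 hαc θ
  have htsq := tr_sq hα0 hαc θ
  have h2 : α^2 - (α*Real.sin θ)^2 = (α * Real.cos θ)^2 := by linear_combination (-(α^2)) * hp
  have h3 : c^2 - (α*Real.sin θ)^2 = tt c α θ := by unfold tt; ring
  have harg : (c^2-(α*Real.sin θ)^2)*(α^2-(α*Real.sin θ)^2)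
      = (tr c α θ * (α * Real.cos θ))^2 := by
    have hh : (tr c α θ * (α * Real.cos θ))^2 = tt c α θ * (α^2 * Real.cos θ^2) := by
      rw [mul_pow, htsq]; ring
    rw [h2, h3, hh]; ring
  rw [harg, Real.sqrt_sq (by positivity)]
  field_simp

end conv

noncomputable def uA (c α θ : ℝ) : ℝ :=
  (-(2*α)*Real.sin θ^2 * sr c α θ
    - (c^2-α^2)*Real.sin θ^2 * (α*Real.cos θ^2/sr c α θ)) / sr c α θ^2
noncomputable def vA (c α θ : ℝ) : ℝ :=
  (((-α - 2*α*Real.cos θ^2) * ((c^2-α^2)*Real.sin θ^2)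
      + ((c^2-α^2)/2 - ss c α θ) * (-(2*α)*Real.sin θ^2)) * sr c α θ
    - ((c^2-α^2)/2 - ss c α θ) * ((c^2-α^2)*Real.sin θ^2) * (α*Real.cos θ^2/sr c α θ))
    / sr c α θ^2
noncomputable def pA (c α θ : ℝ) : ℝ :=
  (2*α*Real.cos θ^2 * tr c α θ
    - α^2*Real.cos θ^2 * (-(α*Real.sin θ^2)/tr c α θ)) / tr c α θ^2
noncomputable def wA (c α θ : ℝ) : ℝ :=
  (((-α - 2*α*Real.sin θ^2) * (α^2*Real.cos θ^2)
      + ((c^2-α^2)/2 - α^2*Real.sin θ^2) * (2*α*Real.cos θ^2)) * tr c α θ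
    - ((c^2-α^2)/2 - α^2*Real.sin θ^2) * (α^2*Real.cos θ^2) * (-(α*Real.sin θ^2)/tr c α θ))
    / tr c α θ^2

section aderiv
variable {c : ℝ}

lemma hasDerivAt_sq' (α : ℝ) : HasDerivAt (fun α : ℝ => α^2) (2*α) α := by
  simpa using hasDerivAt_pow 2 α

lemma hasDerivAt_ss (θ α : ℝ) :
    HasDerivAt (fun α => ss c α θ) (2*α*Real.cos θ^2) α := by
  have h1 := hasDerivAt_sq' α
  have h2 : HasDerivAt (fun α : ℝ => (c^2-α^2)*Real.sin θ^2) (-(2*α)*Real.sin θ^2) α := by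
    have := (h1.const_sub (c^2)).mul_const (Real.sin θ^2)
    simpa using this
  have h := h1.add h2
  have hp := Real.sin_sq_add_cos_sq θ
  refine h.congr_deriv (Eq.symm ?_)
  linear_combination (2*α) * hp

lemma hasDerivAt_tt (θ α : ℝ) :
    HasDerivAt (fun α => tt c α θ) (-(2*α)*Real.sin θ^2) α := by
  have h2 : HasDerivAt (fun α : ℝ => α^2*Real.sin θ^2) (2*α*Real.sin θ^2) α :=
    (hasDerivAt_sq' α).mul_const _
  have := h2.const_sub (c^2)
  refine this.congr_deriv (Eq.symm ?_)
  ring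

variable {α : ℝ} (hα0 : 0 < α) (hαc : α < c)
include hα0 hαc

lemma hasDerivAt_sr (θ : ℝ) :
    HasDerivAt (fun α => sr c α θ) (α*Real.cos θ^2/sr c α θ) α := by
  have h := (Real.hasDerivAt_sqrt (ne_of_gt (ss_pos hα0 hαc θ))).comp α (hasDerivAt_ss θ α)
  have : (fun α => sr c α θ) = Real.sqrt ∘ (fun α => ss c α θ) := rfl
  rw [this]
  refine h.congr_deriv (Eq.symm ?_)
  unfold sr
  field_simp

lemma hasDerivAt_tr (θ : ℝ) :
    HasDerivAt (fun α => tr c α θ) (-(α*Real.sin θ^2)/tr c α θ) α := by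
  have h := (Real.hasDerivAt_sqrt (ne_of_gt (tt_pos hα0 hαc θ))).comp α (hasDerivAt_tt θ α)
  have : (fun α => tr c α θ) = Real.sqrt ∘ (fun α => tt c α θ) := rfl
  rw [this]
  refine h.congr_deriv (Eq.symm ?_)
  unfold tr
  field_simp

lemma hasDerivAt_uu (θ : ℝ) :
    HasDerivAt (fun α => uu c α θ) (uA c α θ) α := by
  have hnum : HasDerivAt (fun α : ℝ => (c^2-α^2)*Real.sin θ^2) (-(2*α)*Real.sin θ^2) α := by
    have := ((hasDerivAt_sq' α).const_sub (c^2)).mul_const (Real.sin θ^2)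
    simpa using this
  exact hnum.div (hasDerivAt_sr hα0 hαc θ) (ne_of_gt (sr_pos hα0 hαc θ))

lemma hasDerivAt_vv (θ : ℝ) :
    HasDerivAt (fun α => vv c α θ) (vA c α θ) α := by
  have hnum2 : HasDerivAt (fun α : ℝ => (c^2-α^2)*Real.sin θ^2) (-(2*α)*Real.sin θ^2) α := by
    have := ((hasDerivAt_sq' α).const_sub (c^2)).mul_const (Real.sin θ^2)
    simpa using this
  have hnum1 : HasDerivAt (fun α => (c^2-α^2)/2 - ss c α θ) (-α - 2*α*Real.cos θ^2) α := by
    have h1 : HasDerivAt (fun α : ℝ => (c^2-α^2)/2) (-(2*α)/2) α := by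
      have := ((hasDerivAt_sq' α).const_sub (c^2)).div_const 2
      simpa using this
    have := h1.sub (hasDerivAt_ss (c := c) θ α)
    refine this.congr_deriv (Eq.symm ?_)
    ring
  exact (hnum1.mul hnum2).div (hasDerivAt_sr hα0 hαc θ) (ne_of_gt (sr_pos hα0 hαc θ))

lemma hasDerivAt_pp (θ : ℝ) :
    HasDerivAt (fun α => pp c α θ) (pA c α θ) α := by
  have hnum : HasDerivAt (fun α : ℝ => α^2*Real.cos θ^2) (2*α*Real.cos θ^2) α :=
    (hasDerivAt_sq' α).mul_const _
  exact hnum.div (hasDerivAt_tr hα0 hαc θ) (ne_of_gt (tr_pos hα0 hαc θ))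

lemma hasDerivAt_ww (θ : ℝ) :
    HasDerivAt (fun α => ww c α θ) (wA c α θ) α := by
  have hnum2 : HasDerivAt (fun α : ℝ => α^2*Real.cos θ^2) (2*α*Real.cos θ^2) α :=
    (hasDerivAt_sq' α).mul_const _
  have hnum1 : HasDerivAt (fun α => (c^2-α^2)/2 - α^2*Real.sin θ^2) (-α - 2*α*Real.sin θ^2) α := by
    have h1 : HasDerivAt (fun α : ℝ => (c^2-α^2)/2) (-(2*α)/2) α := by
      have := ((hasDerivAt_sq' α).const_sub (c^2)).div_const 2
      simpa using this
    have := h1.sub ((hasDerivAt_sq' α).mul_const (Real.sin θ^2))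
    refine this.congr_deriv (Eq.symm ?_)
    ring
  exact (hnum1.mul hnum2).div (hasDerivAt_tr hα0 hαc θ) (ne_of_gt (tr_pos hα0 hαc θ))

end aderiv

section contjoint
variable {c : ℝ}

lemma cont2_ss : Continuous (fun q : ℝ×ℝ => ss c q.1 q.2) := by unfold ss; fun_prop
lemma cont2_sr : Continuous (fun q : ℝ×ℝ => sr c q.1 q.2) := Real.continuous_sqrt.comp cont2_ss
lemma cont2_tt : Continuous (fun q : ℝ×ℝ => tt c q.1 q.2) := by unfold tt; fun_prop
lemma cont2_tr : Continuous (fun q : ℝ×ℝ => tr c q.1 q.2) := Real.continuous_sqrt.comp cont2_tt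

lemma sr_ne_S : ∀ q ∈ (Ioo (0:ℝ) c ×ˢ (univ : Set ℝ)), sr c q.1 q.2 ≠ 0 :=
  fun q hq => ne_of_gt (sr_pos hq.1.1 hq.1.2 _)
lemma ss_ne_S : ∀ q ∈ (Ioo (0:ℝ) c ×ˢ (univ : Set ℝ)), ss c q.1 q.2 ≠ 0 :=
  fun q hq => ne_of_gt (ss_pos hq.1.1 hq.1.2 _)
lemma tr_ne_S : ∀ q ∈ (Ioo (0:ℝ) c ×ˢ (univ : Set ℝ)), tr c q.1 q.2 ≠ 0 :=
  fun q hq => ne_of_gt (tr_pos hq.1.1 hq.1.2 _)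
lemma sr2_ne_S : ∀ q ∈ (Ioo (0:ℝ) c ×ˢ (univ : Set ℝ)), sr c q.1 q.2 ^ 2 ≠ 0 :=
  fun q hq => pow_ne_zero _ (sr_ne_S q hq)
lemma tr2_ne_S : ∀ q ∈ (Ioo (0:ℝ) c ×ˢ (univ : Set ℝ)), tr c q.1 q.2 ^ 2 ≠ 0 :=
  fun q hq => pow_ne_zero _ (tr_ne_S q hq)

lemma cont2_uu : ContinuousOn (fun q : ℝ×ℝ => uu c q.1 q.2) (Ioo (0:ℝ) c ×ˢ univ) := by
  unfold uu
  exact ContinuousOn.div (by fun_prop) cont2_sr.continuousOn sr_ne_S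

lemma cont2_vv : ContinuousOn (fun q : ℝ×ℝ => vv c q.1 q.2) (Ioo (0:ℝ) c ×ˢ univ) := by
  unfold vv
  apply ContinuousOn.div _ cont2_sr.continuousOn sr_ne_S
  exact ((((continuous_const.sub (continuous_fst.pow 2)).div_const 2).sub cont2_ss).mul
    (by fun_prop : Continuous fun q : ℝ×ℝ => (c^2-q.1^2)*Real.sin q.2^2)).continuousOn

lemma cont2_pp : ContinuousOn (fun q : ℝ×ℝ => pp c q.1 q.2) (Ioo (0:ℝ) c ×ˢ univ) := by
  unfold pp
  exact ContinuousOn.div (by fun_prop) cont2_tr.continuousOn tr_ne_S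

lemma cont2_ww : ContinuousOn (fun q : ℝ×ℝ => ww c q.1 q.2) (Ioo (0:ℝ) c ×ˢ univ) := by
  unfold ww
  exact ContinuousOn.div (by fun_prop) cont2_tr.continuousOn tr_ne_S

lemma cont2_uA : ContinuousOn (fun q : ℝ×ℝ => uA c q.1 q.2) (Ioo (0:ℝ) c ×ˢ univ) := by
  unfold uA
  apply ContinuousOn.div _ (cont2_sr.pow 2).continuousOn sr2_ne_S
  apply ContinuousOn.sub
  · exact ((by fun_prop : Continuous (fun q : ℝ×ℝ => -(2*q.1)*Real.sin q.2^2)).continuousOn).mul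
      cont2_sr.continuousOn
  · exact (by fun_prop : Continuous (fun q : ℝ×ℝ => (c^2-q.1^2)*Real.sin q.2^2)).continuousOn.mul
      (ContinuousOn.div (by fun_prop) cont2_sr.continuousOn sr_ne_S)

lemma cont2_vA : ContinuousOn (fun q : ℝ×ℝ => vA c q.1 q.2) (Ioo (0:ℝ) c ×ˢ univ) := by
  unfold vA
  apply ContinuousOn.div _ (cont2_sr.pow 2).continuousOn sr2_ne_S
  apply ContinuousOn.sub
  · apply ContinuousOn.mul _ cont2_sr.continuousOn
    apply ContinuousOn.add
    · exact (by fun_prop : Continuous (fun q : ℝ×ℝ =>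
        (-q.1 - 2*q.1*Real.cos q.2^2) * ((c^2-q.1^2)*Real.sin q.2^2))).continuousOn
    · exact (((continuous_const.sub (continuous_fst.pow 2)).div_const 2).sub
        cont2_ss).continuousOn.mul (by fun_prop)
  · apply ContinuousOn.mul
    · exact ((((continuous_const.sub (continuous_fst.pow 2)).div_const 2).sub
        cont2_ss).continuousOn.mul (by fun_prop))
    · exact ContinuousOn.div (by fun_prop) cont2_sr.continuousOn sr_ne_S

lemma cont2_pA : ContinuousOn (fun q : ℝ×ℝ => pA c q.1 q.2) (Ioo (0:ℝ) c ×ˢ univ) := by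
  unfold pA
  apply ContinuousOn.div _ (cont2_tr.pow 2).continuousOn tr2_ne_S
  apply ContinuousOn.sub
  · exact (by fun_prop : Continuous (fun q : ℝ×ℝ => 2*q.1*Real.cos q.2^2)).continuousOn.mul
      cont2_tr.continuousOn
  · exact (by fun_prop : Continuous (fun q : ℝ×ℝ => q.1^2*Real.cos q.2^2)).continuousOn.mul
      (ContinuousOn.div (by fun_prop) cont2_tr.continuousOn tr_ne_S)

lemma cont2_wA : ContinuousOn (fun q : ℝ×ℝ => wA c q.1 q.2) (Ioo (0:ℝ) c ×ˢ univ) := by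
  unfold wA
  apply ContinuousOn.div _ (cont2_tr.pow 2).continuousOn tr2_ne_S
  apply ContinuousOn.sub
  · exact (by fun_prop : Continuous (fun q : ℝ×ℝ =>
      (-q.1 - 2*q.1*Real.sin q.2^2) * (q.1^2*Real.cos q.2^2)
        + ((c^2-q.1^2)/2 - q.1^2*Real.sin q.2^2) * (2*q.1*Real.cos q.2^2))).continuousOn.mul
      cont2_tr.continuousOn
  · exact (by fun_prop : Continuous (fun q : ℝ×ℝ =>
      ((c^2-q.1^2)/2 - q.1^2*Real.sin q.2^2) * (q.1^2*Real.cos q.2^2))).continuousOn.mul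
      (ContinuousOn.div (by fun_prop) cont2_tr.continuousOn tr_ne_S)

end contjoint

section param

lemma param_hasDerivAt {c : ℝ} (f f' : ℝ → ℝ → ℝ) {α₀ : ℝ} (hα : α₀ ∈ Ioo (0:ℝ) c)
    (hdf : ∀ α ∈ Ioo (0:ℝ) c, ∀ θ : ℝ, HasDerivAt (fun a => f a θ) (f' α θ) α)
    (hcf : ContinuousOn (fun q : ℝ×ℝ => f q.1 q.2) (Ioo (0:ℝ) c ×ˢ univ))
    (hcf' : ContinuousOn (fun q : ℝ×ℝ => f' q.1 q.2) (Ioo (0:ℝ) c ×ˢ univ)) :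
    HasDerivAt (fun α => ∫ θ in (0:ℝ)..(π/2), f α θ) (∫ θ in (0:ℝ)..(π/2), f' α₀ θ) α₀ := by
  obtain ⟨h0, hcc⟩ := hα
  have hIcc : Icc (α₀/2) ((α₀+c)/2) ⊆ Ioo (0:ℝ) c := by
    intro x hx
    exact ⟨by linarith [hx.1], by linarith [hx.2]⟩
  have hKS : (Icc (α₀/2) ((α₀+c)/2)) ×ˢ (Icc (0:ℝ) (π/2)) ⊆ Ioo (0:ℝ) c ×ˢ univ := by
    rintro ⟨x, θ⟩ ⟨hx, hθ⟩
    exact ⟨hIcc hx, trivial⟩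
  obtain ⟨C, hC⟩ := (isCompact_Icc.prod isCompact_Icc).exists_bound_of_continuousOn
    (hcf'.mono hKS)
  have hεpos : (0:ℝ) < min (α₀/2) ((c-α₀)/2) := by
    apply lt_min <;> linarith
  have hball : Metric.ball α₀ (min (α₀/2) ((c-α₀)/2)) ⊆ Icc (α₀/2) ((α₀+c)/2) := by
    intro x hx
    rw [Metric.mem_ball, Real.dist_eq, abs_lt] at hx
    constructor
    · have := hx.1; have := min_le_left (α₀/2) ((c-α₀)/2); linarith
    · have := hx.2; have := min_le_right (α₀/2) ((c-α₀)/2); linarith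
  have hcont_slice : ∀ x ∈ Ioo (0:ℝ) c, Continuous (fun θ => f x θ) := by
    intro x hx
    exact hcf.comp_continuous (continuous_const.prodMk continuous_id)
      (fun θ => ⟨hx, trivial⟩)
  have hcont_slice' : ∀ x ∈ Ioo (0:ℝ) c, Continuous (fun θ => f' x θ) := by
    intro x hx
    exact hcf'.comp_continuous (continuous_const.prodMk continuous_id)
      (fun θ => ⟨hx, trivial⟩)
  refine (intervalIntegral.hasDerivAt_integral_of_dominated_loc_of_deriv_le (bound := fun _ => C) (Metric.ball_mem_nhds α₀ hεpos)
    ?_ ?_ ?_ ?_ ?_ ?_).2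
  · filter_upwards [Metric.ball_mem_nhds α₀ hεpos] with x hx
    exact ((hcont_slice x (hIcc (hball hx)))).aestronglyMeasurable.restrict
  · exact (hcont_slice α₀ ⟨h0, hcc⟩).intervalIntegrable _ _
  · exact ((hcont_slice' α₀ ⟨h0, hcc⟩)).aestronglyMeasurable.restrict
  · refine Filter.Eventually.of_forall (fun θ hθ x hx => ?_)
    have hθ' : θ ∈ Icc (0:ℝ) (π/2) := by
      rw [uIoc_of_le pi2_nonneg] at hθ
      exact ⟨hθ.1.le, hθ.2⟩
    exact hC (x, θ) ⟨hball hx, hθ'⟩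
  · exact intervalIntegrable_const
  · refine Filter.Eventually.of_forall (fun θ _ x hx => ?_)
    exact hdf x (hIcc (hball hx)) θ

end param

noncomputable def Rb (c x α θ : ℝ) : ℝ :=
  α*(x + (c^2-α^2)/2 - ss c α θ)*(Real.sin θ*Real.cos θ)/sr c α θ
noncomputable def Rg (c x α θ : ℝ) : ℝ :=
  α*(x + (c^2-α^2)/2 - α^2*Real.sin θ^2)*(Real.sin θ*Real.cos θ)/tr c α θ

section ftc
variable {c α : ℝ} (hα0 : 0 < α) (hαc : α < c)

lemma hasDerivAt_ss_theta (θ : ℝ) :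
    HasDerivAt (fun θ => ss c α θ) ((c^2-α^2)*(2*Real.sin θ*Real.cos θ)) θ := by
  unfold ss
  have := ((Real.hasDerivAt_sin θ).pow 2).const_mul (c^2-α^2)
  have h2 := this.const_add (α^2)
  refine h2.congr_deriv (Eq.symm ?_)
  ring

lemma hasDerivAt_tt_theta (θ : ℝ) :
    HasDerivAt (fun θ => tt c α θ) (-(α^2*(2*Real.sin θ*Real.cos θ))) θ := by
  unfold tt
  have := ((Real.hasDerivAt_sin θ).pow 2).const_mul (α^2)
  have h2 := this.const_sub (c^2)
  refine h2.congr_deriv (Eq.symm ?_)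
  ring

include hα0 hαc

lemma gap_deriv_tr (θ : ℝ) :
    HasDerivAt (fun θ => tr c α θ) (-(α^2*(Real.sin θ*Real.cos θ))/tr c α θ) θ := by
  have h := (Real.hasDerivAt_sqrt (ne_of_gt (tt_pos hα0 hαc θ))).comp θ (hasDerivAt_tt_theta θ)
  have heq : (fun θ => tr c α θ) = Real.sqrt ∘ (fun θ => tt c α θ) := rfl
  rw [heq]
  refine h.congr_deriv (Eq.symm ?_)
  unfold tr
  field_simp

lemma hasDerivAt_Rb (x θ : ℝ) :
    HasDerivAt (fun θ => Rb c x α θ)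
      (x * uA c α θ + vA c α θ
        + α*(x + (c^2-α^2)/2 - α^2) * (sr c α θ)⁻¹) θ := by
  have hsc : HasDerivAt (fun θ => Real.sin θ*Real.cos θ)
      (Real.cos θ*Real.cos θ + Real.sin θ*(-Real.sin θ)) θ :=
    (Real.hasDerivAt_sin θ).mul (Real.hasDerivAt_cos θ)
  have hnum : HasDerivAt
      (fun θ => α*(x + (c^2-α^2)/2 - ss c α θ)*(Real.sin θ*Real.cos θ))
      ((0 - (c^2-α^2)*(2*Real.sin θ*Real.cos θ))*α*(Real.sin θ*Real.cos θ)
        + α*(x + (c^2-α^2)/2 - ss c α θ)*(Real.cos θ*Real.cos θ + Real.sin θ*(-Real.sin θ))) θ := by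
    have h1 : HasDerivAt (fun θ => x + (c^2-α^2)/2 - ss c α θ)
        (0 - (c^2-α^2)*(2*Real.sin θ*Real.cos θ)) θ :=
      (hasDerivAt_const θ _).sub (hasDerivAt_ss_theta θ)
    have h2 := (h1.const_mul α).mul hsc
    refine h2.congr_deriv (Eq.symm ?_)
    ring
  have h := hnum.div (band_deriv hα0 hαc θ) (ne_of_gt (sr_pos hα0 hαc θ))
  have heq : (fun θ => Rb c x α θ) =
      (fun θ => α*(x + (c^2-α^2)/2 - ss c α θ)*(Real.sin θ*Real.cos θ)/sr c α θ) := rfl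
  rw [heq]
  refine h.congr_deriv (Eq.symm ?_)
  have hp := Real.sin_sq_add_cos_sq θ
  have hsq := sr_sq hα0 hαc θ
  have hsq2 : sr c α θ^2 = α^2 + (c^2-α^2)*Real.sin θ^2 := by rw [hsq]; rfl
  have hne : sr c α θ ≠ 0 := ne_of_gt (sr_pos hα0 hαc θ)
  rw [← hsq]
  have hL : x * uA c α θ + vA c α θ + α*(x + (c^2-α^2)/2 - α^2) * (sr c α θ)⁻¹
      = (x*(-(2*α)*Real.sin θ^2*sr c α θ^2 - (c^2-α^2)*Real.sin θ^2*(α*Real.cos θ^2))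
        + ((-α-2*α*Real.cos θ^2)*((c^2-α^2)*Real.sin θ^2)
            + ((c^2-α^2)/2 - sr c α θ^2)*(-(2*α)*Real.sin θ^2))*sr c α θ^2
        - ((c^2-α^2)/2 - sr c α θ^2)*((c^2-α^2)*Real.sin θ^2)*(α*Real.cos θ^2)
        + α*(x + (c^2-α^2)/2 - α^2)*sr c α θ^2) / sr c α θ^3 := by
    unfold uA vA
    rw [← hsq]
    field_simp
    ring
  have hR : (((0 - (c^2-α^2)*(2*Real.sin θ*Real.cos θ))*α*(Real.sin θ*Real.cos θ)
        + α*(x + (c^2-α^2)/2 - sr c α θ^2)*(Real.cos θ*Real.cos θ + Real.sin θ*(-Real.sin θ)))*sr c α θ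
        - α*(x + (c^2-α^2)/2 - sr c α θ^2)*(Real.sin θ*Real.cos θ)
            *((c^2-α^2)*(Real.sin θ*Real.cos θ)/sr c α θ)) / sr c α θ^2
      = (((0 - (c^2-α^2)*(2*Real.sin θ*Real.cos θ))*α*(Real.sin θ*Real.cos θ)
        + α*(x + (c^2-α^2)/2 - sr c α θ^2)*(Real.cos θ*Real.cos θ + Real.sin θ*(-Real.sin θ)))*sr c α θ^2
        - α*(x + (c^2-α^2)/2 - sr c α θ^2)*(Real.sin θ*Real.cos θ)
            *((c^2-α^2)*(Real.sin θ*Real.cos θ))) / sr c α θ^3 := by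
    field_simp
  rw [hL, hR]
  congr 1
  linear_combination (-(α*sr c α θ^2)*(x+(c^2-α^2)/2-sr c α θ^2))*hp + (α*sr c α θ^2)*hsq2

lemma hasDerivAt_Rg (x θ : ℝ) :
    HasDerivAt (fun θ => Rg c x α θ)
      (x * pA c α θ + wA c α θ
        - α*(x + (c^2-α^2)/2 - α^2) * (tr c α θ)⁻¹) θ := by
  have hsc : HasDerivAt (fun θ => Real.sin θ*Real.cos θ)
      (Real.cos θ*Real.cos θ + Real.sin θ*(-Real.sin θ)) θ :=
    (Real.hasDerivAt_sin θ).mul (Real.hasDerivAt_cos θ)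
  have hnum : HasDerivAt
      (fun θ => α*(x + (c^2-α^2)/2 - α^2*Real.sin θ^2)*(Real.sin θ*Real.cos θ))
      ((0 - α^2*(2*Real.sin θ*Real.cos θ))*α*(Real.sin θ*Real.cos θ)
        + α*(x + (c^2-α^2)/2 - α^2*Real.sin θ^2)*(Real.cos θ*Real.cos θ + Real.sin θ*(-Real.sin θ))) θ := by
    have h1 : HasDerivAt (fun θ => x + (c^2-α^2)/2 - α^2*Real.sin θ^2)
        (0 - α^2*(2*Real.sin θ*Real.cos θ)) θ := by
      have h3 := ((Real.hasDerivAt_sin θ).pow 2).const_mul (α^2)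
      have h0 := (hasDerivAt_const θ (x + (c^2-α^2)/2)).sub h3
      refine h0.congr_deriv (Eq.symm ?_)
      ring
    have h2 := (h1.const_mul α).mul hsc
    refine h2.congr_deriv (Eq.symm ?_)
    ring
  have h := hnum.div (gap_deriv_tr hα0 hαc θ) (ne_of_gt (tr_pos hα0 hαc θ))
  have heq : (fun θ => Rg c x α θ) =
      (fun θ => α*(x + (c^2-α^2)/2 - α^2*Real.sin θ^2)*(Real.sin θ*Real.cos θ)/tr c α θ) := rfl
  rw [heq]
  refine h.congr_deriv (Eq.symm ?_)
  have hp := Real.sin_sq_add_cos_sq θ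
  have hne : tr c α θ ≠ 0 := ne_of_gt (tr_pos hα0 hαc θ)
  have hL : x * pA c α θ + wA c α θ - α*(x + (c^2-α^2)/2 - α^2) * (tr c α θ)⁻¹
      = (x*(2*α*Real.cos θ^2*tr c α θ^2 + α^2*Real.cos θ^2*(α*Real.sin θ^2))
        + ((-α-2*α*Real.sin θ^2)*(α^2*Real.cos θ^2)
            + ((c^2-α^2)/2 - α^2*Real.sin θ^2)*(2*α*Real.cos θ^2))*tr c α θ^2
        + ((c^2-α^2)/2 - α^2*Real.sin θ^2)*(α^2*Real.cos θ^2)*(α*Real.sin θ^2)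
        - α*(x + (c^2-α^2)/2 - α^2)*tr c α θ^2) / tr c α θ^3 := by
    unfold pA wA
    field_simp
    ring
  have hR : (((0 - α^2*(2*Real.sin θ*Real.cos θ))*α*(Real.sin θ*Real.cos θ)
        + α*(x + (c^2-α^2)/2 - α^2*Real.sin θ^2)*(Real.cos θ*Real.cos θ + Real.sin θ*(-Real.sin θ)))*tr c α θ
        - α*(x + (c^2-α^2)/2 - α^2*Real.sin θ^2)*(Real.sin θ*Real.cos θ)
            *(-(α^2*(Real.sin θ*Real.cos θ))/tr c α θ)) / tr c α θ^2
      = (((0 - α^2*(2*Real.sin θ*Real.cos θ))*α*(Real.sin θ*Real.cos θ)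
        + α*(x + (c^2-α^2)/2 - α^2*Real.sin θ^2)*(Real.cos θ*Real.cos θ + Real.sin θ*(-Real.sin θ)))*tr c α θ^2
        - α*(x + (c^2-α^2)/2 - α^2*Real.sin θ^2)*(Real.sin θ*Real.cos θ)
            *(-(α^2*(Real.sin θ*Real.cos θ)))) / tr c α θ^3 := by
    field_simp
  rw [hL, hR]
  congr 1
  linear_combination (α*tr c α θ^2*(x+(c^2-α^2)/2-α^2*Real.sin θ^2-α^2))*hp

lemma ftc_band (x : ℝ) :
    ∫ θ in (0:ℝ)..(π/2), (x * uA c α θ + vA c α θ)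
      = -(α*(x + (c^2-α^2)/2 - α^2)) * ∫ θ in (0:ℝ)..(π/2), (sr c α θ)⁻¹ := by
  have hmem : ∀ θ : ℝ, ((α, θ) : ℝ×ℝ) ∈ (Ioo (0:ℝ) c ×ˢ (univ : Set ℝ)) :=
    fun θ => ⟨⟨hα0, hαc⟩, trivial⟩
  have cu : Continuous (fun θ => uA c α θ) :=
    cont2_uA.comp_continuous (continuous_const.prodMk continuous_id) hmem
  have cv : Continuous (fun θ => vA c α θ) :=
    cont2_vA.comp_continuous (continuous_const.prodMk continuous_id) hmem
  have csr : Continuous (fun θ => (sr c α θ)⁻¹) :=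
    (cont2_sr.comp (continuous_const.prodMk continuous_id)).inv₀
      (fun θ => ne_of_gt (sr_pos hα0 hαc θ))
  have hderiv : ∀ θ ∈ uIcc (0:ℝ) (π/2), HasDerivAt (fun θ => Rb c x α θ)
      (x * uA c α θ + vA c α θ + α*(x + (c^2-α^2)/2 - α^2) * (sr c α θ)⁻¹) θ :=
    fun θ _ => hasDerivAt_Rb hα0 hαc x θ
  have hint : IntervalIntegrable
      (fun θ => x * uA c α θ + vA c α θ + α*(x + (c^2-α^2)/2 - α^2) * (sr c α θ)⁻¹)
      volume 0 (π/2) :=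
    (((continuous_const.mul cu).add cv).add (continuous_const.mul csr)).intervalIntegrable _ _
  have h0 := intervalIntegral.integral_eq_sub_of_hasDerivAt hderiv hint
  have hR0 : Rb c x α 0 = 0 := by simp [Rb]
  have hRpi : Rb c x α (π/2) = 0 := by simp [Rb, Real.cos_pi_div_two]
  rw [hR0, hRpi] at h0
  rw [intervalIntegral.integral_add (((continuous_const.fun_mul cu).fun_add cv).intervalIntegrable _ _)
    ((continuous_const.fun_mul csr).intervalIntegrable _ _), intervalIntegral.integral_const_mul] at h0
  linarith [h0]

lemma ftc_gap (x : ℝ) :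
    ∫ θ in (0:ℝ)..(π/2), (x * pA c α θ + wA c α θ)
      = (α*(x + (c^2-α^2)/2 - α^2)) * ∫ θ in (0:ℝ)..(π/2), (tr c α θ)⁻¹ := by
  have hmem : ∀ θ : ℝ, ((α, θ) : ℝ×ℝ) ∈ (Ioo (0:ℝ) c ×ˢ (univ : Set ℝ)) :=
    fun θ => ⟨⟨hα0, hαc⟩, trivial⟩
  have cu : Continuous (fun θ => pA c α θ) :=
    cont2_pA.comp_continuous (continuous_const.prodMk continuous_id) hmem
  have cv : Continuous (fun θ => wA c α θ) :=
    cont2_wA.comp_continuous (continuous_const.prodMk continuous_id) hmem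
  have ctr : Continuous (fun θ => (tr c α θ)⁻¹) :=
    (cont2_tr.comp (continuous_const.prodMk continuous_id)).inv₀
      (fun θ => ne_of_gt (tr_pos hα0 hαc θ))
  have hderiv : ∀ θ ∈ uIcc (0:ℝ) (π/2), HasDerivAt (fun θ => Rg c x α θ)
      (x * pA c α θ + wA c α θ - α*(x + (c^2-α^2)/2 - α^2) * (tr c α θ)⁻¹) θ :=
    fun θ _ => hasDerivAt_Rg hα0 hαc x θ
  have hint : IntervalIntegrable
      (fun θ => x * pA c α θ + wA c α θ - α*(x + (c^2-α^2)/2 - α^2) * (tr c α θ)⁻¹)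
      volume 0 (π/2) :=
    (((continuous_const.mul cu).add cv).sub (continuous_const.mul ctr)).intervalIntegrable _ _
  have h0 := intervalIntegral.integral_eq_sub_of_hasDerivAt hderiv hint
  have hR0 : Rg c x α 0 = 0 := by simp [Rg]
  have hRpi : Rg c x α (π/2) = 0 := by simp [Rg, Real.cos_pi_div_two]
  rw [hR0, hRpi] at h0
  rw [intervalIntegral.integral_sub (((continuous_const.fun_mul cu).fun_add cv).intervalIntegrable _ _)
    ((continuous_const.fun_mul ctr).intervalIntegrable _ _), intervalIntegral.integral_const_mul] at h0
  linarith [h0]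

end ftc

section final
variable {c : ℝ}

lemma sliceCont {α : ℝ} {F : ℝ×ℝ → ℝ} (hF : ContinuousOn F (Ioo (0:ℝ) c ×ˢ univ))
    (hα : α ∈ Ioo (0:ℝ) c) : Continuous (fun θ => F (α, θ)) :=
  hF.comp_continuous (continuous_const.prodMk continuous_id) (fun θ => ⟨hα, trivial⟩)

lemma split_int {f g : ℝ → ℝ} (hf : Continuous f) (hg : Continuous g) (x : ℝ) :
    ∫ θ in (0:ℝ)..(π/2), (x * f θ + g θ)
      = x * (∫ θ in (0:ℝ)..(π/2), f θ) + ∫ θ in (0:ℝ)..(π/2), g θ := by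
  rw [intervalIntegral.integral_add ((continuous_const.fun_mul hf).intervalIntegrable _ _)
    (hg.intervalIntegrable _ _), intervalIntegral.integral_const_mul]

variable {α : ℝ} (hα0 : 0 < α) (hαc : α < c)
include hα0 hαc

lemma cont_uu' : Continuous (fun θ => uu c α θ) := sliceCont cont2_uu ⟨hα0, hαc⟩
lemma cont_vv' : Continuous (fun θ => vv c α θ) := sliceCont cont2_vv ⟨hα0, hαc⟩
lemma cont_pp' : Continuous (fun θ => pp c α θ) := sliceCont cont2_pp ⟨hα0, hαc⟩
lemma cont_ww' : Continuous (fun θ => ww c α θ) := sliceCont cont2_ww ⟨hα0, hαc⟩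
lemma cont_pA' : Continuous (fun θ => pA c α θ) := sliceCont cont2_pA ⟨hα0, hαc⟩
lemma cont_wA' : Continuous (fun θ => wA c α θ) := sliceCont cont2_wA ⟨hα0, hαc⟩
lemma cont_uA' : Continuous (fun θ => uA c α θ) := sliceCont cont2_uA ⟨hα0, hαc⟩
lemma cont_vA' : Continuous (fun θ => vA c α θ) := sliceCont cont2_vA ⟨hα0, hαc⟩

lemma cont_srinv : Continuous (fun θ => (sr c α θ)⁻¹) :=
  (cont2_sr.comp (continuous_const.prodMk continuous_id)).inv₀
    (fun θ => ne_of_gt (sr_pos hα0 hαc θ))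

lemma cont_trinv : Continuous (fun θ => (tr c α θ)⁻¹) :=
  (cont2_tr.comp (continuous_const.prodMk continuous_id)).inv₀
    (fun θ => ne_of_gt (tr_pos hα0 hαc θ))

lemma cont_tr' : Continuous (fun θ => tr c α θ) :=
  Real.continuous_sqrt.comp (by unfold tt; fun_prop)

lemma cont_sssr : Continuous (fun θ => ss c α θ / sr c α θ) :=
  (by unfold ss; fun_prop : Continuous (fun θ => ss c α θ)).div
    (cont_sr hα0 hαc) (fun θ => ne_of_gt (sr_pos hα0 hαc θ))

lemma cont_m1 : Continuous (fun θ => α^2 * Real.sin θ^2 / tr c α θ) :=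
  (by fun_prop : Continuous (fun θ => α^2 * Real.sin θ^2)).div
    (cont_tr' hα0 hαc) (fun θ => ne_of_gt (tr_pos hα0 hαc θ))

lemma Ig_pos : 0 < ∫ θ in (0:ℝ)..(π/2), (tr c α θ)⁻¹ := by
  apply intervalIntegral.intervalIntegral_pos_of_pos
    ((cont_trinv hα0 hαc).intervalIntegrable _ _)
    (fun θ => inv_pos.2 (tr_pos hα0 hαc θ))
  linarith [pi_pos]

lemma IU_split : ∫ θ in (0:ℝ)..(π/2), uu c α θ
    = (∫ θ in (0:ℝ)..(π/2), ss c α θ / sr c α θ)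
      - α^2 * ∫ θ in (0:ℝ)..(π/2), (sr c α θ)⁻¹ := by
  have hpt : ∀ θ, uu c α θ = ss c α θ / sr c α θ - α^2 * (sr c α θ)⁻¹ := by
    intro θ
    have : α^2 * (sr c α θ)⁻¹ = α^2 / sr c α θ := by rw [div_eq_mul_inv]
    rw [this, div_sub_div_same]
    unfold uu ss
    ring_nf
  rw [intervalIntegral.integral_congr (fun θ _ => hpt θ),
    intervalIntegral.integral_sub ((cont_sssr hα0 hαc).intervalIntegrable _ _)
      ((continuous_const.fun_mul (cont_srinv hα0 hαc)).intervalIntegrable _ _),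
    intervalIntegral.integral_const_mul]

lemma JP_split : ∫ θ in (0:ℝ)..(π/2), pp c α θ
    = α^2 * (∫ θ in (0:ℝ)..(π/2), (tr c α θ)⁻¹)
      - ∫ θ in (0:ℝ)..(π/2), α^2 * Real.sin θ^2 / tr c α θ := by
  have hpt : ∀ θ, pp c α θ = α^2 * (tr c α θ)⁻¹ - α^2 * Real.sin θ^2 / tr c α θ := by
    intro θ
    have h1 : α^2 * (tr c α θ)⁻¹ = α^2 / tr c α θ := by rw [div_eq_mul_inv]
    rw [h1, div_sub_div_same]
    unfold pp
    have hp := Real.sin_sq_add_cos_sq θ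
    have : α^2 * Real.cos θ^2 = α^2 - α^2 * Real.sin θ^2 := by linear_combination α^2 * hp
    rw [this]
  rw [intervalIntegral.integral_congr (fun θ _ => hpt θ),
    intervalIntegral.integral_sub ((continuous_const.fun_mul (cont_trinv hα0 hαc)).intervalIntegrable _ _)
      ((cont_m1 hα0 hαc).intervalIntegrable _ _),
    intervalIntegral.integral_const_mul]

lemma Msq_split (h : ℝ) : ∫ θ in (0:ℝ)..(π/2), (ss c α θ + h) / sr c α θ
    = (∫ θ in (0:ℝ)..(π/2), ss c α θ / sr c α θ)
      + h * ∫ θ in (0:ℝ)..(π/2), (sr c α θ)⁻¹ := by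
  have hpt : ∀ θ, (ss c α θ + h) / sr c α θ = ss c α θ / sr c α θ + h * (sr c α θ)⁻¹ := by
    intro θ
    rw [add_div, div_eq_mul_inv h]
  rw [intervalIntegral.integral_congr (fun θ _ => hpt θ),
    intervalIntegral.integral_add ((cont_sssr hα0 hαc).intervalIntegrable _ _)
      ((continuous_const.fun_mul (cont_srinv hα0 hαc)).intervalIntegrable _ _),
    intervalIntegral.integral_const_mul]

end final

end PhaseDF

open PhaseDF in
/-- identity (2.16)(a) of Lemma 2.3 in concrete form: the phase `B(ξ)` is
differentiable with `B′(ξ) = 24·∫_{a(ξ)}^{c} (s² + h(ξ))·((c² − s²)(s² − a(ξ)²))^{-1/2} ds`. -/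
theorem phase_derivative_formula (c : ℝ) (hc : 0 < c) (a : ℝ → ℝ)
    (hrange : ∀ ξ ∈ Set.Ioo (-c ^ 2 / 2) (c ^ 2 / 3), 0 < a ξ ∧ a ξ < c)
    (hdiff : ∀ ξ ∈ Set.Ioo (-c ^ 2 / 2) (c ^ 2 / 3), DifferentiableAt ℝ a ξ)
    (hnorm : ∀ ξ ∈ Set.Ioo (-c ^ 2 / 2) (c ^ 2 / 3),
      ∫ s in (0:ℝ)..(a ξ),
        (ξ + (c ^ 2 - (a ξ) ^ 2) / 2 - s ^ 2) *
          Real.sqrt (((a ξ) ^ 2 - s ^ 2) / (c ^ 2 - s ^ 2)) = 0) :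
    ∀ ξ ∈ Set.Ioo (-c ^ 2 / 2) (c ^ 2 / 3),
      HasDerivAt
        (fun t => 24 * ∫ s in (a t)..c,
          (t + (c ^ 2 - (a t) ^ 2) / 2 - s ^ 2) *
            Real.sqrt ((s ^ 2 - (a t) ^ 2) / (c ^ 2 - s ^ 2)))
        (24 * ∫ s in (a ξ)..c,
          (s ^ 2 +
            (-(∫ s in (0:ℝ)..(a ξ), s ^ 2 * (Real.sqrt ((c ^ 2 - s ^ 2) * ((a ξ) ^ 2 - s ^ 2)))⁻¹) /
              (∫ s in (0:ℝ)..(a ξ), (Real.sqrt ((c ^ 2 - s ^ 2) * ((a ξ) ^ 2 - s ^ 2)))⁻¹))) *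
            (Real.sqrt ((c ^ 2 - s ^ 2) * (s ^ 2 - (a ξ) ^ 2)))⁻¹) ξ := by
  intro ξ hξ
  obtain ⟨ha0, hac⟩ := hrange ξ hξ
  have hαIoo : a ξ ∈ Set.Ioo (0:ℝ) c := ⟨ha0, hac⟩
  have ha : HasDerivAt a (deriv a ξ) ξ := (hdiff ξ hξ).hasDerivAt
  -- parametric derivatives at `a ξ`
  have hIU := param_hasDerivAt (fun α θ => uu c α θ) (fun α θ => uA c α θ) hαIoo
    (fun β hβ θ => hasDerivAt_uu hβ.1 hβ.2 θ) cont2_uu cont2_uA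
  have hIV := param_hasDerivAt (fun α θ => vv c α θ) (fun α θ => vA c α θ) hαIoo
    (fun β hβ θ => hasDerivAt_vv hβ.1 hβ.2 θ) cont2_vv cont2_vA
  have hJP := param_hasDerivAt (fun α θ => pp c α θ) (fun α θ => pA c α θ) hαIoo
    (fun β hβ θ => hasDerivAt_pp hβ.1 hβ.2 θ) cont2_pp cont2_pA
  have hJW := param_hasDerivAt (fun α θ => ww c α θ) (fun α θ => wA c α θ) hαIoo
    (fun β hβ θ => hasDerivAt_ww hβ.1 hβ.2 θ) cont2_ww cont2_wA
  -- composites through a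
  have hIUa : HasDerivAt (fun t => ∫ θ in (0:ℝ)..(π/2), uu c (a t) θ)
      ((∫ θ in (0:ℝ)..(π/2), uA c (a ξ) θ) * deriv a ξ) ξ := by
    have := hIU.comp ξ ha; exact this
  have hIVa : HasDerivAt (fun t => ∫ θ in (0:ℝ)..(π/2), vv c (a t) θ)
      ((∫ θ in (0:ℝ)..(π/2), vA c (a ξ) θ) * deriv a ξ) ξ := by
    have := hIV.comp ξ ha; exact this
  have hJPa : HasDerivAt (fun t => ∫ θ in (0:ℝ)..(π/2), pp c (a t) θ)
      ((∫ θ in (0:ℝ)..(π/2), pA c (a ξ) θ) * deriv a ξ) ξ := by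
    have := hJP.comp ξ ha; exact this
  have hJWa : HasDerivAt (fun t => ∫ θ in (0:ℝ)..(π/2), ww c (a t) θ)
      ((∫ θ in (0:ℝ)..(π/2), wA c (a ξ) θ) * deriv a ξ) ξ := by
    have := hJW.comp ξ ha; exact this
  -- derivative of the θ-form of B/24
  have hG : HasDerivAt (fun t => t * (∫ θ in (0:ℝ)..(π/2), uu c (a t) θ)
        + (∫ θ in (0:ℝ)..(π/2), vv c (a t) θ))
      (1 * (∫ θ in (0:ℝ)..(π/2), uu c (a ξ) θ)
        + ξ * ((∫ θ in (0:ℝ)..(π/2), uA c (a ξ) θ) * deriv a ξ)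
        + (∫ θ in (0:ℝ)..(π/2), vA c (a ξ) θ) * deriv a ξ) ξ :=
    ((hasDerivAt_id ξ).mul hIUa).add hIVa
  -- B equals its θ-form near ξ
  have hBev : (fun t => 24 * ∫ s in (a t)..c,
        (t + (c ^ 2 - (a t) ^ 2) / 2 - s ^ 2) *
          Real.sqrt ((s ^ 2 - (a t) ^ 2) / (c ^ 2 - s ^ 2)))
      =ᶠ[nhds ξ] (fun t => 24 * (t * (∫ θ in (0:ℝ)..(π/2), uu c (a t) θ)
        + (∫ θ in (0:ℝ)..(π/2), vv c (a t) θ))) := by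
    filter_upwards [isOpen_Ioo.mem_nhds hξ] with t ht
    obtain ⟨h1, h2⟩ := hrange t ht
    rw [conv_band1 h1 h2 t, split_int (cont_uu' h1 h2) (cont_vv' h1 h2) t]
  have hB : HasDerivAt (fun t => 24 * ∫ s in (a t)..c,
        (t + (c ^ 2 - (a t) ^ 2) / 2 - s ^ 2) *
          Real.sqrt ((s ^ 2 - (a t) ^ 2) / (c ^ 2 - s ^ 2)))
      (24 * (1 * (∫ θ in (0:ℝ)..(π/2), uu c (a ξ) θ)
        + ξ * ((∫ θ in (0:ℝ)..(π/2), uA c (a ξ) θ) * deriv a ξ)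
        + (∫ θ in (0:ℝ)..(π/2), vA c (a ξ) θ) * deriv a ξ)) ξ :=
    (hG.const_mul 24).congr_of_eventuallyEq hBev
  -- the normalization in θ-form and its derivative
  have hNev : (fun t => t * (∫ θ in (0:ℝ)..(π/2), pp c (a t) θ)
        + (∫ θ in (0:ℝ)..(π/2), ww c (a t) θ)) =ᶠ[nhds ξ] (fun _ => (0:ℝ)) := by
    filter_upwards [isOpen_Ioo.mem_nhds hξ] with t ht
    obtain ⟨h1, h2⟩ := hrange t ht
    have h3 := hnorm t ht
    rwa [conv_gap1 h1 h2 t, split_int (cont_pp' h1 h2) (cont_ww' h1 h2) t] at h3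
  have hNd0 : HasDerivAt (fun t => t * (∫ θ in (0:ℝ)..(π/2), pp c (a t) θ)
        + (∫ θ in (0:ℝ)..(π/2), ww c (a t) θ)) 0 ξ :=
    (hasDerivAt_const ξ (0:ℝ)).congr_of_eventuallyEq hNev
  have hNd : HasDerivAt (fun t => t * (∫ θ in (0:ℝ)..(π/2), pp c (a t) θ)
        + (∫ θ in (0:ℝ)..(π/2), ww c (a t) θ))
      (1 * (∫ θ in (0:ℝ)..(π/2), pp c (a ξ) θ)
        + ξ * ((∫ θ in (0:ℝ)..(π/2), pA c (a ξ) θ) * deriv a ξ)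
        + (∫ θ in (0:ℝ)..(π/2), wA c (a ξ) θ) * deriv a ξ) ξ :=
    ((hasDerivAt_id ξ).mul hJPa).add hJWa
  have hrel : 1 * (∫ θ in (0:ℝ)..(π/2), pp c (a ξ) θ)
        + ξ * ((∫ θ in (0:ℝ)..(π/2), pA c (a ξ) θ) * deriv a ξ)
        + (∫ θ in (0:ℝ)..(π/2), wA c (a ξ) θ) * deriv a ξ = 0 := hNd.unique hNd0
  -- FTC relations
  have hband : ξ * (∫ θ in (0:ℝ)..(π/2), uA c (a ξ) θ) + (∫ θ in (0:ℝ)..(π/2), vA c (a ξ) θ)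
      = -((a ξ)*(ξ + (c^2-(a ξ)^2)/2 - (a ξ)^2)) * ∫ θ in (0:ℝ)..(π/2), (sr c (a ξ) θ)⁻¹ := by
    have h := ftc_band ha0 hac ξ
    rwa [split_int (cont_uA' ha0 hac) (cont_vA' ha0 hac) ξ] at h
  have hgap : ξ * (∫ θ in (0:ℝ)..(π/2), pA c (a ξ) θ) + (∫ θ in (0:ℝ)..(π/2), wA c (a ξ) θ)
      = ((a ξ)*(ξ + (c^2-(a ξ)^2)/2 - (a ξ)^2)) * ∫ θ in (0:ℝ)..(π/2), (tr c (a ξ) θ)⁻¹ := by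
    have h := ftc_gap ha0 hac ξ
    rwa [split_int (cont_pA' ha0 hac) (cont_wA' ha0 hac) ξ] at h
  have hIg := Ig_pos ha0 hac
  have hIgne : (∫ θ in (0:ℝ)..(π/2), (tr c (a ξ) θ)⁻¹) ≠ 0 := ne_of_gt hIg
  have hIUs := IU_split ha0 hac
  have hJPs := JP_split ha0 hac
  -- identify the target value
  have hEq : 24 * (1 * (∫ θ in (0:ℝ)..(π/2), uu c (a ξ) θ)
        + ξ * ((∫ θ in (0:ℝ)..(π/2), uA c (a ξ) θ) * deriv a ξ)
        + (∫ θ in (0:ℝ)..(π/2), vA c (a ξ) θ) * deriv a ξ)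
      = (24 * ∫ s in (a ξ)..c,
          (s ^ 2 +
            (-(∫ s in (0:ℝ)..(a ξ), s ^ 2 * (Real.sqrt ((c ^ 2 - s ^ 2) * ((a ξ) ^ 2 - s ^ 2)))⁻¹) /
              (∫ s in (0:ℝ)..(a ξ), (Real.sqrt ((c ^ 2 - s ^ 2) * ((a ξ) ^ 2 - s ^ 2)))⁻¹))) *
            (Real.sqrt ((c ^ 2 - s ^ 2) * (s ^ 2 - (a ξ) ^ 2)))⁻¹) := by
    rw [conv_gap2 ha0 hac, conv_gap3 ha0 hac, conv_band2 ha0 hac, Msq_split ha0 hac]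
    -- now a scalar identity
    have hstar : (deriv a ξ) * ((a ξ)*(ξ + (c^2-(a ξ)^2)/2 - (a ξ)^2))
          * (∫ θ in (0:ℝ)..(π/2), (tr c (a ξ) θ)⁻¹)
        = (∫ θ in (0:ℝ)..(π/2), (a ξ)^2 * Real.sin θ^2 / tr c (a ξ) θ)
          - (a ξ)^2 * (∫ θ in (0:ℝ)..(π/2), (tr c (a ξ) θ)⁻¹) := by
      linear_combination -(deriv a ξ) * hgap + hrel - hJPs
    have h2 : (-(∫ θ in (0:ℝ)..(π/2), (a ξ)^2 * Real.sin θ^2 / tr c (a ξ) θ)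
          / (∫ θ in (0:ℝ)..(π/2), (tr c (a ξ) θ)⁻¹))
        = -((deriv a ξ) * ((a ξ)*(ξ + (c^2-(a ξ)^2)/2 - (a ξ)^2))) - (a ξ)^2 := by
      rw [div_eq_iff hIgne]
      linear_combination hstar
    rw [h2]
    linear_combination 24 * hIUs + (24 * deriv a ξ) * hband
  rw [← hEq]
  exact hB
end

section
/- Let 0 < a < c and set m = a/c. Define h = −(∫₀^{a} s²·((c² − s²)(a² − s²))^{−1/2} ds)/(∫₀^{a} ((c² − s²)(a² − s²))^{−1/2} ds). Then h = c²·(E(m)/K(m) − 1), i.e. −h·K(m) = c²·(K(m) − E(m)), where K(m) = ∫₀¹ ((1 − t²)(1 − m²t²))^{−1/2} dt and E(m) = ∫₀¹ √((1 − m²t²)/(1 − t²)) dt are the complete elliptic integrals of the first and second kind. -/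
open MeasureTheory Real intervalIntegral

private lemma rpow_base_II : IntervalIntegrable (fun t : ℝ => (1 - t) ^ (-(1/2) : ℝ)) volume 0 1 := by
  have h := (intervalIntegrable_rpow' (a := 0) (b := 1) (r := -(1/2)) (by norm_num)).comp_sub_left 1
  simpa using h.symm

private lemma meas_inv_sqrt (m : ℝ) :
    Measurable (fun t : ℝ => (Real.sqrt ((1 - t ^ 2) * (1 - m ^ 2 * t ^ 2)))⁻¹) :=
  (((continuous_const.sub (continuous_pow 2)).mul
    (continuous_const.sub (continuous_const.mul (continuous_pow 2)))).sqrt.measurable).inv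

private lemma meas_sqrt_div (m : ℝ) :
    Measurable (fun t : ℝ => Real.sqrt ((1 - m ^ 2 * t ^ 2) / (1 - t ^ 2))) :=
  Real.continuous_sqrt.measurable.comp
    (((continuous_const.sub (continuous_const.mul (continuous_pow 2))).measurable).div
      ((continuous_const.sub (continuous_pow 2)).measurable))

private lemma key_bound {m t : ℝ} (hm0 : 0 < m) (hm1 : m < 1) (ht0 : 0 < t) (ht1 : t ≤ 1) :
    (Real.sqrt ((1 - t ^ 2) * (1 - m ^ 2 * t ^ 2)))⁻¹
      ≤ (Real.sqrt (1 - m ^ 2))⁻¹ * (1 - t) ^ (-(1/2) : ℝ) := by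
  have h1t : 0 ≤ 1 - t := by linarith
  have hm2 : 0 < 1 - m ^ 2 := by nlinarith
  have hrw : (1 - t) ^ (-(1/2) : ℝ) = (Real.sqrt (1 - t))⁻¹ := by
    rw [Real.rpow_neg h1t, Real.sqrt_eq_rpow]
  rw [hrw, ← mul_inv, ← Real.sqrt_mul hm2.le]
  rcases eq_or_lt_of_le ht1 with rfl | ht1'
  · simp
  · have hQpos : 0 < (1 - m ^ 2) * (1 - t) := by nlinarith
    apply inv_anti₀ (Real.sqrt_pos.mpr hQpos)
    apply Real.sqrt_le_sqrt
    have ht2 : t ^ 2 ≤ 1 := by nlinarith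
    have e1 : 1 - m ^ 2 ≤ 1 - m ^ 2 * t ^ 2 := by nlinarith [sq_nonneg m]
    have e2 : 1 - t ≤ 1 - t ^ 2 := by nlinarith
    nlinarith [mul_le_mul e1 e2 h1t (by linarith : (0:ℝ) ≤ 1 - m ^ 2 * t ^ 2)]

private lemma key_bound3 {m t : ℝ} (hm0 : 0 < m) (hm1 : m < 1) (ht0 : 0 < t) (ht1 : t ≤ 1) :
    Real.sqrt ((1 - m ^ 2 * t ^ 2) / (1 - t ^ 2))
      ≤ (Real.sqrt (1 - m ^ 2))⁻¹ * (1 - t) ^ (-(1/2) : ℝ) := by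
  have h1t : 0 ≤ 1 - t := by linarith
  have hm2 : 0 < 1 - m ^ 2 := by nlinarith
  have hC : (1:ℝ) ≤ (Real.sqrt (1 - m ^ 2))⁻¹ := by
    have h1 : Real.sqrt (1 - m ^ 2) ≤ 1 := by
      nlinarith [Real.sq_sqrt hm2.le, Real.sqrt_nonneg (1 - m ^ 2)]
    calc (1:ℝ) = (1:ℝ)⁻¹ := by norm_num
      _ ≤ (Real.sqrt (1 - m ^ 2))⁻¹ := inv_anti₀ (Real.sqrt_pos.mpr hm2) (by simpa using h1)
  have hrw : (1 - t) ^ (-(1/2) : ℝ) = (Real.sqrt (1 - t))⁻¹ := by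
    rw [Real.rpow_neg h1t, Real.sqrt_eq_rpow]
  rw [hrw]
  rcases eq_or_lt_of_le ht1 with rfl | ht1'
  · simp
  · have hu : 0 < 1 - t ^ 2 := by nlinarith
    have step1 : Real.sqrt ((1 - m ^ 2 * t ^ 2) / (1 - t ^ 2)) ≤ Real.sqrt (1 / (1 - t)) := by
      apply Real.sqrt_le_sqrt
      rw [div_le_div_iff₀ hu (by linarith)]
      nlinarith [sq_nonneg (m * t)]
    have step2 : Real.sqrt (1 / (1 - t)) = (Real.sqrt (1 - t))⁻¹ := by
      rw [one_div, Real.sqrt_inv]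
    calc Real.sqrt ((1 - m ^ 2 * t ^ 2) / (1 - t ^ 2)) ≤ (Real.sqrt (1 - t))⁻¹ := by
          rw [← step2]; exact step1
      _ ≤ (Real.sqrt (1 - m ^ 2))⁻¹ * (Real.sqrt (1 - t))⁻¹ := by
          nlinarith [inv_nonneg.mpr (Real.sqrt_nonneg (1 - t))]

private lemma intK {m : ℝ} (hm0 : 0 < m) (hm1 : m < 1) :
    IntervalIntegrable (fun t : ℝ => (Real.sqrt ((1 - t ^ 2) * (1 - m ^ 2 * t ^ 2)))⁻¹)
      volume 0 1 := by
  apply (rpow_base_II.const_mul ((Real.sqrt (1 - m ^ 2))⁻¹)).mono_fun'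
    ((meas_inv_sqrt m).aestronglyMeasurable)
  rw [Set.uIoc_of_le zero_le_one]
  filter_upwards [ae_restrict_mem measurableSet_Ioc] with t ht
  rw [Real.norm_eq_abs, abs_of_nonneg (by positivity)]
  exact key_bound hm0 hm1 ht.1 ht.2

private lemma intJ {m : ℝ} (hm0 : 0 < m) (hm1 : m < 1) :
    IntervalIntegrable (fun t : ℝ => t ^ 2 * (Real.sqrt ((1 - t ^ 2) * (1 - m ^ 2 * t ^ 2)))⁻¹)
      volume 0 1 := by
  apply (intK hm0 hm1).mono_fun'
    (((measurable_id.pow_const 2).mul (meas_inv_sqrt m)).aestronglyMeasurable)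
  rw [Set.uIoc_of_le zero_le_one]
  filter_upwards [ae_restrict_mem measurableSet_Ioc] with t ht
  simp only [Pi.mul_apply]
  rw [Real.norm_eq_abs, abs_of_nonneg (by positivity)]
  simp only [id]
  have ht2 : t ^ 2 ≤ 1 := by nlinarith [ht.1, ht.2]
  have hf : 0 ≤ (Real.sqrt ((1 - t ^ 2) * (1 - m ^ 2 * t ^ 2)))⁻¹ := by positivity
  nlinarith [mul_nonneg (by linarith : (0:ℝ) ≤ 1 - t ^ 2) hf]

private lemma intE {m : ℝ} (hm0 : 0 < m) (hm1 : m < 1) :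
    IntervalIntegrable (fun t : ℝ => Real.sqrt ((1 - m ^ 2 * t ^ 2) / (1 - t ^ 2)))
      volume 0 1 := by
  apply (rpow_base_II.const_mul ((Real.sqrt (1 - m ^ 2))⁻¹)).mono_fun'
    ((meas_sqrt_div m).aestronglyMeasurable)
  rw [Set.uIoc_of_le zero_le_one]
  filter_upwards [ae_restrict_mem measurableSet_Ioc] with t ht
  rw [Real.norm_eq_abs, abs_of_nonneg (Real.sqrt_nonneg _)]
  exact key_bound3 hm0 hm1 ht.1 ht.2

/-- the splitting `K = E + m² J` -/
private lemma split_eq {m : ℝ} (hm0 : 0 < m) (hm1 : m < 1) :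
    (∫ t in (0:ℝ)..1, (Real.sqrt ((1 - t ^ 2) * (1 - m ^ 2 * t ^ 2)))⁻¹)
      = (∫ t in (0:ℝ)..1, Real.sqrt ((1 - m ^ 2 * t ^ 2) / (1 - t ^ 2)))
        + m ^ 2 * ∫ t in (0:ℝ)..1, t ^ 2 * (Real.sqrt ((1 - t ^ 2) * (1 - m ^ 2 * t ^ 2)))⁻¹ := by
  rw [← intervalIntegral.integral_const_mul, ← integral_add (intE hm0 hm1) ((intJ hm0 hm1).const_mul (m ^ 2))]
  apply integral_congr
  intro t ht
  rw [Set.uIcc_of_le zero_le_one] at ht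
  obtain ⟨ht0, ht1⟩ := ht
  rcases eq_or_lt_of_le ht1 with rfl | ht1'
  · simp
  · have hu : 0 < 1 - t ^ 2 := by nlinarith
    have hv : 0 < 1 - m ^ 2 * t ^ 2 := by nlinarith [sq_nonneg (m * t), sq_nonneg t]
    have hsu : 0 < Real.sqrt (1 - t ^ 2) := Real.sqrt_pos.mpr hu
    have hsv : 0 < Real.sqrt (1 - m ^ 2 * t ^ 2) := Real.sqrt_pos.mpr hv
    have hsu2 : Real.sqrt (1 - t ^ 2) ^ 2 = 1 - t ^ 2 := Real.sq_sqrt hu.le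
    have hsv2 : Real.sqrt (1 - m ^ 2 * t ^ 2) ^ 2 = 1 - m ^ 2 * t ^ 2 := Real.sq_sqrt hv.le
    dsimp only
    rw [Real.sqrt_mul hu.le, Real.sqrt_div hv.le]
    field_simp
    rw [mul_comm (t ^ 2) (m ^ 2), hsv2]; ring

/-- identity (3.3) of Lemma 3.2: `h = c²(E(m)/K(m) − 1)`, i.e.
`−h·K(m) = c²(K(m) − E(m))`, with `m = a/c`. -/
theorem h_elliptic_eval (a c : ℝ) (ha : 0 < a) (hac : a < c) :
    (-(∫ s in (0:ℝ)..a, s ^ 2 * (Real.sqrt ((c ^ 2 - s ^ 2) * (a ^ 2 - s ^ 2)))⁻¹) /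
        (∫ s in (0:ℝ)..a, (Real.sqrt ((c ^ 2 - s ^ 2) * (a ^ 2 - s ^ 2)))⁻¹))
      = c ^ 2 *
        ((∫ t in (0:ℝ)..1, Real.sqrt ((1 - (a / c) ^ 2 * t ^ 2) / (1 - t ^ 2))) /
          (∫ t in (0:ℝ)..1, (Real.sqrt ((1 - t ^ 2) * (1 - (a / c) ^ 2 * t ^ 2)))⁻¹) - 1) ∧
    -(-(∫ s in (0:ℝ)..a, s ^ 2 * (Real.sqrt ((c ^ 2 - s ^ 2) * (a ^ 2 - s ^ 2)))⁻¹) /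
        (∫ s in (0:ℝ)..a, (Real.sqrt ((c ^ 2 - s ^ 2) * (a ^ 2 - s ^ 2)))⁻¹)) *
        (∫ t in (0:ℝ)..1, (Real.sqrt ((1 - t ^ 2) * (1 - (a / c) ^ 2 * t ^ 2)))⁻¹)
      = c ^ 2 *
        ((∫ t in (0:ℝ)..1, (Real.sqrt ((1 - t ^ 2) * (1 - (a / c) ^ 2 * t ^ 2)))⁻¹) -
          (∫ t in (0:ℝ)..1, Real.sqrt ((1 - (a / c) ^ 2 * t ^ 2) / (1 - t ^ 2)))) := by
  have hc : 0 < c := ha.trans hac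
  set m : ℝ := a / c with hm_def
  have hm0 : 0 < m := div_pos ha hc
  have hm1 : m < 1 := (div_lt_one hc).mpr hac
  set K : ℝ := ∫ t in (0:ℝ)..1, (Real.sqrt ((1 - t ^ 2) * (1 - m ^ 2 * t ^ 2)))⁻¹ with hK_def
  set E : ℝ := ∫ t in (0:ℝ)..1, Real.sqrt ((1 - m ^ 2 * t ^ 2) / (1 - t ^ 2)) with hE_def
  set J : ℝ := ∫ t in (0:ℝ)..1, t ^ 2 * (Real.sqrt ((1 - t ^ 2) * (1 - m ^ 2 * t ^ 2)))⁻¹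
    with hJ_def
  set D : ℝ := ∫ s in (0:ℝ)..a, (Real.sqrt ((c ^ 2 - s ^ 2) * (a ^ 2 - s ^ 2)))⁻¹ with hD_def
  set N : ℝ := ∫ s in (0:ℝ)..a, s ^ 2 * (Real.sqrt ((c ^ 2 - s ^ 2) * (a ^ 2 - s ^ 2)))⁻¹
    with hN_def
  have hKpos : 0 < K := by
    rw [hK_def]
    apply intervalIntegral_pos_of_pos_on (intK hm0 hm1) _ zero_lt_one
    intro t ht
    have hu : 0 < 1 - t ^ 2 := by nlinarith [ht.1, ht.2]
    have hv : 0 < 1 - m ^ 2 * t ^ 2 := by nlinarith [sq_nonneg (m * t), ht.1, ht.2]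
    positivity
  have hsplit : K = E + m ^ 2 * J := split_eq hm0 hm1
  have ha2 : a ^ 2 = m ^ 2 * c ^ 2 := by rw [hm_def]; field_simp
  have key1 : ∀ t : ℝ, (Real.sqrt ((c ^ 2 - (t * a) ^ 2) * (a ^ 2 - (t * a) ^ 2)))⁻¹
      = (a * c)⁻¹ * (Real.sqrt ((1 - t ^ 2) * (1 - m ^ 2 * t ^ 2)))⁻¹ := by
    intro t
    have halg : (c ^ 2 - (t * a) ^ 2) * (a ^ 2 - (t * a) ^ 2)
        = (a * c) ^ 2 * ((1 - t ^ 2) * (1 - m ^ 2 * t ^ 2)) := by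
      rw [hm_def]; field_simp
    rw [halg, Real.sqrt_mul (sq_nonneg _), Real.sqrt_sq (by positivity), mul_inv]
  have hD : D = c⁻¹ * K := by
    have h := integral_comp_mul_right
      (fun s => (Real.sqrt ((c ^ 2 - s ^ 2) * (a ^ 2 - s ^ 2)))⁻¹) (a := 0) (b := 1) ha.ne'
    simp only [zero_mul, one_mul, smul_eq_mul] at h
    rw [← hD_def] at h
    have h2 : (∫ t in (0:ℝ)..1, (Real.sqrt ((c ^ 2 - (t * a) ^ 2) * (a ^ 2 - (t * a) ^ 2)))⁻¹)
        = (a * c)⁻¹ * K := by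
      simp_rw [key1]; rw [intervalIntegral.integral_const_mul, ← hK_def]
    rw [h2] at h
    field_simp at h
    rw [eq_comm, inv_mul_eq_div, div_eq_iff hc.ne']
    exact mul_right_cancel₀ ha.ne' (by linear_combination a * h)
  have hN : N = (a ^ 2 / c) * J := by
    have h := integral_comp_mul_right
      (fun s => s ^ 2 * (Real.sqrt ((c ^ 2 - s ^ 2) * (a ^ 2 - s ^ 2)))⁻¹) (a := 0) (b := 1)
      ha.ne'
    simp only [zero_mul, one_mul, smul_eq_mul] at h
    rw [← hN_def] at h
    have h2 : (∫ t in (0:ℝ)..1,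
        (t * a) ^ 2 * (Real.sqrt ((c ^ 2 - (t * a) ^ 2) * (a ^ 2 - (t * a) ^ 2)))⁻¹)
        = (a ^ 2 * (a * c)⁻¹) * J := by
      have e : ∀ t : ℝ,
          (t * a) ^ 2 * (Real.sqrt ((c ^ 2 - (t * a) ^ 2) * (a ^ 2 - (t * a) ^ 2)))⁻¹
          = (a ^ 2 * (a * c)⁻¹) * (t ^ 2 * (Real.sqrt ((1 - t ^ 2) * (1 - m ^ 2 * t ^ 2)))⁻¹) := by
        intro t; rw [key1]; ring
      simp_rw [e]; rw [intervalIntegral.integral_const_mul, ← hJ_def]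
    rw [h2] at h
    field_simp at h
    rw [div_mul_eq_mul_div, eq_comm, div_eq_iff hc.ne']
    exact mul_right_cancel₀ ha.ne' (by linear_combination a * h)
  have hEK : E - K = -(m ^ 2 * J) := by linarith [hsplit]
  constructor
  · rw [hD, hN]
    have lhs_eq : -(a ^ 2 / c * J) / (c⁻¹ * K) = -(a ^ 2 * J) / K := by
      field_simp
    rw [lhs_eq]
    have rhs_eq : c ^ 2 * (E / K - 1) = (c ^ 2 * (E - K)) / K := by
      field_simp
    rw [rhs_eq, hEK, ha2]
    ring
  · rw [hD, hN]
    have l2 : -(-(a ^ 2 / c * J) / (c⁻¹ * K)) = a ^ 2 * J / K := by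
      field_simp
    rw [l2, div_mul_cancel₀ _ hKpos.ne', ha2]
    linear_combination c ^ 2 * hEK
end

section
/- Let c > 0, ξ ∈ ℝ, 0 < a < c, and set m = a/c. Then the normalization condition ∫₀^{a} (ξ + (c² − a²)/2 − s²)·√((a² − s²)/(c² − s²)) ds = 0 holds if and only if 6ξ·(E(m) − (1 − m²)K(m)) = c²·((1 + m²)·(E(m) − (1 − m²)K(m)) − 2m²(1 − m²)·K(m)), where K(m) = ∫₀¹ ((1 − t²)(1 − m²t²))^{−1/2} dt and E(m) = ∫₀¹ √((1 − m²t²)/(1 − t²)) dt. Equivalently (since E(m) − (1 − m²)K(m) > 0 for 0 < m < 1), ξ = (c²/6)·(1 + m² − 2m²(1 − m²)K(m)/(E(m) − (1 − m²)K(m))). In particular, the modulus 𝔪(ξ) of the Gurevich–Pitaevskii formula and the band edge a(ξ) of the Riemann–Hilbert formula are related by 𝔪(ξ)² = a(ξ)²/c². -/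
open MeasureTheory intervalIntegral Set Filter

namespace GPaux

noncomputable def w (m t : ℝ) : ℝ := (Real.sqrt ((1 - t ^ 2) * (1 - m ^ 2 * t ^ 2)))⁻¹

lemma sqrt_one_sub_integrable :
    IntervalIntegrable (fun t : ℝ => (Real.sqrt (1 - t))⁻¹) volume 0 1 := by
  have h1 : IntervalIntegrable (fun x : ℝ => x ^ (-(1/2) : ℝ)) volume 0 1 :=
    intervalIntegrable_rpow' (by norm_num)
  have h2 := (h1.comp_sub_left 1).symm
  simp only [sub_zero, sub_self] at h2
  apply h2.congr_ae
  rw [EventuallyEq, ae_restrict_iff' measurableSet_uIoc]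
  refine Eventually.of_forall fun t ht => ?_
  rw [uIoc_of_le (by norm_num : (0:ℝ) ≤ 1)] at ht
  have h1t : (0:ℝ) ≤ 1 - t := by linarith [ht.2]
  rw [Real.sqrt_eq_rpow, ← Real.rpow_neg h1t]

lemma integrable_mul_w {m : ℝ} (hm0 : 0 ≤ m) (hm1 : m < 1) {g : ℝ → ℝ} (hg : Continuous g) :
    IntervalIntegrable (fun t => g t * w m t) volume 0 1 := by
  obtain ⟨C, hC⟩ : ∃ C, ∀ t ∈ Icc (0:ℝ) 1, ‖g t‖ ≤ C :=
    isCompact_Icc.exists_bound_of_continuousOn hg.continuousOn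
  have hC0 : 0 ≤ C := le_trans (norm_nonneg _) (hC 0 (by norm_num))
  have hm2 : (0:ℝ) < 1 - m ^ 2 := by nlinarith
  have hdom : IntervalIntegrable
      (fun t : ℝ => C * (Real.sqrt (1 - m ^ 2))⁻¹ * (Real.sqrt (1 - t))⁻¹) volume 0 1 :=
    sqrt_one_sub_integrable.const_mul _
  refine hdom.mono_fun ?_ ?_
  · exact (hg.measurable.mul
      ((Real.continuous_sqrt.comp (by continuity)).measurable.inv)).aestronglyMeasurable
  · rw [EventuallyLE, ae_restrict_iff' measurableSet_uIoc]
    refine Eventually.of_forall fun t ht => ?_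
    rw [uIoc_of_le (by norm_num : (0:ℝ) ≤ 1)] at ht
    have ht0 : 0 < t := ht.1
    have ht1 : t ≤ 1 := ht.2
    have h1t : (0:ℝ) ≤ 1 - t := by linarith
    have hwnn : 0 ≤ w m t := by unfold w; positivity
    have key : w m t ≤ (Real.sqrt (1 - m ^ 2))⁻¹ * (Real.sqrt (1 - t))⁻¹ := by
      rcases eq_or_lt_of_le ht1 with h | h
      · subst h; norm_num [w]
      · have hmt1 : m ^ 2 * t ^ 2 ≤ 1 := by nlinarith [sq_nonneg (m * t)]
        have ht2 : t ^ 2 ≤ 1 := by nlinarith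
        have hP : Real.sqrt ((1 - t) * (1 - m ^ 2)) ≤
            Real.sqrt ((1 - t ^ 2) * (1 - m ^ 2 * t ^ 2)) := by
          apply Real.sqrt_le_sqrt
          have e1 : (1:ℝ) - m ^ 2 ≤ (1 + t) * (1 - m ^ 2 * t ^ 2) := by
            nlinarith [mul_nonneg ht0.le (sub_nonneg.2 hmt1),
              mul_nonneg (sq_nonneg m) (sub_nonneg.2 ht2)]
          calc (1 - t) * (1 - m ^ 2) ≤ (1 - t) * ((1 + t) * (1 - m ^ 2 * t ^ 2)) :=
                mul_le_mul_of_nonneg_left e1 h1t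
            _ = (1 - t ^ 2) * (1 - m ^ 2 * t ^ 2) := by ring
        have hPpos : 0 < Real.sqrt ((1 - t) * (1 - m ^ 2)) := by
          apply Real.sqrt_pos.2; nlinarith
        have h2 := inv_anti₀ hPpos hP
        unfold w
        calc (Real.sqrt ((1 - t ^ 2) * (1 - m ^ 2 * t ^ 2)))⁻¹
            ≤ (Real.sqrt ((1 - t) * (1 - m ^ 2)))⁻¹ := h2
          _ = (Real.sqrt (1 - m ^ 2))⁻¹ * (Real.sqrt (1 - t))⁻¹ := by
              rw [Real.sqrt_mul h1t, mul_inv, mul_comm]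
    have rhs_eq : ‖C * (Real.sqrt (1 - m ^ 2))⁻¹ * (Real.sqrt (1 - t))⁻¹‖
        = C * (Real.sqrt (1 - m ^ 2))⁻¹ * (Real.sqrt (1 - t))⁻¹ :=
      Real.norm_of_nonneg (mul_nonneg (mul_nonneg hC0 (inv_nonneg.2 (Real.sqrt_nonneg _)))
        (inv_nonneg.2 (Real.sqrt_nonneg _)))
    show ‖g t * w m t‖ ≤ ‖C * (Real.sqrt (1 - m ^ 2))⁻¹ * (Real.sqrt (1 - t))⁻¹‖
    rw [rhs_eq, norm_mul, Real.norm_of_nonneg hwnn]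
    calc ‖g t‖ * w m t ≤ C * ((Real.sqrt (1 - m ^ 2))⁻¹ * (Real.sqrt (1 - t))⁻¹) :=
          mul_le_mul (hC t ⟨ht0.le, ht1⟩) key hwnn hC0
      _ = C * (Real.sqrt (1 - m ^ 2))⁻¹ * (Real.sqrt (1 - t))⁻¹ := by ring


lemma poly_integral {m : ℝ} (hm0 : 0 ≤ m) (hm1 : m < 1) (p q r : ℝ) :
    ∫ t in (0:ℝ)..1, (p + q * t ^ 2 + r * t ^ 4) * w m t
      = p * (∫ t in (0:ℝ)..1, w m t)
        + q * (∫ t in (0:ℝ)..1, t ^ 2 * w m t)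
        + r * (∫ t in (0:ℝ)..1, t ^ 4 * w m t) := by
  have i0 : IntervalIntegrable (fun t => p * w m t) volume 0 1 :=
    integrable_mul_w hm0 hm1 continuous_const
  have i2 : IntervalIntegrable (fun t => q * t ^ 2 * w m t) volume 0 1 :=
    integrable_mul_w hm0 hm1 (by continuity)
  have i4 : IntervalIntegrable (fun t => r * t ^ 4 * w m t) volume 0 1 :=
    integrable_mul_w hm0 hm1 (by continuity)
  have e : (fun t : ℝ => (p + q * t ^ 2 + r * t ^ 4) * w m t)
      = fun t => (p * w m t + q * t ^ 2 * w m t) + r * t ^ 4 * w m t := by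
    funext t; ring
  rw [show (∫ t in (0:ℝ)..1, (p + q * t ^ 2 + r * t ^ 4) * w m t)
      = ∫ t in (0:ℝ)..1, ((p * w m t + q * t ^ 2 * w m t) + r * t ^ 4 * w m t) from by rw [e],
    intervalIntegral.integral_add (i0.add i2) i4, intervalIntegral.integral_add i0 i2]
  have c0 : (∫ t in (0:ℝ)..1, p * w m t) = p * ∫ t in (0:ℝ)..1, w m t :=
    intervalIntegral.integral_const_mul _ _
  have c2 : (∫ t in (0:ℝ)..1, q * t ^ 2 * w m t) = q * ∫ t in (0:ℝ)..1, t ^ 2 * w m t := by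
    rw [show (fun t : ℝ => q * t ^ 2 * w m t) = fun t => q * (t ^ 2 * w m t) from
      funext fun t => by ring]
    exact intervalIntegral.integral_const_mul _ _
  have c4 : (∫ t in (0:ℝ)..1, r * t ^ 4 * w m t) = r * ∫ t in (0:ℝ)..1, t ^ 4 * w m t := by
    rw [show (fun t : ℝ => r * t ^ 4 * w m t) = fun t => r * (t ^ 4 * w m t) from
      funext fun t => by ring]
    exact intervalIntegral.integral_const_mul _ _
  rw [c0, c2, c4]

lemma ftc_zero {m : ℝ} (hm0 : 0 ≤ m) (hm1 : m < 1) :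
    ∫ t in (0:ℝ)..1, (1 - 2 * (1 + m ^ 2) * t ^ 2 + 3 * m ^ 2 * t ^ 4) * w m t = 0 := by
  set F : ℝ → ℝ := fun t => t * Real.sqrt ((1 - t ^ 2) * (1 - m ^ 2 * t ^ 2)) with hF
  have hcont : ContinuousOn F (Icc 0 1) := by
    apply Continuous.continuousOn
    exact continuous_id.mul (Real.continuous_sqrt.comp (by continuity))
  have hint : IntervalIntegrable
      (fun t => (1 - 2 * (1 + m ^ 2) * t ^ 2 + 3 * m ^ 2 * t ^ 4) * w m t) volume 0 1 :=
    integrable_mul_w hm0 hm1 (by continuity)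
  have hderiv : ∀ x ∈ Ioo (0:ℝ) 1, HasDerivWithinAt F
      ((1 - 2 * (1 + m ^ 2) * x ^ 2 + 3 * m ^ 2 * x ^ 4) * w m x) (Ioi x) x := by
    intro x hx
    have hx2 : x ^ 2 < 1 := by nlinarith [hx.1, hx.2]
    have hmx2 : m ^ 2 * x ^ 2 < 1 := by nlinarith [sq_nonneg (m * x), sq_nonneg m, hx.1, hx.2]
    have hPpos : 0 < (1 - x ^ 2) * (1 - m ^ 2 * x ^ 2) := by nlinarith
    have hs : 0 < Real.sqrt ((1 - x ^ 2) * (1 - m ^ 2 * x ^ 2)) := Real.sqrt_pos.2 hPpos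
    have h1 : HasDerivAt (fun t : ℝ => 1 - t ^ 2) (-(2 * x)) x := by
      simpa using (hasDerivAt_pow 2 x).const_sub 1
    have h2 : HasDerivAt (fun t : ℝ => 1 - m ^ 2 * t ^ 2) (-(m ^ 2 * (2 * x))) x := by
      simpa using ((hasDerivAt_pow 2 x).const_mul (m ^ 2)).const_sub 1
    have hP : HasDerivAt (fun t : ℝ => (1 - t ^ 2) * (1 - m ^ 2 * t ^ 2))
        (-(2 * x) * (1 - m ^ 2 * x ^ 2) + (1 - x ^ 2) * -(m ^ 2 * (2 * x))) x := h1.mul h2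
    have hsq := hP.sqrt hPpos.ne'
    have hFd := (hasDerivAt_id x).mul hsq
    have heq : 1 * Real.sqrt ((1 - x ^ 2) * (1 - m ^ 2 * x ^ 2)) +
          x * ((-(2 * x) * (1 - m ^ 2 * x ^ 2) + (1 - x ^ 2) * -(m ^ 2 * (2 * x))) /
            (2 * Real.sqrt ((1 - x ^ 2) * (1 - m ^ 2 * x ^ 2))))
        = (1 - 2 * (1 + m ^ 2) * x ^ 2 + 3 * m ^ 2 * x ^ 4) * w m x := by
      have hs2 : Real.sqrt ((1 - x ^ 2) * (1 - m ^ 2 * x ^ 2)) ^ 2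
          = (1 - x ^ 2) * (1 - m ^ 2 * x ^ 2) := Real.sq_sqrt hPpos.le
      unfold w
      field_simp
      rw [show (1 - x ^ 2) * (1 - x ^ 2 * m ^ 2) = (1 - x ^ 2) * (1 - m ^ 2 * x ^ 2) by ring, hs2]
      ring
    simp only [id_eq] at hFd
    rw [heq] at hFd
    exact hFd.hasDerivWithinAt
  have key := intervalIntegral.integral_eq_sub_of_hasDeriv_right_of_le
    (by norm_num : (0:ℝ) ≤ 1) hcont hderiv hint
  rw [key]
  norm_num [hF]


lemma E_pointwise {m : ℝ} (hm0 : 0 ≤ m) (hm1 : m < 1) {t : ℝ} (ht : t ∈ Icc (0:ℝ) 1) :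
    Real.sqrt ((1 - m ^ 2 * t ^ 2) / (1 - t ^ 2)) = (1 - m ^ 2 * t ^ 2) * w m t := by
  rcases eq_or_lt_of_le ht.2 with h | h
  · subst h; norm_num [w]
  · have ht2 : t ^ 2 < 1 := by nlinarith [ht.1]
    have hB : 0 < 1 - t ^ 2 := by linarith
    have hA : 0 < 1 - m ^ 2 * t ^ 2 := by nlinarith [sq_nonneg m, sq_nonneg (m * t)]
    have hsA : 0 < Real.sqrt (1 - m ^ 2 * t ^ 2) := Real.sqrt_pos.2 hA
    have hsB : 0 < Real.sqrt (1 - t ^ 2) := Real.sqrt_pos.2 hB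
    have hw : w m t = (Real.sqrt (1 - t ^ 2) * Real.sqrt (1 - m ^ 2 * t ^ 2))⁻¹ := by
      unfold w; rw [Real.sqrt_mul hB.le]
    rw [Real.sqrt_div hA.le, hw]
    rw [div_eq_iff hsB.ne']
    field_simp
    linear_combination Real.mul_self_sqrt hA.le

lemma scaled_pointwise {c a : ℝ} (hc : 0 < c) (ha : 0 < a) (hac : a < c)
    {t : ℝ} (ht : t ∈ Icc (0:ℝ) 1) :
    Real.sqrt ((a ^ 2 - (a * t) ^ 2) / (c ^ 2 - (a * t) ^ 2))
      = (a / c) * ((1 - t ^ 2) * w (a / c) t) := by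
  rcases eq_or_lt_of_le ht.2 with h | h
  · subst h; norm_num [w]
  · have ht2 : t ^ 2 < 1 := by nlinarith [ht.1]
    have hB : 0 < 1 - t ^ 2 := by linarith
    have hA : 0 < 1 - (a / c) ^ 2 * t ^ 2 := by
      have hm1 : a / c < 1 := (div_lt_one hc).2 hac
      have hm0 : 0 ≤ a / c := by positivity
      nlinarith [sq_nonneg (a / c)]
    have hP : 0 < (1 - t ^ 2) * (1 - (a / c) ^ 2 * t ^ 2) := mul_pos hB hA
    have hs : 0 < Real.sqrt ((1 - t ^ 2) * (1 - (a / c) ^ 2 * t ^ 2)) := Real.sqrt_pos.2 hP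
    have hw2 : Real.sqrt ((1 - t ^ 2) * (1 - (a / c) ^ 2 * t ^ 2)) ^ 2
        = (1 - t ^ 2) * (1 - (a / c) ^ 2 * t ^ 2) := Real.sq_sqrt hP.le
    have hrhs : 0 ≤ (a / c) * ((1 - t ^ 2) * w (a / c) t) := by
      unfold w; positivity
    have hsq : (a ^ 2 - (a * t) ^ 2) / (c ^ 2 - (a * t) ^ 2)
        = ((a / c) * ((1 - t ^ 2) * w (a / c) t)) ^ 2 := by
      have h1 : a * t ≤ a := mul_le_of_le_one_right ha.le ht.2
      have h2 : 0 ≤ a * t := mul_nonneg ha.le ht.1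
      have hden : 0 < c ^ 2 - (a * t) ^ 2 := by nlinarith
      unfold w
      rw [show (a / c * ((1 - t ^ 2) *
            (Real.sqrt ((1 - t ^ 2) * (1 - (a / c) ^ 2 * t ^ 2)))⁻¹)) ^ 2
          = (a / c) ^ 2 * ((1 - t ^ 2) ^ 2 *
            ((Real.sqrt ((1 - t ^ 2) * (1 - (a / c) ^ 2 * t ^ 2))) ^ 2)⁻¹) from by ring, hw2]
      rw [show (a / c) ^ 2 * ((1 - t ^ 2) ^ 2 *
            ((1 - t ^ 2) * (1 - (a / c) ^ 2 * t ^ 2))⁻¹)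
          = ((a / c) ^ 2 * (1 - t ^ 2) ^ 2) / ((1 - t ^ 2) * (1 - (a / c) ^ 2 * t ^ 2)) from by
        rw [div_eq_mul_inv]; ring]
      rw [div_eq_div_iff hden.ne' hP.ne']
      field_simp
    rw [hsq, Real.sqrt_sq hrhs]

/-- purely algebraic part -/
lemma main_aux (c ξ a K M₁ M₂ E N : ℝ) (hc : 0 < c) (ha : 0 < a) (hac : a < c)
    (hM1 : E = K - (a / c) ^ 2 * M₁)
    (hM2 : K - 2 * (1 + (a / c) ^ 2) * M₁ + 3 * (a / c) ^ 2 * M₂ = 0)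
    (hN : N = a * ((a / c) * ((ξ + (c ^ 2 - a ^ 2) / 2) * (K - M₁) - a ^ 2 * (M₁ - M₂))))
    (hpos : 0 < K - M₁) :
    0 < E - (1 - (a / c) ^ 2) * K ∧
    (N = 0 ↔ 6 * ξ * (E - (1 - (a / c) ^ 2) * K)
      = c ^ 2 * ((1 + (a / c) ^ 2) * (E - (1 - (a / c) ^ 2) * K)
          - 2 * (a / c) ^ 2 * (1 - (a / c) ^ 2) * K)) ∧
    (N = 0 ↔ ξ = c ^ 2 / 6 * (1 + (a / c) ^ 2
        - 2 * (a / c) ^ 2 * (1 - (a / c) ^ 2) * K / (E - (1 - (a / c) ^ 2) * K))) := by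
  have hcne : c ≠ 0 := hc.ne'
  set m := a / c with hm
  have hm0 : 0 < m := div_pos ha hc
  have hm1 : m < 1 := (div_lt_one hc).2 hac
  have ha' : a = m * c := by rw [hm]; field_simp
  rw [ha'] at hN
  have hD : E - (1 - m ^ 2) * K = m ^ 2 * (K - M₁) := by linear_combination hM1
  have hDpos : 0 < E - (1 - m ^ 2) * K := by rw [hD]; positivity
  have hfactor : N = c / 6 * (6 * ξ * (E - (1 - m ^ 2) * K)
      - c ^ 2 * ((1 + m ^ 2) * (E - (1 - m ^ 2) * K)
          - 2 * m ^ 2 * (1 - m ^ 2) * K)) := by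
    rw [hN, hM1]
    linear_combination (m ^ 2 * c ^ 3 / 3) * hM2
  have h6 : (c / 6 : ℝ) ≠ 0 := by positivity
  have iff1 : N = 0 ↔ 6 * ξ * (E - (1 - m ^ 2) * K)
      = c ^ 2 * ((1 + m ^ 2) * (E - (1 - m ^ 2) * K)
          - 2 * m ^ 2 * (1 - m ^ 2) * K) := by
    rw [hfactor, mul_eq_zero, or_iff_right h6, sub_eq_zero]
  refine ⟨hDpos, iff1, ?_⟩
  rw [iff1]
  have hDne : E - (1 - m ^ 2) * K ≠ 0 := hDpos.ne'
  constructor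
  · intro h
    field_simp
    linear_combination h
  · intro h
    field_simp at h
    linear_combination h


end GPaux

set_option maxHeartbeats 1000000 in
open GPaux in
/-- Lemma 3.1: with `m = a/c`, `K = K(m)`, `E = E(m)`, the normalization
condition holds iff `6ξ(E − (1 − m²)K) = c²((1 + m²)(E − (1 − m²)K) − 2m²(1 − m²)K)`;
equivalently (since `E − (1 − m²)K > 0`),
`ξ = (c²/6)(1 + m² − 2m²(1 − m²)K/(E − (1 − m²)K))`. Thus the Gurevich–Pitaevskii modulus
satisfies `𝔪(ξ)² = a(ξ)²/c²`. -/
theorem GP_modulus_equation (c ξ a : ℝ) (hc : 0 < c) (ha : 0 < a) (hac : a < c) :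
    0 < (∫ t in (0:ℝ)..1, Real.sqrt ((1 - (a / c) ^ 2 * t ^ 2) / (1 - t ^ 2))) -
        (1 - (a / c) ^ 2) *
          (∫ t in (0:ℝ)..1, (Real.sqrt ((1 - t ^ 2) * (1 - (a / c) ^ 2 * t ^ 2)))⁻¹) ∧
    ((∫ s in (0:ℝ)..a,
        (ξ + (c ^ 2 - a ^ 2) / 2 - s ^ 2) * Real.sqrt ((a ^ 2 - s ^ 2) / (c ^ 2 - s ^ 2))) = 0 ↔
      6 * ξ * ((∫ t in (0:ℝ)..1, Real.sqrt ((1 - (a / c) ^ 2 * t ^ 2) / (1 - t ^ 2))) -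
          (1 - (a / c) ^ 2) *
            (∫ t in (0:ℝ)..1, (Real.sqrt ((1 - t ^ 2) * (1 - (a / c) ^ 2 * t ^ 2)))⁻¹))
        = c ^ 2 *
          ((1 + (a / c) ^ 2) *
              ((∫ t in (0:ℝ)..1, Real.sqrt ((1 - (a / c) ^ 2 * t ^ 2) / (1 - t ^ 2))) -
                (1 - (a / c) ^ 2) *
                  (∫ t in (0:ℝ)..1, (Real.sqrt ((1 - t ^ 2) * (1 - (a / c) ^ 2 * t ^ 2)))⁻¹)) -
            2 * (a / c) ^ 2 * (1 - (a / c) ^ 2) *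
              (∫ t in (0:ℝ)..1, (Real.sqrt ((1 - t ^ 2) * (1 - (a / c) ^ 2 * t ^ 2)))⁻¹))) ∧
    ((∫ s in (0:ℝ)..a,
        (ξ + (c ^ 2 - a ^ 2) / 2 - s ^ 2) * Real.sqrt ((a ^ 2 - s ^ 2) / (c ^ 2 - s ^ 2))) = 0 ↔
      ξ = c ^ 2 / 6 *
        (1 + (a / c) ^ 2 -
          2 * (a / c) ^ 2 * (1 - (a / c) ^ 2) *
              (∫ t in (0:ℝ)..1, (Real.sqrt ((1 - t ^ 2) * (1 - (a / c) ^ 2 * t ^ 2)))⁻¹) /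
            ((∫ t in (0:ℝ)..1, Real.sqrt ((1 - (a / c) ^ 2 * t ^ 2) / (1 - t ^ 2))) -
              (1 - (a / c) ^ 2) *
                (∫ t in (0:ℝ)..1, (Real.sqrt ((1 - t ^ 2) * (1 - (a / c) ^ 2 * t ^ 2)))⁻¹)))) := by
  have hm0 : (0:ℝ) ≤ a / c := by positivity
  have hm1 : a / c < 1 := (div_lt_one hc).2 hac
  set Kv := ∫ t in (0:ℝ)..1, (Real.sqrt ((1 - t ^ 2) * (1 - (a / c) ^ 2 * t ^ 2)))⁻¹ with hK
  set Ev := ∫ t in (0:ℝ)..1, Real.sqrt ((1 - (a / c) ^ 2 * t ^ 2) / (1 - t ^ 2)) with hE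
  set Nv := ∫ s in (0:ℝ)..a,
      (ξ + (c ^ 2 - a ^ 2) / 2 - s ^ 2) * Real.sqrt ((a ^ 2 - s ^ 2) / (c ^ 2 - s ^ 2)) with hNv
  have hKw : Kv = ∫ t in (0:ℝ)..1, w (a / c) t := hK
  -- the FTC relation
  have h0 := ftc_zero hm0 hm1
  rw [show (fun t : ℝ => (1 - 2 * (1 + (a / c) ^ 2) * t ^ 2 + 3 * (a / c) ^ 2 * t ^ 4)
        * w (a / c) t)
      = fun t : ℝ => ((1 : ℝ) + (-(2 * (1 + (a / c) ^ 2))) * t ^ 2 + (3 * (a / c) ^ 2) * t ^ 4)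
        * w (a / c) t from funext fun t => by ring] at h0
  rw [poly_integral hm0 hm1] at h0
  have hM2 : Kv - 2 * (1 + (a / c) ^ 2) * (∫ t in (0:ℝ)..1, t ^ 2 * w (a / c) t)
      + 3 * (a / c) ^ 2 * (∫ t in (0:ℝ)..1, t ^ 4 * w (a / c) t) = 0 := by
    rw [hKw]; linear_combination h0
  -- the E relation
  have e1 : Ev = ∫ t in (0:ℝ)..1, (1 - (a / c) ^ 2 * t ^ 2) * w (a / c) t := by
    rw [hE]
    apply intervalIntegral.integral_congr
    intro t ht
    rw [Set.uIcc_of_le (by norm_num : (0:ℝ) ≤ 1)] at ht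
    exact E_pointwise hm0 hm1 ht
  rw [show (fun t : ℝ => (1 - (a / c) ^ 2 * t ^ 2) * w (a / c) t)
      = fun t : ℝ => ((1 : ℝ) + (-((a / c) ^ 2)) * t ^ 2 + 0 * t ^ 4) * w (a / c) t from
    funext fun t => by ring, poly_integral hm0 hm1] at e1
  have hM1 : Ev = Kv - (a / c) ^ 2 * (∫ t in (0:ℝ)..1, t ^ 2 * w (a / c) t) := by
    rw [hKw]; linear_combination e1
  -- positivity
  have p0 : 0 < ∫ t in (0:ℝ)..1, ((1 : ℝ) + (-1) * t ^ 2 + 0 * t ^ 4) * w (a / c) t := by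
    apply intervalIntegral.intervalIntegral_pos_of_pos_on
    · exact integrable_mul_w hm0 hm1 (by continuity)
    · intro x hx
      have hx2 : x ^ 2 < 1 := by nlinarith [hx.1, hx.2]
      have hax : (a / c) ^ 2 * x ^ 2 < 1 := by
        nlinarith [sq_nonneg (a / c), sq_nonneg (a / c * x)]
      have hP : 0 < (1 - x ^ 2) * (1 - (a / c) ^ 2 * x ^ 2) := by nlinarith
      have hw : 0 < w (a / c) x := inv_pos.2 (Real.sqrt_pos.2 hP)
      have h1x : (0:ℝ) < 1 + (-1) * x ^ 2 + 0 * x ^ 4 := by nlinarith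
      exact mul_pos h1x hw
    · norm_num
  rw [poly_integral hm0 hm1] at p0
  have hpos : 0 < Kv - (∫ t in (0:ℝ)..1, t ^ 2 * w (a / c) t) := by
    rw [hKw]; linarith [p0]
  -- the normalization integral
  have s1 : Nv = a * ∫ t in (0:ℝ)..1, (ξ + (c ^ 2 - a ^ 2) / 2 - (a * t) ^ 2)
      * Real.sqrt ((a ^ 2 - (a * t) ^ 2) / (c ^ 2 - (a * t) ^ 2)) := by
    have h := intervalIntegral.smul_integral_comp_mul_left (a := (0:ℝ)) (b := 1)
      (f := fun s => (ξ + (c ^ 2 - a ^ 2) / 2 - s ^ 2)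
        * Real.sqrt ((a ^ 2 - s ^ 2) / (c ^ 2 - s ^ 2))) a
    simp only [smul_eq_mul, mul_zero, mul_one] at h
    rw [hNv, ← h]
  have s2 : (∫ t in (0:ℝ)..1, (ξ + (c ^ 2 - a ^ 2) / 2 - (a * t) ^ 2)
        * Real.sqrt ((a ^ 2 - (a * t) ^ 2) / (c ^ 2 - (a * t) ^ 2)))
      = ∫ t in (0:ℝ)..1, (ξ + (c ^ 2 - a ^ 2) / 2 - (a * t) ^ 2)
        * (a / c * ((1 - t ^ 2) * w (a / c) t)) := by
    apply intervalIntegral.integral_congr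
    intro t ht
    rw [Set.uIcc_of_le (by norm_num : (0:ℝ) ≤ 1)] at ht
    dsimp only
    rw [scaled_pointwise hc ha hac ht]
  have s3 : (fun t : ℝ => (ξ + (c ^ 2 - a ^ 2) / 2 - (a * t) ^ 2)
        * (a / c * ((1 - t ^ 2) * w (a / c) t)))
      = fun t : ℝ => (a / c * (ξ + (c ^ 2 - a ^ 2) / 2)
          + (-(a / c * (ξ + (c ^ 2 - a ^ 2) / 2)) - a / c * a ^ 2) * t ^ 2
          + (a / c * a ^ 2) * t ^ 4) * w (a / c) t :=
    funext fun t => by ring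
  have hN : Nv = a * (a / c * ((ξ + (c ^ 2 - a ^ 2) / 2)
      * (Kv - (∫ t in (0:ℝ)..1, t ^ 2 * w (a / c) t))
      - a ^ 2 * ((∫ t in (0:ℝ)..1, t ^ 2 * w (a / c) t)
        - (∫ t in (0:ℝ)..1, t ^ 4 * w (a / c) t)))) := by
    rw [s1, s2, s3, poly_integral hm0 hm1, hKw]
    ring
  exact main_aux c ξ a Kv (∫ t in (0:ℝ)..1, t ^ 2 * w (a / c) t)
    (∫ t in (0:ℝ)..1, t ^ 4 * w (a / c) t) Ev Nv hc ha hac hM1 hM2 hN hpos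
end
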